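/- arXiv:2308.06168 — 8 statements merged into one kernel-verified Lean document; each statement's English description precedes it below -/
import Mathlib

section
/- Let (Ω, 𝒜, P) be a probability space, X, Y : Ω → ℝ random variables, h : ℝ → ℝ Borel measurable, and φ : [−1,1] → ℝ convex. Then ∫_{ℝ×ℝ} ∫_ℝ φ(F_{Y|h(X)=z₁}(y) − F_{Y|h(X)=z₂}(y)) dP^Y(y) d(P^{h(X)} ⊗ P^{h(X)})(z₁,z₂) ≤ ∫_{ℝ×ℝ} ∫_ℝ φ(F_{Y|X=x₁}(y) − F_{Y|X=x₂}(y)) dP^Y(y) d(P^X ⊗ P^X)(x₁,x₂). -/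
open MeasureTheory ProbabilityTheory Filter Set
open scoped ENNReal Topology

lemma convexOn_Icc_bound {φ : ℝ → ℝ} (hφ : ConvexOn ℝ (Set.Icc (-1 : ℝ) 1) φ) :
    ∃ C : ℝ, 0 ≤ C ∧ ∀ t ∈ Set.Icc (-1 : ℝ) 1, |φ t| ≤ C := by
  set M := max (φ (-1)) (φ 1) with hM
  have hmem1 : (-1 : ℝ) ∈ Set.Icc (-1 : ℝ) 1 := by constructor <;> norm_num
  have hmem2 : (1 : ℝ) ∈ Set.Icc (-1 : ℝ) 1 := by constructor <;> norm_num
  have h1 : ∀ s ∈ Set.Icc (-1 : ℝ) 1, φ s ≤ M := by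
    intro s hs
    obtain ⟨hs1, hs2⟩ := hs
    have ha : (0 : ℝ) ≤ (1 - s) / 2 := by linarith
    have hb : (0 : ℝ) ≤ (1 + s) / 2 := by linarith
    have hab : (1 - s) / 2 + (1 + s) / 2 = 1 := by ring
    have key := hφ.2 hmem1 hmem2 ha hb hab
    have hcomb : ((1 - s) / 2) • (-1 : ℝ) + ((1 + s) / 2) • (1 : ℝ) = s := by
      simp only [smul_eq_mul]; ring
    rw [hcomb] at key
    calc φ s ≤ (1 - s) / 2 * φ (-1) + (1 + s) / 2 * φ 1 := key
      _ ≤ (1 - s) / 2 * M + (1 + s) / 2 * M := by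
          gcongr
          exacts [le_max_left _ _, le_max_right _ _]
      _ = M := by rw [← add_mul, hab, one_mul]
  refine ⟨|M| + |2 * φ 0 - M|, by positivity, fun t ht => ?_⟩
  have hneg : -t ∈ Set.Icc (-1 : ℝ) 1 := by
    obtain ⟨h1', h2'⟩ := ht; constructor <;> linarith
  have h0 : φ 0 ≤ (1 / 2 : ℝ) * φ t + (1 / 2 : ℝ) * φ (-t) := by
    have key := hφ.2 ht hneg (by norm_num : (0:ℝ) ≤ (1/2:ℝ)) (by norm_num : (0:ℝ) ≤ (1/2:ℝ))
      (by norm_num)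
    have hcomb : ((1 : ℝ) / 2) • t + ((1 : ℝ) / 2) • (-t) = 0 := by
      simp only [smul_eq_mul]; ring
    rw [hcomb] at key
    exact key
  have hup : φ t ≤ M := h1 t ht
  have hlow : 2 * φ 0 - M ≤ φ t := by
    have := h1 (-t) hneg
    linarith
  rw [abs_le]
  constructor
  · have := neg_abs_le (2 * φ 0 - M)
    have := abs_nonneg M
    linarith
  · have := le_abs_self M
    have := abs_nonneg (2 * φ 0 - M)
    linarith

/-- A measurable, globally bounded version of a convex function on `Icc (-1) 1`. -/
lemma convexOn_Icc_measurable_version {φ : ℝ → ℝ}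
    (hφ : ConvexOn ℝ (Set.Icc (-1 : ℝ) 1) φ) :
    ∃ ψ : ℝ → ℝ, Measurable ψ ∧ (∀ t ∈ Set.Icc (-1 : ℝ) 1, ψ t = φ t) ∧
      ∃ C : ℝ, 0 ≤ C ∧ ∀ t, |ψ t| ≤ C := by
  classical
  obtain ⟨C, hC0, hC⟩ := convexOn_Icc_bound hφ
  refine ⟨fun t => if t ≤ -1 then φ (-1) else if 1 ≤ t then φ 1 else φ t, ?_, ?_, C, hC0, ?_⟩
  · -- measurability
    apply measurable_of_measurable_on_compl_finite ({-1, 1} : Set ℝ) (by simp)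
    have hcont : ContinuousOn (fun t : ℝ => if t ≤ -1 then φ (-1) else if 1 ≤ t then φ 1 else φ t)
        (({-1, 1} : Set ℝ)ᶜ) := by
      intro t ht
      have ht' : t ≠ -1 ∧ t ≠ 1 := by
        simpa [Set.mem_compl_iff, Set.mem_insert_iff] using ht
      rcases lt_trichotomy t (-1) with h | h | h
      · refine ContinuousWithinAt.congr_of_eventuallyEq
          (continuousWithinAt_const (b := φ (-1))) ?_ (by simp [h.le])
        filter_upwards [eventually_nhdsWithin_of_eventually_nhds
          (eventually_lt_nhds h)] with s hs
        simp [hs.le]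
      · exact absurd h ht'.1
      · rcases lt_trichotomy t 1 with h2 | h2 | h2
        · have hmem : t ∈ Set.Ioo (-1 : ℝ) 1 := ⟨h, h2⟩
          have hcφ : ContinuousOn φ (Set.Ioo (-1 : ℝ) 1) :=
            (hφ.subset Set.Ioo_subset_Icc_self (convex_Ioo _ _)).continuousOn isOpen_Ioo
          have hat : ContinuousAt φ t :=
            hcφ.continuousAt (isOpen_Ioo.mem_nhds hmem)
          refine ContinuousWithinAt.congr_of_eventuallyEq hat.continuousWithinAt ?_
            (by rw [if_neg (by linarith), if_neg (by linarith)])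
          filter_upwards [eventually_nhdsWithin_of_eventually_nhds
            (Ioo_mem_nhds h h2)] with s hs
          rw [if_neg (by linarith [hs.1]), if_neg (by linarith [hs.2])]
        · exact absurd h2 ht'.2
        · refine ContinuousWithinAt.congr_of_eventuallyEq
            (continuousWithinAt_const (b := φ 1)) ?_
            (by rw [if_neg (by linarith), if_pos h2.le])
          filter_upwards [eventually_nhdsWithin_of_eventually_nhds
            (eventually_gt_nhds h2)] with s hs
          rw [if_neg (by linarith), if_pos hs.le]
    exact (continuousOn_iff_continuous_restrict.1 hcont).measurable
  · intro t ht
    obtain ⟨h1', h2'⟩ := ht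
    by_cases h : t ≤ -1
    · have : t = -1 := le_antisymm h h1'
      simp [h, this]
    · by_cases h2 : 1 ≤ t
      · have : t = 1 := le_antisymm h2' h2
        simp [h, h2, this]
      · simp [h, h2]
  · intro t
    by_cases h : t ≤ -1
    · simpa [h] using hC (-1) (by constructor <;> norm_num)
    · by_cases h2 : 1 ≤ t
      · simpa [h, h2] using hC 1 (by constructor <;> norm_num)
      · have : t ∈ Set.Icc (-1 : ℝ) 1 := ⟨by linarith, by linarith⟩
        simpa [h, h2] using hC t this

/-- Jensen's inequality for a convex function on `Icc (-1) 1`, without continuity assumptions. -/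
lemma jensen_Icc {α : Type*} [MeasurableSpace α] (μ : Measure α) [IsProbabilityMeasure μ]
    {φ : ℝ → ℝ} (hφ : ConvexOn ℝ (Set.Icc (-1 : ℝ) 1) φ) {g : α → ℝ}
    (hgm : AEStronglyMeasurable g μ) (hg : ∀ x, g x ∈ Set.Icc (-1 : ℝ) 1)
    (hint : Integrable (fun x => φ (g x)) μ) :
    φ (∫ x, g x ∂μ) ≤ ∫ x, φ (g x) ∂μ := by
  have hgi : Integrable g μ := by
    refine Integrable.mono' (integrable_const 1) hgm (ae_of_all _ fun x => ?_)
    rw [Real.norm_eq_abs, abs_le]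
    exact ⟨(hg x).1, (hg x).2⟩
  set m := ∫ x, g x ∂μ with hm
  have hm1 : m ≤ 1 := by
    calc m ≤ ∫ _, (1 : ℝ) ∂μ := integral_mono hgi (integrable_const 1) fun x => (hg x).2
    _ = 1 := by simp
  have hm0 : -1 ≤ m := by
    calc (-1 : ℝ) = ∫ _, (-1 : ℝ) ∂μ := by simp
    _ ≤ m := integral_mono (integrable_const (-1)) hgi fun x => (hg x).1
  rcases eq_or_lt_of_le hm1 with hme | hmlt1
  · -- m = 1 : g = 1 a.e.
    have h0 : ∫ x, (1 - g x) ∂μ = 0 := by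
      rw [integral_sub (integrable_const 1) hgi]; simp [← hm, hme]
    have hae : (fun x => 1 - g x) =ᵐ[μ] 0 :=
      (integral_eq_zero_iff_of_nonneg (fun x => by simpa using sub_nonneg.mpr (hg x).2)
        ((integrable_const 1).sub hgi)).mp h0
    have : (fun x => φ (g x)) =ᵐ[μ] fun _ => φ 1 := by
      filter_upwards [hae] with x hx
      simp only [Pi.zero_apply, sub_eq_zero] at hx
      rw [← hx]
    rw [integral_congr_ae this, integral_const]
    simp [hme]
  rcases eq_or_lt_of_le hm0 with hme | hmlt0
  · -- m = -1
    have h0 : ∫ x, (g x + 1) ∂μ = 0 := by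
      rw [integral_add hgi (integrable_const 1)]; simp [← hm, ← hme]
    have hae : (fun x => g x + 1) =ᵐ[μ] 0 :=
      (integral_eq_zero_iff_of_nonneg (fun x => by simpa using neg_le_iff_add_nonneg.mp (hg x).1)
        (hgi.add (integrable_const 1))).mp h0
    have : (fun x => φ (g x)) =ᵐ[μ] fun _ => φ (-1) := by
      filter_upwards [hae] with x hx
      simp only [Pi.zero_apply] at hx
      have hgx : g x = -1 := by linarith
      rw [hgx]
    rw [integral_congr_ae this, integral_const]
    simp [← hme]
  -- interior case : -1 < m < 1, supporting line
  have hmIcc : m ∈ Set.Icc (-1 : ℝ) 1 := ⟨hm0, hm1⟩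
  set S := (fun t => (φ m - φ t) / (m - t)) '' Set.Ico (-1 : ℝ) m with hS
  have hne : S.Nonempty := ⟨_, ⟨-1, ⟨le_refl _, hmlt0⟩, rfl⟩⟩
  have hmem1 : (-1 : ℝ) ∈ Set.Icc (-1 : ℝ) 1 := by constructor <;> norm_num
  have hmem2 : (1 : ℝ) ∈ Set.Icc (-1 : ℝ) 1 := by constructor <;> norm_num
  have hbdd : BddAbove S := by
    refine ⟨(φ 1 - φ m) / (1 - m), fun s hs => ?_⟩
    obtain ⟨t, ⟨ht1, ht2⟩, rfl⟩ := hs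
    have := hφ.slope_mono_adjacent ⟨ht1, le_trans ht2.le hm1⟩ hmem2 ht2 hmlt1
    convert this using 2 <;> ring
  set c := sSup S with hc
  have key : ∀ t ∈ Set.Icc (-1 : ℝ) 1, φ m + c * (t - m) ≤ φ t := by
    intro t ht
    rcases lt_trichotomy t m with hlt | heq | hgt
    · have hs : (φ m - φ t) / (m - t) ≤ c :=
        le_csSup hbdd ⟨t, ⟨ht.1, hlt⟩, rfl⟩
      have hpos : 0 < m - t := by linarith
      rw [div_le_iff₀ hpos] at hs
      nlinarith
    · simp [heq]
    · have hs : c ≤ (φ t - φ m) / (t - m) := by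
        refine csSup_le hne ?_
        rintro s ⟨t', ⟨ht1', ht2'⟩, rfl⟩
        have := hφ.slope_mono_adjacent ⟨ht1', by linarith [ht.2]⟩ ht ht2' hgt
        convert this using 2 <;> ring
      have hpos : 0 < t - m := by linarith
      rw [le_div_iff₀ hpos] at hs
      nlinarith
  have hint2 : Integrable (fun x => c * (g x - m)) μ :=
    (hgi.sub (integrable_const m)).const_mul c
  have haff : Integrable (fun x => φ m + c * (g x - m)) μ :=
    (integrable_const (φ m)).add hint2
  calc φ m = ∫ x, (φ m + c * (g x - m)) ∂μ := by
        rw [integral_add (integrable_const (φ m)) hint2, integral_const, integral_const_mul,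
          integral_sub hgi (integrable_const m)]
        simp [← hm]
    _ ≤ ∫ x, φ (g x) ∂μ :=
        integral_mono haff hint fun x => key (g x) (hg x)

lemma abs_integral_le_of_le {α : Type*} [MeasurableSpace α] (μ : Measure α)
    [IsProbabilityMeasure μ] {u : α → ℝ} {C : ℝ} (hb : ∀ x, |u x| ≤ C) :
    |∫ x, u x ∂μ| ≤ C := by
  have := norm_integral_le_of_norm_le_const (f := u) (μ := μ) (C := C)
    (ae_of_all _ fun x => by rw [Real.norm_eq_abs]; exact hb x)
  simpa [Real.norm_eq_abs, measure_univ] using this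

lemma integrable_of_bounded_meas {α : Type*} [MeasurableSpace α] (μ : Measure α)
    [IsFiniteMeasure μ] {u : α → ℝ} (hm : AEStronglyMeasurable u μ) {C : ℝ}
    (hb : ∀ x, |u x| ≤ C) : Integrable u μ :=
  Integrable.mono' (integrable_const C) hm (ae_of_all _ fun x => by simpa using hb x)

lemma measurable_kernel_cdf (κ : Kernel ℝ ℝ) [IsSFiniteKernel κ] :
    Measurable (fun p : ℝ × ℝ => (κ p.1 (Set.Iic p.2)).toReal) := by
  have ht : MeasurableSet {q : (ℝ × ℝ) × ℝ | q.2 ≤ q.1.2} :=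
    measurableSet_le measurable_snd measurable_fst.snd
  have hm := Kernel.measurable_kernel_prodMk_left (κ := κ.comap Prod.fst measurable_fst) ht
  exact hm.ennreal_toReal

/-- For any Borel measurable h, the sensitivity functional of the
conditional distributions of Y given h(X) is at most that of Y given X. -/
theorem stmt11 {Ω : Type*} [MeasurableSpace Ω] (P : Measure Ω) [IsProbabilityMeasure P]
    (X Y : Ω → ℝ) (hX : Measurable X) (hY : Measurable Y)
    (h : ℝ → ℝ) (hh : Measurable h)
    (κ : Kernel ℝ ℝ) [IsMarkovKernel κ]
    (hκ : ∀ A B : Set ℝ, MeasurableSet A → MeasurableSet B →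
      P.map (fun ω => (X ω, Y ω)) (A ×ˢ B) = ∫⁻ x in A, κ x B ∂(P.map X))
    (κh : Kernel ℝ ℝ) [IsMarkovKernel κh]
    (hκh : ∀ A B : Set ℝ, MeasurableSet A → MeasurableSet B →
      P.map (fun ω => (h (X ω), Y ω)) (A ×ˢ B) = ∫⁻ z in A, κh z B ∂(P.map (h ∘ X)))
    (φ : ℝ → ℝ) (hφ : ConvexOn ℝ (Set.Icc (-1 : ℝ) 1) φ) :
    ∫ z : ℝ × ℝ, (∫ y, φ ((κh z.1 (Set.Iic y)).toReal - (κh z.2 (Set.Iic y)).toReal)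
          ∂(P.map Y)) ∂((P.map (h ∘ X)).prod (P.map (h ∘ X))) ≤
      ∫ x : ℝ × ℝ, (∫ y, φ ((κ x.1 (Set.Iic y)).toReal - (κ x.2 (Set.Iic y)).toReal)
          ∂(P.map Y)) ∂((P.map X).prod (P.map X)) := by
  classical
  have hhX : Measurable (h ∘ X) := hh.comp hX
  set μX : Measure ℝ := P.map X with hμX
  set μZ : Measure ℝ := P.map (h ∘ X) with hμZ
  set μY : Measure ℝ := P.map Y with hμY
  haveI : IsProbabilityMeasure μX := Measure.isProbabilityMeasure_map hX.aemeasurable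
  haveI : IsProbabilityMeasure μZ := Measure.isProbabilityMeasure_map hhX.aemeasurable
  haveI : IsProbabilityMeasure μY := Measure.isProbabilityMeasure_map hY.aemeasurable
  -- conditional distribution of X given h ∘ X
  have hpairZX : Measurable (fun ω => (h (X ω), X ω)) := hhX.prodMk hX
  set ρhx : Measure (ℝ × ℝ) := P.map (fun ω => (h (X ω), X ω)) with hρhx
  haveI : IsProbabilityMeasure ρhx := Measure.isProbabilityMeasure_map hpairZX.aemeasurable
  set ν : Kernel ℝ ℝ := ρhx.condKernel with hν
  have hfst : ρhx.fst = μZ := Measure.fst_map_prodMk hX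
  have hdis : μZ ⊗ₘ ν = ρhx := by
    rw [← hfst, hν]
    exact ρhx.disintegrate ρhx.condKernel
  -- marginal of ν over μZ is μX
  have hmarg : ∀ s : Set ℝ, MeasurableSet s → ∫⁻ z, ν z s ∂μZ = μX s := by
    intro s hs
    have h1 : (μZ ⊗ₘ ν) (Set.univ ×ˢ s) = ∫⁻ z in Set.univ, ν z s ∂μZ :=
      Measure.compProd_apply_prod MeasurableSet.univ hs
    rw [hdis, Measure.restrict_univ] at h1
    rw [← h1, hρhx, Measure.map_apply hpairZX (MeasurableSet.univ.prod hs),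
      hμX, Measure.map_apply hX hs]
    congr 1
    ext ω
    simp
  -- the composed kernel disintegrates the law of (h ∘ X, Y)
  have hcompprod : ∀ A B : Set ℝ, MeasurableSet A → MeasurableSet B →
      (μZ ⊗ₘ (κ ∘ₖ ν)) (A ×ˢ B) = P.map (fun ω => (h (X ω), Y ω)) (A ×ˢ B) := by
    intro A B hA hB
    rw [Measure.compProd_apply_prod hA hB]
    have e1 : ∫⁻ z in A, (κ ∘ₖ ν) z B ∂μZ = ∫⁻ z in A, ∫⁻ x, κ x B ∂ν z ∂μZ := by
      refine lintegral_congr fun z => ?_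
      rw [Kernel.comp_apply' _ _ _ hB]
    have e2 : ∫⁻ z in A, ∫⁻ x, κ x B ∂ν z ∂μZ
        = ∫⁻ p in A ×ˢ Set.univ, κ p.2 B ∂(μZ ⊗ₘ ν) := by
      rw [Measure.setLIntegral_compProd (f := fun p : ℝ × ℝ => κ p.2 B)
        ((Kernel.measurable_coe κ hB).comp measurable_snd) hA MeasurableSet.univ]
      simp
    have e3 : ∫⁻ p in A ×ˢ Set.univ, κ p.2 B ∂ρhx
        = ∫⁻ ω in (fun ω => h (X ω)) ⁻¹' A, κ (X ω) B ∂P := by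
      rw [hρhx, setLIntegral_map (f := fun p : ℝ × ℝ => κ p.2 B) (hA.prod MeasurableSet.univ)
        ((Kernel.measurable_coe κ hB).comp measurable_snd) hpairZX]
      have hset : (fun ω => (h (X ω), X ω)) ⁻¹' (A ×ˢ Set.univ) = (fun ω => h (X ω)) ⁻¹' A := by
        ext ω; simp
      rw [hset]
    have e4 : ∫⁻ ω in (fun ω => h (X ω)) ⁻¹' A, κ (X ω) B ∂P
        = ∫⁻ x in h ⁻¹' A, κ x B ∂μX := by
      rw [hμX, setLIntegral_map (hh hA) (Kernel.measurable_coe κ hB) hX]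
      rfl
    rw [e1, e2, hdis, e3, e4, ← hκ _ _ (hh hA) hB,
      Measure.map_apply (f := fun ω => (X ω, Y ω)) (hX.prodMk hY) ((hh hA).prod hB),
      Measure.map_apply (f := fun ω => (h (X ω), Y ω)) (hhX.prodMk hY) (hA.prod hB)]
    have hset2 : ((fun ω => (X ω, Y ω)) ⁻¹' (h ⁻¹' A) ×ˢ B)
        = ((fun ω => (h (X ω), Y ω)) ⁻¹' A ×ˢ B) := by
      ext ω; simp
    rw [hset2]
  -- both κh and κ ∘ₖ ν disintegrate the law of (h ∘ X, Y) : a.e. equality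
  have hmapκh : P.map (fun ω => (h (X ω), Y ω)) = P.map (fun ω => h (X ω)) ⊗ₘ κh := by
    refine ext_of_generate_finite _ generateFrom_prod.symm isPiSystem_prod ?_ ?_
    · rintro s ⟨A, hA, B, hB, rfl⟩
      have hA' : MeasurableSet A := hA
      have hB' : MeasurableSet B := hB
      rw [hκh A B hA' hB', Measure.compProd_apply_prod hA' hB']
      rfl
    · haveI : IsProbabilityMeasure (P.map (fun ω => (h (X ω), Y ω))) :=
        Measure.isProbabilityMeasure_map ((hh.comp hX).prodMk hY).aemeasurable
      haveI : IsProbabilityMeasure (P.map (fun ω => h (X ω)) ⊗ₘ κh) := by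
        haveI : IsProbabilityMeasure (P.map (fun ω => h (X ω))) :=
          Measure.isProbabilityMeasure_map hhX.aemeasurable
        infer_instance
      simp
  have hmapκν : P.map (fun ω => (h (X ω), Y ω)) = P.map (fun ω => h (X ω)) ⊗ₘ (κ ∘ₖ ν) := by
    refine ext_of_generate_finite _ generateFrom_prod.symm isPiSystem_prod ?_ ?_
    · rintro s ⟨A, hA, B, hB, rfl⟩
      have hA' : MeasurableSet A := hA
      have hB' : MeasurableSet B := hB
      rw [← hcompprod A B hA' hB']
      rfl
    · haveI : IsProbabilityMeasure (P.map (fun ω => (h (X ω), Y ω))) :=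
        Measure.isProbabilityMeasure_map ((hh.comp hX).prodMk hY).aemeasurable
      haveI : IsProbabilityMeasure (P.map (fun ω => h (X ω)) ⊗ₘ (κ ∘ₖ ν)) := by
        haveI : IsProbabilityMeasure (P.map (fun ω => h (X ω))) :=
          Measure.isProbabilityMeasure_map hhX.aemeasurable
        infer_instance
      simp
  have hae : ∀ᵐ z ∂μZ, κh z = (κ ∘ₖ ν) z := by
    have h1 := condDistrib_ae_eq_of_measure_eq_compProd (μ := P) (fun ω => h (X ω)) hY.aemeasurable hmapκh
    have h2 := condDistrib_ae_eq_of_measure_eq_compProd (μ := P) (fun ω => h (X ω)) hY.aemeasurable hmapκν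
    filter_upwards [h1, h2] with z hz1 hz2
    rw [← hz1, ← hz2]
  -- measurable bounded version of φ
  obtain ⟨ψ, hψm, hψeq, C, hC0, hψb⟩ := convexOn_Icc_measurable_version hφ
  have hψconv : ConvexOn ℝ (Set.Icc (-1 : ℝ) 1) ψ := by
    refine ⟨convex_Icc _ _, fun x hx y hy a b ha hb hab => ?_⟩
    rw [hψeq _ hx, hψeq _ hy, hψeq _ ((convex_Icc (-1 : ℝ) 1) hx hy ha hb hab)]
    exact hφ.2 hx hy ha hb hab
  have hFκ := measurable_kernel_cdf κ
  have hFκh := measurable_kernel_cdf κh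
  have hmemκ : ∀ x y : ℝ, (κ x (Set.Iic y)).toReal ∈ Set.Icc (0 : ℝ) 1 := by
    intro x y
    refine ⟨ENNReal.toReal_nonneg, ?_⟩
    calc (κ x (Set.Iic y)).toReal ≤ (1 : ℝ≥0∞).toReal :=
      ENNReal.toReal_mono ENNReal.one_ne_top prob_le_one
    _ = 1 := ENNReal.toReal_one
  have hmemκh : ∀ x y : ℝ, (κh x (Set.Iic y)).toReal ∈ Set.Icc (0 : ℝ) 1 := by
    intro x y
    refine ⟨ENNReal.toReal_nonneg, ?_⟩
    calc (κh x (Set.Iic y)).toReal ≤ (1 : ℝ≥0∞).toReal :=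
      ENNReal.toReal_mono ENNReal.one_ne_top prob_le_one
    _ = 1 := ENNReal.toReal_one
  have hdiff_mem : ∀ a b : ℝ, a ∈ Set.Icc (0 : ℝ) 1 → b ∈ Set.Icc (0 : ℝ) 1 →
      a - b ∈ Set.Icc (-1 : ℝ) 1 := by
    rintro a b ⟨ha0, ha1⟩ ⟨hb0, hb1⟩
    constructor <;> linarith
  -- replace φ by ψ on both sides
  have goalL : ∫ z : ℝ × ℝ, (∫ y, φ ((κh z.1 (Set.Iic y)).toReal - (κh z.2 (Set.Iic y)).toReal)
        ∂μY) ∂(μZ.prod μZ)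
      = ∫ z : ℝ × ℝ, (∫ y, ψ ((κh z.1 (Set.Iic y)).toReal - (κh z.2 (Set.Iic y)).toReal)
        ∂μY) ∂(μZ.prod μZ) := by
    refine integral_congr_ae (ae_of_all _ fun q => integral_congr_ae (ae_of_all _ fun y => ?_))
    beta_reduce
    exact (hψeq _ (hdiff_mem _ _ (hmemκh _ _) (hmemκh _ _))).symm
  have goalR : ∫ x : ℝ × ℝ, (∫ y, φ ((κ x.1 (Set.Iic y)).toReal - (κ x.2 (Set.Iic y)).toReal)
        ∂μY) ∂(μX.prod μX)
      = ∫ x : ℝ × ℝ, (∫ y, ψ ((κ x.1 (Set.Iic y)).toReal - (κ x.2 (Set.Iic y)).toReal)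
        ∂μY) ∂(μX.prod μX) := by
    refine integral_congr_ae (ae_of_all _ fun q => integral_congr_ae (ae_of_all _ fun y => ?_))
    beta_reduce
    exact (hψeq _ (hdiff_mem _ _ (hmemκ _ _) (hmemκ _ _))).symm
  rw [goalL, goalR]
  -- the product kernel
  set νq : Kernel (ℝ × ℝ) (ℝ × ℝ) :=
    (ν.comap Prod.fst measurable_fst) ×ₖ (ν.comap Prod.snd measurable_snd) with hνqdef
  haveI : IsMarkovKernel νq := by
    rw [hνqdef]
    infer_instance
  have hνq : ∀ q : ℝ × ℝ, νq q = (ν q.1).prod (ν q.2) := fun q => by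
    rw [hνqdef, Kernel.prod_apply, Kernel.comap_apply, Kernel.comap_apply]
  -- the comparison function
  set G : ℝ × ℝ → ℝ :=
    fun p => ∫ y, ψ ((κ p.1 (Set.Iic y)).toReal - (κ p.2 (Set.Iic y)).toReal) ∂μY with hGdef
  have hjointκ : Measurable (fun r : (ℝ × ℝ) × ℝ =>
      ψ ((κ r.1.1 (Set.Iic r.2)).toReal - (κ r.1.2 (Set.Iic r.2)).toReal)) :=
    hψm.comp ((hFκ.comp (measurable_fst.fst.prodMk measurable_snd)).sub
      (hFκ.comp (measurable_fst.snd.prodMk measurable_snd)))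
  have hGsm : StronglyMeasurable G := hjointκ.stronglyMeasurable.integral_prod_right'
  have hGb : ∀ p, |G p| ≤ C := fun p => abs_integral_le_of_le μY (fun y => hψb _)
  -- a.e. pointwise bound
  have hae2 : ∀ᵐ q ∂(μZ.prod μZ), κh q.1 = (κ ∘ₖ ν) q.1 ∧ κh q.2 = (κ ∘ₖ ν) q.2 :=
    (Measure.quasiMeasurePreserving_fst.ae hae).and (Measure.quasiMeasurePreserving_snd.ae hae)
  have step1 : ∀ᵐ q ∂(μZ.prod μZ),
      (∫ y, ψ ((κh q.1 (Set.Iic y)).toReal - (κh q.2 (Set.Iic y)).toReal) ∂μY)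
        ≤ ∫ p, G p ∂(νq q) := by
    filter_upwards [hae2] with q hq
    obtain ⟨hq1, hq2⟩ := hq
    rw [hνq q]
    have hval : ∀ (z : ℝ), κh z = (κ ∘ₖ ν) z → ∀ y : ℝ,
        (κh z (Set.Iic y)).toReal = ∫ x, (κ x (Set.Iic y)).toReal ∂ν z := by
      intro z hz y
      rw [hz, Kernel.comp_apply' _ _ _ measurableSet_Iic,
        ← integral_toReal (Kernel.measurable_coe κ measurableSet_Iic).aemeasurable
          (ae_of_all _ fun x => lt_of_le_of_lt prob_le_one ENNReal.one_lt_top)]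
    have hy : ∀ y : ℝ, ψ ((κh q.1 (Set.Iic y)).toReal - (κh q.2 (Set.Iic y)).toReal)
        ≤ ∫ p, ψ ((κ p.1 (Set.Iic y)).toReal - (κ p.2 (Set.Iic y)).toReal)
            ∂((ν q.1).prod (ν q.2)) := by
      intro y
      have habs1 : ∀ p : ℝ × ℝ, |(κ p.1 (Set.Iic y)).toReal| ≤ 1 := fun p => by
        obtain ⟨h1, h2⟩ := hmemκ p.1 y
        rw [abs_le]; constructor <;> linarith
      have habs2 : ∀ p : ℝ × ℝ, |(κ p.2 (Set.Iic y)).toReal| ≤ 1 := fun p => by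
        obtain ⟨h1, h2⟩ := hmemκ p.2 y
        rw [abs_le]; constructor <;> linarith
      have hint1 : Integrable (fun p : ℝ × ℝ => (κ p.1 (Set.Iic y)).toReal)
          ((ν q.1).prod (ν q.2)) :=
        integrable_of_bounded_meas _
          (hFκ.comp (measurable_fst.prodMk measurable_const)).aestronglyMeasurable habs1
      have hint2 : Integrable (fun p : ℝ × ℝ => (κ p.2 (Set.Iic y)).toReal)
          ((ν q.1).prod (ν q.2)) :=
        integrable_of_bounded_meas _
          (hFκ.comp (measurable_snd.prodMk measurable_const)).aestronglyMeasurable habs2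
      have hsub : (κh q.1 (Set.Iic y)).toReal - (κh q.2 (Set.Iic y)).toReal
          = ∫ p, ((κ p.1 (Set.Iic y)).toReal - (κ p.2 (Set.Iic y)).toReal)
              ∂((ν q.1).prod (ν q.2)) := by
        rw [hval q.1 hq1 y, hval q.2 hq2 y, integral_sub hint1 hint2]
        congr 1
        · rw [MeasureTheory.integral_prod _ hint1]
          simp
        · rw [MeasureTheory.integral_prod _ hint2]
          simp
      rw [hsub]
      refine jensen_Icc _ hψconv ?_ ?_ ?_
      · exact ((hFκ.comp (measurable_fst.prodMk measurable_const)).sub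
          (hFκ.comp (measurable_snd.prodMk measurable_const))).aestronglyMeasurable
      · exact fun p => hdiff_mem _ _ (hmemκ _ _) (hmemκ _ _)
      · exact integrable_of_bounded_meas _
          (hψm.comp ((hFκ.comp (measurable_fst.prodMk measurable_const)).sub
            (hFκ.comp (measurable_snd.prodMk measurable_const)))).aestronglyMeasurable
          (fun p => hψb _)
    have hintL : Integrable
        (fun y => ψ ((κh q.1 (Set.Iic y)).toReal - (κh q.2 (Set.Iic y)).toReal)) μY :=
      integrable_of_bounded_meas _
        (hψm.comp ((hFκh.comp (measurable_const.prodMk measurable_id)).sub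
          (hFκh.comp (measurable_const.prodMk measurable_id)))).aestronglyMeasurable
        (fun y => hψb _)
    have hjy : Measurable (fun r : ℝ × (ℝ × ℝ) =>
        ψ ((κ r.2.1 (Set.Iic r.1)).toReal - (κ r.2.2 (Set.Iic r.1)).toReal)) :=
      hψm.comp ((hFκ.comp (measurable_snd.fst.prodMk measurable_fst)).sub
        (hFκ.comp (measurable_snd.snd.prodMk measurable_fst)))
    have hintR : Integrable (fun y => ∫ p,
        ψ ((κ p.1 (Set.Iic y)).toReal - (κ p.2 (Set.Iic y)).toReal)
          ∂((ν q.1).prod (ν q.2))) μY :=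
      integrable_of_bounded_meas _
        hjy.stronglyMeasurable.integral_prod_right'.aestronglyMeasurable
        (fun y => abs_integral_le_of_le _ fun p => hψb _)
    calc ∫ y, ψ ((κh q.1 (Set.Iic y)).toReal - (κh q.2 (Set.Iic y)).toReal) ∂μY
        ≤ ∫ y, (∫ p, ψ ((κ p.1 (Set.Iic y)).toReal - (κ p.2 (Set.Iic y)).toReal)
            ∂((ν q.1).prod (ν q.2))) ∂μY := integral_mono hintL hintR hy
      _ = ∫ p, (∫ y, ψ ((κ p.1 (Set.Iic y)).toReal - (κ p.2 (Set.Iic y)).toReal) ∂μY)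
            ∂((ν q.1).prod (ν q.2)) := by
          apply integral_integral_swap
          exact integrable_of_bounded_meas _ hjy.aestronglyMeasurable (fun r => hψb _)
      _ = ∫ p, G p ∂((ν q.1).prod (ν q.2)) := rfl
  -- integrate the bound
  have hintLh : Integrable (fun q : ℝ × ℝ =>
      ∫ y, ψ ((κh q.1 (Set.Iic y)).toReal - (κh q.2 (Set.Iic y)).toReal) ∂μY)
      (μZ.prod μZ) := by
    refine integrable_of_bounded_meas _ ?_ (fun q => abs_integral_le_of_le _ fun y => hψb _)
    exact (hψm.comp ((hFκh.comp (measurable_fst.fst.prodMk measurable_snd)).sub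
      (hFκh.comp
        (measurable_fst.snd.prodMk measurable_snd)))).stronglyMeasurable.integral_prod_right'.aestronglyMeasurable
  have hintΛ : Integrable (fun q : ℝ × ℝ => ∫ p, G p ∂(νq q)) (μZ.prod μZ) := by
    refine integrable_of_bounded_meas _ ?_ (fun q => abs_integral_le_of_le _ fun p => hGb p)
    exact ((hGsm.comp_measurable measurable_snd).integral_kernel_prod_right'
      (κ := νq)).aestronglyMeasurable
  have step2 : ∫ q, (∫ y, ψ ((κh q.1 (Set.Iic y)).toReal - (κh q.2 (Set.Iic y)).toReal) ∂μY)
      ∂(μZ.prod μZ) ≤ ∫ q, (∫ p, G p ∂(νq q)) ∂(μZ.prod μZ) :=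
    integral_mono_ae hintLh hintΛ step1
  -- identify the compProd integral with the RHS
  have hintG2 : Integrable (fun r : (ℝ × ℝ) × (ℝ × ℝ) => G r.2) ((μZ.prod μZ) ⊗ₘ νq) :=
    integrable_of_bounded_meas _ (hGsm.comp_measurable measurable_snd).aestronglyMeasurable
      (fun r => hGb _)
  have step3 : ∫ q, (∫ p, G p ∂(νq q)) ∂(μZ.prod μZ) = ∫ p, G p ∂(μX.prod μX) := by
    have e1 : ∫ r, G r.2 ∂((μZ.prod μZ) ⊗ₘ νq) = ∫ q, (∫ p, G p ∂(νq q)) ∂(μZ.prod μZ) :=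
      Measure.integral_compProd hintG2
    have hsnd : ((μZ.prod μZ) ⊗ₘ νq).map Prod.snd = μX.prod μX := by
      refine ext_of_generate_finite _ generateFrom_prod.symm isPiSystem_prod ?_ ?_
      · rintro s ⟨A, hA, B, hB, rfl⟩
        have hA' : MeasurableSet A := hA
        have hB' : MeasurableSet B := hB
        rw [Measure.map_apply measurable_snd (hA'.prod hB')]
        have hpre : (Prod.snd ⁻¹' (A ×ˢ B) : Set ((ℝ × ℝ) × (ℝ × ℝ)))
            = Set.univ ×ˢ (A ×ˢ B) := by ext r; simp
        rw [hpre, Measure.compProd_apply_prod MeasurableSet.univ (hA'.prod hB'),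
          Measure.restrict_univ]
        have hval : ∀ q : ℝ × ℝ, νq q (A ×ˢ B) = (ν q.1) A * (ν q.2) B := fun q => by
          rw [hνq q, Measure.prod_prod]
        rw [lintegral_congr hval,
          lintegral_prod_mul (Kernel.measurable_coe ν hA').aemeasurable
            (Kernel.measurable_coe ν hB').aemeasurable,
          hmarg A hA', hmarg B hB', Measure.prod_prod]
      · haveI : IsProbabilityMeasure (((μZ.prod μZ) ⊗ₘ νq).map Prod.snd) :=
          Measure.isProbabilityMeasure_map measurable_snd.aemeasurable
        simp
    have e2 : ∫ p, G p ∂(μX.prod μX) = ∫ r, G r.2 ∂((μZ.prod μZ) ⊗ₘ νq) := by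
      rw [← hsnd, integral_map measurable_snd.aemeasurable hGsm.aestronglyMeasurable]
    rw [e2, e1]
  calc ∫ q : ℝ × ℝ, (∫ y, ψ ((κh q.1 (Set.Iic y)).toReal - (κh q.2 (Set.Iic y)).toReal) ∂μY)
      ∂(μZ.prod μZ) ≤ ∫ q, (∫ p, G p ∂(νq q)) ∂(μZ.prod μZ) := step2
    _ = ∫ p, G p ∂(μX.prod μX) := step3
end

section
/- Let (Ω, 𝒜, P) be a probability space, X, Y : Ω → ℝ random variables, h : ℝ → ℝ Borel measurable, and φ : [−1,1] → ℝ convex. If Y and X are conditionally independent given h(X), then ∫_{ℝ×ℝ} ∫_ℝ φ(F_{Y|h(X)=z₁}(y) − F_{Y|h(X)=z₂}(y)) dP^Y(y) d(P^{h(X)} ⊗ P^{h(X)})(z₁,z₂) = ∫_{ℝ×ℝ} ∫_ℝ φ(F_{Y|X=x₁}(y) − F_{Y|X=x₂}(y)) dP^Y(y) d(P^X ⊗ P^X)(x₁,x₂) (self-equitability). -/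
open MeasureTheory ProbabilityTheory Filter Set
open scoped ENNReal Topology

/-- Two finite measures on ℝ agreeing on `Iic q` for all rationals are equal. -/
lemma meas_ext_rat (μ ν : Measure ℝ) [IsFiniteMeasure μ] [IsFiniteMeasure ν]
    (hq : ∀ q : ℚ, μ (Iic (q : ℝ)) = ν (Iic (q : ℝ))) : μ = ν := by
  refine Measure.ext_of_Iic μ ν fun a => ?_
  have hne : Nonempty {q : ℚ // a < (q : ℝ)} := by
    obtain ⟨q, hq'⟩ := exists_rat_gt a; exact ⟨⟨q, hq'⟩⟩
  have hInter : ⋂ q : {q : ℚ // a < (q : ℝ)}, Iic ((q : ℚ) : ℝ) = Iic a := by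
    ext y
    simp only [mem_iInter, mem_Iic, Subtype.forall]
    constructor
    · intro hy
      by_contra hya
      push_neg at hya
      obtain ⟨q, hq1, hq2⟩ := exists_rat_btwn hya
      exact absurd (hy q hq1) (not_le.mpr hq2)
    · intro hy q hq'; exact hy.trans hq'.le
  have hdir : Directed (· ⊇ ·) fun q : {q : ℚ // a < (q : ℝ)} => Iic ((q : ℚ) : ℝ) := by
    intro q r
    refine ⟨⟨min q.1 r.1, ?_⟩, ?_, ?_⟩
    · push_cast; exact lt_min q.2 r.2
    · exact Iic_subset_Iic.mpr (by push_cast; exact min_le_left _ _)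
    · exact Iic_subset_Iic.mpr (by push_cast; exact min_le_right _ _)
  have h1 : μ (Iic a) = ⨅ q : {q : ℚ // a < (q : ℝ)}, μ (Iic ((q : ℚ) : ℝ)) := by
    rw [← hInter]
    exact hdir.measure_iInter (fun q => measurableSet_Iic.nullMeasurableSet)
      ⟨hne.some, measure_ne_top _ _⟩
  have h2 : ν (Iic a) = ⨅ q : {q : ℚ // a < (q : ℝ)}, ν (Iic ((q : ℚ) : ℝ)) := by
    rw [← hInter]
    exact hdir.measure_iInter (fun q => measurableSet_Iic.nullMeasurableSet)
      ⟨hne.some, measure_ne_top _ _⟩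
  rw [h1, h2]
  exact iInf_congr fun q => hq q.1

/-- A measurable function agreeing with a convex function on `Icc (-1) 1`. -/
lemma exists_measurable_convex_ext (φ : ℝ → ℝ) (hφ : ConvexOn ℝ (Set.Icc (-1 : ℝ) 1) φ) :
    ∃ ψ : ℝ → ℝ, Measurable ψ ∧ ∀ t ∈ Icc (-1 : ℝ) 1, ψ t = φ t := by
  classical
  set g : ℝ → ℝ := fun t => if t < 0 then φ (-1) else φ 1 with hg
  refine ⟨(Ioo (-1 : ℝ) 1).piecewise φ g, ?_, ?_⟩
  · refine ContinuousOn.measurable_piecewise ?_ ?_ measurableSet_Ioo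
    · have h1 : Ioo (-1 : ℝ) 1 ⊆ interior (Icc (-1 : ℝ) 1) := by
        rw [interior_Icc]
      exact (hφ.continuousOn_interior).mono h1
    · have hca : ∀ t : ℝ, t ≠ 0 → ContinuousAt g t := by
        intro t ht
        rcases ht.lt_or_gt with h0 | h0
        · have he : g =ᶠ[nhds t] fun _ => φ (-1) := by
            filter_upwards [Iio_mem_nhds h0] with s hs
            simp [hg, show s < 0 from hs]
          exact he.continuousAt
        · have he : g =ᶠ[nhds t] fun _ => φ 1 := by
            filter_upwards [Ioi_mem_nhds h0] with s hs
            simp [hg, not_lt.mpr (show (0:ℝ) < s from hs).le]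
          exact he.continuousAt
      intro t ht
      have ht2 : ¬ (-1 < t ∧ t < 1) := ht
      have ht' : t ≤ -1 ∨ 1 ≤ t := by
        by_contra hc
        push_neg at hc
        exact ht2 hc
      have htne : t ≠ 0 := by rcases ht' with h' | h' <;> intro hc <;> rw [hc] at h' <;> linarith
      exact (hca t htne).continuousWithinAt
  · intro t ht
    by_cases h' : t ∈ Ioo (-1 : ℝ) 1
    · rw [Set.piecewise_eq_of_mem _ _ _ h']
    · rw [Set.piecewise_eq_of_notMem _ _ _ h']
      rcases eq_or_lt_of_le ht.1 with h1 | h1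
      · rw [← h1]; simp only [hg]; norm_num
      · have h2 : t = 1 := le_antisymm ht.2 (by by_contra h2; exact h' ⟨h1, lt_of_not_ge h2⟩)
        rw [h2]; simp only [hg]; norm_num

lemma toReal_prob_le_one {μ : Measure ℝ} [IsProbabilityMeasure μ] (s : Set ℝ) :
    (μ s).toReal ≤ 1 := by
  have h1 : μ s ≤ 1 := prob_le_one
  calc (μ s).toReal ≤ (1 : ℝ≥0∞).toReal := ENNReal.toReal_mono (by simp) h1
    _ = 1 := by simp

lemma kernel_condexp {Ω : Type*} [MeasurableSpace Ω] (P : Measure Ω) [IsProbabilityMeasure P]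
    (X Y : Ω → ℝ) (hX : Measurable X) (hY : Measurable Y)
    (h : ℝ → ℝ) (hh : Measurable h)
    (κh : Kernel ℝ ℝ) [IsMarkovKernel κh]
    (hκh : ∀ A B : Set ℝ, MeasurableSet A → MeasurableSet B →
      P.map (fun ω => (h (X ω), Y ω)) (A ×ˢ B) = ∫⁻ z in A, κh z B ∂(P.map (h ∘ X)))
    (B : Set ℝ) (hB : MeasurableSet B) :
    (fun ω => (κh (h (X ω)) B).toReal)
      =ᵐ[P] P[fun ω => Set.indicator B (fun _ => (1 : ℝ)) (Y ω)
        | MeasurableSpace.comap (h ∘ X) Real.measurableSpace] := by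
  have hhX : Measurable (h ∘ X) := hh.comp hX
  have hm : MeasurableSpace.comap (h ∘ X) Real.measurableSpace ≤ ‹MeasurableSpace Ω› :=
    hhX.comap_le
  have hind : (fun ω => Set.indicator B (fun _ => (1 : ℝ)) (Y ω))
      = (Y ⁻¹' B).indicator (fun _ => (1 : ℝ)) := by
    ext ω; by_cases hω : Y ω ∈ B <;> simp [hω]
  have hfint : Integrable (fun ω => Set.indicator B (fun _ => (1 : ℝ)) (Y ω)) P := by
    rw [hind]; exact (integrable_const (1 : ℝ)).indicator (hY hB)
  have hgmeas : Measurable fun ω => (κh (h (X ω)) B).toReal :=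
    ((κh.measurable_coe hB).comp hhX).ennreal_toReal
  have hgbd : ∀ ω, ‖(κh (h (X ω)) B).toReal‖ ≤ 1 := by
    intro ω
    rw [Real.norm_eq_abs, abs_of_nonneg ENNReal.toReal_nonneg]
    exact toReal_prob_le_one _
  have hgint : Integrable (fun ω => (κh (h (X ω)) B).toReal) P :=
    (integrable_const (1 : ℝ)).mono' hgmeas.aestronglyMeasurable
      (Eventually.of_forall hgbd)
  refine ae_eq_condExp_of_forall_setIntegral_eq hm hfint
    (fun s _ _ => hgint.integrableOn) ?_ ?_
  · rintro s ⟨A, hA, rfl⟩ -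
    have hstep1 : ∫ ω in (h ∘ X) ⁻¹' A, (κh (h (X ω)) B).toReal ∂P
        = ∫ z in A, (κh z B).toReal ∂(P.map (h ∘ X)) :=
      (setIntegral_map hA ((κh.measurable_coe hB).ennreal_toReal).aestronglyMeasurable
        hhX.aemeasurable).symm
    have hstep2 : ∫ z in A, (κh z B).toReal ∂(P.map (h ∘ X))
        = (∫⁻ z in A, κh z B ∂(P.map (h ∘ X))).toReal :=
      integral_toReal ((κh.measurable_coe hB).aemeasurable)
        (ae_of_all _ fun z => lt_of_le_of_lt prob_le_one ENNReal.one_lt_top)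
    have hstep3 : (∫⁻ z in A, κh z B ∂(P.map (h ∘ X))).toReal
        = (P ((h ∘ X) ⁻¹' A ∩ Y ⁻¹' B)).toReal := by
      rw [← hκh A B hA hB, Measure.map_apply (show Measurable fun ω => (h (X ω), Y ω) from hhX.prodMk hY) (hA.prod hB)]
      congr 1
    have hstep4 : ∫ ω in (h ∘ X) ⁻¹' A, Set.indicator B (fun _ => (1 : ℝ)) (Y ω) ∂P
        = (P ((h ∘ X) ⁻¹' A ∩ Y ⁻¹' B)).toReal := by
      simp_rw [hind]
      rw [setIntegral_indicator (hY hB), setIntegral_const, smul_eq_mul, mul_one, measureReal_def]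
    rw [hstep1, hstep2, hstep3, hstep4]
  · have hm' : @Measurable Ω ℝ (MeasurableSpace.comap (h ∘ X) Real.measurableSpace)
        Real.measurableSpace (h ∘ X) := Measurable.of_comap_le le_rfl
    exact (((κh.measurable_coe hB).ennreal_toReal.comp hm')).stronglyMeasurable.aestronglyMeasurable

lemma kernel_ae_eq {Ω : Type*} [MeasurableSpace Ω] (P : Measure Ω) [IsProbabilityMeasure P]
    (X Y : Ω → ℝ) (hX : Measurable X) (hY : Measurable Y)
    (h : ℝ → ℝ) (hh : Measurable h)
    (κ : Kernel ℝ ℝ) [IsMarkovKernel κ]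
    (hκ : ∀ A B : Set ℝ, MeasurableSet A → MeasurableSet B →
      P.map (fun ω => (X ω, Y ω)) (A ×ˢ B) = ∫⁻ x in A, κ x B ∂(P.map X))
    (κh : Kernel ℝ ℝ) [IsMarkovKernel κh]
    (hκh : ∀ A B : Set ℝ, MeasurableSet A → MeasurableSet B →
      P.map (fun ω => (h (X ω), Y ω)) (A ×ˢ B) = ∫⁻ z in A, κh z B ∂(P.map (h ∘ X)))
    (hCI : ∀ B C : Set ℝ, MeasurableSet B → MeasurableSet C →
      P[fun ω => Set.indicator B (fun _ => (1 : ℝ)) (Y ω) *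
          Set.indicator C (fun _ => (1 : ℝ)) (X ω)
        | MeasurableSpace.comap (h ∘ X) Real.measurableSpace]
      =ᵐ[P] fun ω =>
        (P[fun ω' => Set.indicator B (fun _ => (1 : ℝ)) (Y ω')
            | MeasurableSpace.comap (h ∘ X) Real.measurableSpace]) ω *
        (P[fun ω' => Set.indicator C (fun _ => (1 : ℝ)) (X ω')
            | MeasurableSpace.comap (h ∘ X) Real.measurableSpace]) ω) :
    ∀ᵐ x ∂(P.map X), κ x = κh (h x) := by
  have hhX : Measurable (h ∘ X) := hh.comp hX
  have hm : MeasurableSpace.comap (h ∘ X) Real.measurableSpace ≤ ‹MeasurableSpace Ω› :=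
    hhX.comap_le
  haveI : IsProbabilityMeasure (P.map X) := Measure.isProbabilityMeasure_map hX.aemeasurable
  have key2 : ∀ B : Set ℝ, MeasurableSet B → ∀ᵐ x ∂(P.map X), κ x B = κh (h x) B := by
    intro B hB
    have hfmeas : Measurable fun x => (κ x B).toReal := (κ.measurable_coe hB).ennreal_toReal
    have hgmeas : Measurable fun x => (κh (h x) B).toReal :=
      ((κh.measurable_coe hB).comp hh).ennreal_toReal
    have hbd : ∀ (ξ : Kernel ℝ ℝ) [IsMarkovKernel ξ], ∀ x : ℝ, ‖(ξ x B).toReal‖ ≤ 1 := by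
      intro ξ _ x
      rw [Real.norm_eq_abs, abs_of_nonneg ENNReal.toReal_nonneg]
      exact toReal_prob_le_one _
    have hfint : Integrable (fun x => (κ x B).toReal) (P.map X) :=
      (integrable_const (1 : ℝ)).mono' hfmeas.aestronglyMeasurable
        (Eventually.of_forall (hbd κ))
    have hgint : Integrable (fun x => (κh (h x) B).toReal) (P.map X) :=
      (integrable_const (1 : ℝ)).mono' hgmeas.aestronglyMeasurable
        (Eventually.of_forall fun x => hbd κh (h x))
    have hae : (fun x => (κ x B).toReal) =ᵐ[P.map X] fun x => (κh (h x) B).toReal := by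
      apply ae_eq_of_forall_setIntegral_eq_of_sigmaFinite
        (fun s _ _ => hfint.integrableOn) (fun s _ _ => hgint.integrableOn)
      intro C hC _
      -- introduce indicator functions
      set f1 : Ω → ℝ := fun ω => Set.indicator B (fun _ => (1 : ℝ)) (Y ω) with hf1
      set f2 : Ω → ℝ := fun ω => Set.indicator C (fun _ => (1 : ℝ)) (X ω) with hf2
      have hf1int : Integrable f1 P := by
        have : f1 = (Y ⁻¹' B).indicator (fun _ => (1 : ℝ)) := by
          ext ω; by_cases hω : Y ω ∈ B <;> simp [hf1, hω]
        rw [this]; exact (integrable_const (1 : ℝ)).indicator (hY hB)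
      have hf2int : Integrable f2 P := by
        have : f2 = (X ⁻¹' C).indicator (fun _ => (1 : ℝ)) := by
          ext ω; by_cases hω : X ω ∈ C <;> simp [hf2, hω]
        rw [this]; exact (integrable_const (1 : ℝ)).indicator (hX hC)
      have hf2meas : Measurable f2 := by
        have : f2 = (X ⁻¹' C).indicator (fun _ => (1 : ℝ)) := by
          ext ω; by_cases hω : X ω ∈ C <;> simp [hf2, hω]
        rw [this]; exact measurable_const.indicator (hX hC)
      have hf2bd : ∀ ω, ‖f2 ω‖ ≤ 1 := by
        intro ω; by_cases hω : X ω ∈ C <;> simp [hf2, hω]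
      -- LHS
      have hL : ∫ x in C, (κ x B).toReal ∂(P.map X) = (P (X ⁻¹' C ∩ Y ⁻¹' B)).toReal := by
        rw [integral_toReal ((κ.measurable_coe hB).aemeasurable)
          (ae_of_all _ fun x => lt_of_le_of_lt prob_le_one ENNReal.one_lt_top),
          ← hκ C B hC hB,
          Measure.map_apply (show Measurable fun ω => (X ω, Y ω) from hX.prodMk hY)
            (hC.prod hB)]
        congr 1
      -- the product as an indicator
      have hprod : (fun ω => f1 ω * f2 ω)
          = (X ⁻¹' C ∩ Y ⁻¹' B).indicator (fun _ => (1 : ℝ)) := by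
        ext ω
        by_cases h1 : Y ω ∈ B <;> by_cases h2 : X ω ∈ C <;>
          simp [hf1, hf2, h1, h2]
      have hE1 : (P (X ⁻¹' C ∩ Y ⁻¹' B)).toReal = ∫ ω, f1 ω * f2 ω ∂P := by
        rw [hprod, integral_indicator ((hX hC).inter (hY hB)), setIntegral_const,
          smul_eq_mul, mul_one, measureReal_def]
      -- conditional expectation manipulations
      have hcd := kernel_condexp P X Y hX hY h hh κh hκh B hB
      have hmul_int : Integrable
          ((P[f1 | MeasurableSpace.comap (h ∘ X) Real.measurableSpace]) * f2) P := by
        have := (integrable_condExp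
          (f := f1) (m := MeasurableSpace.comap (h ∘ X) Real.measurableSpace) (μ := P)).bdd_mul
          (f := f2) hf2meas.aestronglyMeasurable (ae_of_all _ hf2bd)
        exact this.congr (ae_of_all _ fun ω => mul_comm _ _)
      have hE2 : ∫ ω, f1 ω * f2 ω ∂P
          = ∫ ω, (P[f1 | MeasurableSpace.comap (h ∘ X) Real.measurableSpace]) ω * f2 ω ∂P := by
        calc ∫ ω, f1 ω * f2 ω ∂P
            = ∫ ω, (P[fun ω' => f1 ω' * f2 ω'
                | MeasurableSpace.comap (h ∘ X) Real.measurableSpace]) ω ∂P :=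
              (integral_condExp hm).symm
          _ = ∫ ω, (P[f1 | MeasurableSpace.comap (h ∘ X) Real.measurableSpace]) ω *
                (P[f2 | MeasurableSpace.comap (h ∘ X) Real.measurableSpace]) ω ∂P :=
              integral_congr_ae (hCI B C hB hC)
          _ = ∫ ω, (P[(P[f1 | MeasurableSpace.comap (h ∘ X) Real.measurableSpace]) * f2
                | MeasurableSpace.comap (h ∘ X) Real.measurableSpace]) ω ∂P := by
              refine integral_congr_ae ?_
              filter_upwards [condExp_mul_of_stronglyMeasurable_left
                (stronglyMeasurable_condExp (f := f1)
                  (m := MeasurableSpace.comap (h ∘ X) Real.measurableSpace) (μ := P))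
                hmul_int hf2int] with ω hω
              rw [hω, Pi.mul_apply]
          _ = ∫ ω, (P[f1 | MeasurableSpace.comap (h ∘ X) Real.measurableSpace]) ω * f2 ω ∂P :=
              integral_condExp hm
      have hE3 : ∫ ω, (P[f1 | MeasurableSpace.comap (h ∘ X) Real.measurableSpace]) ω * f2 ω ∂P
          = ∫ ω, (κh (h (X ω)) B).toReal * f2 ω ∂P := by
        refine integral_congr_ae ?_
        filter_upwards [hcd] with ω hω
        rw [← hω]
      -- back to a set integral over X ⁻¹' C
      have hE4 : ∫ ω, (κh (h (X ω)) B).toReal * f2 ω ∂P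
          = ∫ x in C, (κh (h x) B).toReal ∂(P.map X) := by
        have hid : (fun ω => (κh (h (X ω)) B).toReal * f2 ω)
            = (X ⁻¹' C).indicator (fun ω => (κh (h (X ω)) B).toReal) := by
          ext ω; by_cases hω : X ω ∈ C <;> simp [hf2, hω]
        rw [hid, integral_indicator (hX hC),
          setIntegral_map hC hgmeas.aestronglyMeasurable hX.aemeasurable]
      rw [hL, hE1, hE2, hE3, hE4]
    filter_upwards [hae] with x hx
    exact (ENNReal.toReal_eq_toReal_iff' (measure_ne_top _ _) (measure_ne_top _ _)).mp hx
  have hQ : ∀ᵐ x ∂(P.map X), ∀ q : ℚ, κ x (Iic (q : ℝ)) = κh (h x) (Iic (q : ℝ)) :=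
    ae_all_iff.mpr fun q => key2 _ measurableSet_Iic
  filter_upwards [hQ] with x hx
  exact meas_ext_rat (κ x) (κh (h x)) hx

/-- Self-equitability: If Y and X are conditionally independent
given h(X), then the sensitivity functional of the conditional distributions of
Y given h(X) equals that of Y given X. -/
theorem stmt12 {Ω : Type*} [MeasurableSpace Ω] (P : Measure Ω) [IsProbabilityMeasure P]
    (X Y : Ω → ℝ) (hX : Measurable X) (hY : Measurable Y)
    (h : ℝ → ℝ) (hh : Measurable h)
    (κ : Kernel ℝ ℝ) [IsMarkovKernel κ]
    (hκ : ∀ A B : Set ℝ, MeasurableSet A → MeasurableSet B →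
      P.map (fun ω => (X ω, Y ω)) (A ×ˢ B) = ∫⁻ x in A, κ x B ∂(P.map X))
    (κh : Kernel ℝ ℝ) [IsMarkovKernel κh]
    (hκh : ∀ A B : Set ℝ, MeasurableSet A → MeasurableSet B →
      P.map (fun ω => (h (X ω), Y ω)) (A ×ˢ B) = ∫⁻ z in A, κh z B ∂(P.map (h ∘ X)))
    (hCI : ∀ B C : Set ℝ, MeasurableSet B → MeasurableSet C →
      P[fun ω => Set.indicator B (fun _ => (1 : ℝ)) (Y ω) *
          Set.indicator C (fun _ => (1 : ℝ)) (X ω)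
        | MeasurableSpace.comap (h ∘ X) Real.measurableSpace]
      =ᵐ[P] fun ω =>
        (P[fun ω' => Set.indicator B (fun _ => (1 : ℝ)) (Y ω')
            | MeasurableSpace.comap (h ∘ X) Real.measurableSpace]) ω *
        (P[fun ω' => Set.indicator C (fun _ => (1 : ℝ)) (X ω')
            | MeasurableSpace.comap (h ∘ X) Real.measurableSpace]) ω)
    (φ : ℝ → ℝ) (hφ : ConvexOn ℝ (Set.Icc (-1 : ℝ) 1) φ) :
    ∫ z : ℝ × ℝ, (∫ y, φ ((κh z.1 (Set.Iic y)).toReal - (κh z.2 (Set.Iic y)).toReal)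
          ∂(P.map Y)) ∂((P.map (h ∘ X)).prod (P.map (h ∘ X))) =
      ∫ x : ℝ × ℝ, (∫ y, φ ((κ x.1 (Set.Iic y)).toReal - (κ x.2 (Set.Iic y)).toReal)
          ∂(P.map Y)) ∂((P.map X).prod (P.map X)) := by
  obtain ⟨ψ, hψm, hψeq⟩ := exists_measurable_convex_ext φ hφ
  have hhX : Measurable (h ∘ X) := hh.comp hX
  haveI : IsProbabilityMeasure (P.map X) := Measure.isProbabilityMeasure_map hX.aemeasurable
  haveI : IsProbabilityMeasure (P.map (h ∘ X)) := Measure.isProbabilityMeasure_map hhX.aemeasurable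
  haveI : IsProbabilityMeasure (P.map Y) := Measure.isProbabilityMeasure_map hY.aemeasurable
  have hmem : ∀ (ξ : Kernel ℝ ℝ) [IsMarkovKernel ξ] (a b y : ℝ),
      (ξ a (Iic y)).toReal - (ξ b (Iic y)).toReal ∈ Icc (-1 : ℝ) 1 := by
    intro ξ _ a b y
    constructor
    · have h1 := toReal_prob_le_one (μ := ξ b) (Iic y)
      have h2 := ENNReal.toReal_nonneg (a := ξ a (Iic y))
      linarith
    · have h1 := toReal_prob_le_one (μ := ξ a) (Iic y)
      have h2 := ENNReal.toReal_nonneg (a := ξ b (Iic y))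
      linarith
  -- joint measurability of the kernel CDF
  have hjm : Measurable fun a : ℝ × ℝ => κh a.1 (Iic a.2) := by
    have ht : MeasurableSet {q : (ℝ × ℝ) × ℝ | q.2 ≤ q.1.2} :=
      measurableSet_le measurable_snd measurable_fst.snd
    have := Kernel.measurable_kernel_prodMk_left
      (κ := κh.comap Prod.fst measurable_fst) ht
    simp [Kernel.comap_apply] at this; exact this
  have m1 : Measurable fun q : (ℝ × ℝ) × ℝ => κh q.1.1 (Iic q.2) :=
    hjm.comp (measurable_fst.fst.prodMk measurable_snd)
  have m2 : Measurable fun q : (ℝ × ℝ) × ℝ => κh q.1.2 (Iic q.2) :=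
    hjm.comp (measurable_fst.snd.prodMk measurable_snd)
  have hFmeas : Measurable fun q : (ℝ × ℝ) × ℝ =>
      ψ ((κh q.1.1 (Iic q.2)).toReal - (κh q.1.2 (Iic q.2)).toReal) :=
    hψm.comp (m1.ennreal_toReal.sub m2.ennreal_toReal)
  set G : ℝ × ℝ → ℝ := fun z =>
    ∫ y, ψ ((κh z.1 (Iic y)).toReal - (κh z.2 (Iic y)).toReal) ∂(P.map Y) with hG
  have hGsm : StronglyMeasurable G :=
    hFmeas.stronglyMeasurable.integral_prod_right'
  -- the a.e. identification of kernels
  have hae := kernel_ae_eq P X Y hX hY h hh κ hκ κh hκh hCI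
  have hfst : ((Measure.map X P).prod (Measure.map X P)).map Prod.fst = Measure.map X P := by
    rw [Measure.map_fst_prod]; simp
  have hsnd : ((Measure.map X P).prod (Measure.map X P)).map Prod.snd = Measure.map X P := by
    rw [Measure.map_snd_prod]; simp
  have h1 : ∀ᵐ q ∂((P.map X).prod (P.map X)), κ q.1 = κh (h q.1) := by
    rw [← hfst] at hae
    exact ae_of_ae_map measurable_fst.aemeasurable hae
  have h2 : ∀ᵐ q ∂((P.map X).prod (P.map X)), κ q.2 = κh (h q.2) := by
    rw [← hsnd] at hae
    exact ae_of_ae_map measurable_snd.aemeasurable hae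
  -- product map measure identity
  have hprodmap : (P.map (h ∘ X)).prod (P.map (h ∘ X))
      = ((P.map X).prod (P.map X)).map (Prod.map h h) := by
    rw [← Measure.map_map hh hX]
    exact Measure.map_prod_map _ _ hh hh
  calc ∫ z : ℝ × ℝ, (∫ y, φ ((κh z.1 (Set.Iic y)).toReal - (κh z.2 (Set.Iic y)).toReal)
          ∂(P.map Y)) ∂((P.map (h ∘ X)).prod (P.map (h ∘ X)))
      = ∫ z : ℝ × ℝ, G z ∂((P.map (h ∘ X)).prod (P.map (h ∘ X))) := by
        refine integral_congr_ae (ae_of_all _ fun z => ?_)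
        refine integral_congr_ae (ae_of_all _ fun y => ?_)
        exact (hψeq _ (hmem κh z.1 z.2 y)).symm
    _ = ∫ z : ℝ × ℝ, G z ∂(((P.map X).prod (P.map X)).map (Prod.map h h)) := by
        rw [hprodmap]
    _ = ∫ p : ℝ × ℝ, G (Prod.map h h p) ∂((P.map X).prod (P.map X)) := by
        rw [integral_map (hh.prodMap hh).aemeasurable
          (hGsm.aestronglyMeasurable)]
    _ = ∫ p : ℝ × ℝ, (∫ y, ψ ((κ p.1 (Set.Iic y)).toReal - (κ p.2 (Set.Iic y)).toReal)
          ∂(P.map Y)) ∂((P.map X).prod (P.map X)) := by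
        refine integral_congr_ae ?_
        filter_upwards [h1, h2] with q hq1 hq2
        simp only [hG, Prod.map_apply]
        refine integral_congr_ae (ae_of_all _ fun y => ?_)
        exact congrArg ψ (by rw [hq1, hq2]; rfl)
    _ = ∫ x : ℝ × ℝ, (∫ y, φ ((κ x.1 (Set.Iic y)).toReal - (κ x.2 (Set.Iic y)).toReal)
          ∂(P.map Y)) ∂((P.map X).prod (P.map X)) := by
        refine integral_congr_ae (ae_of_all _ fun z => ?_)
        refine integral_congr_ae (ae_of_all _ fun y => ?_)
        exact hψeq _ (hmem κ z.1 z.2 y)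
end

section
/- Let (Ω, 𝒜, P) be a probability space, X, Y : Ω → ℝ random variables, φ : [−1,1] → ℝ a measurable function, and h : ℝ → ℝ a bijective Borel measurable function with Borel measurable inverse. Then ∫_{ℝ×ℝ} ∫_ℝ φ(F_{Y|h(X)=z₁}(y) − F_{Y|h(X)=z₂}(y)) dP^Y(y) d(P^{h(X)} ⊗ P^{h(X)})(z₁,z₂) = ∫_{ℝ×ℝ} ∫_ℝ φ(F_{Y|X=x₁}(y) − F_{Y|X=x₂}(y)) dP^Y(y) d(P^X ⊗ P^X)(x₁,x₂). -/
open MeasureTheory ProbabilityTheory Filter Set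
open scoped ENNReal Topology

/-- Invariance in X: For bijective Borel measurable h with Borel
measurable inverse, the sensitivity functional of the conditional distributions
of Y given h(X) equals that of Y given X. -/
theorem stmt13 {Ω : Type*} [MeasurableSpace Ω] (P : Measure Ω) [IsProbabilityMeasure P]
    (X Y : Ω → ℝ) (hX : Measurable X) (hY : Measurable Y)
    (φ : ℝ → ℝ) (hφ : Measurable φ)
    (h : ℝ → ℝ) (hbij : Function.Bijective h) (hh : Measurable h)
    (hinv : Measurable (Function.invFun h))
    (κ : Kernel ℝ ℝ) [IsMarkovKernel κ]
    (hκ : ∀ A B : Set ℝ, MeasurableSet A → MeasurableSet B →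
      P.map (fun ω => (X ω, Y ω)) (A ×ˢ B) = ∫⁻ x in A, κ x B ∂(P.map X))
    (κh : Kernel ℝ ℝ) [IsMarkovKernel κh]
    (hκh : ∀ A B : Set ℝ, MeasurableSet A → MeasurableSet B →
      P.map (fun ω => (h (X ω), Y ω)) (A ×ˢ B) = ∫⁻ z in A, κh z B ∂(P.map (h ∘ X))) :
    ∫ z : ℝ × ℝ, (∫ y, φ ((κh z.1 (Set.Iic y)).toReal - (κh z.2 (Set.Iic y)).toReal)
          ∂(P.map Y)) ∂((P.map (h ∘ X)).prod (P.map (h ∘ X))) =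
      ∫ x : ℝ × ℝ, (∫ y, φ ((κ x.1 (Set.Iic y)).toReal - (κ x.2 (Set.Iic y)).toReal)
          ∂(P.map Y)) ∂((P.map X).prod (P.map X)) := by
  haveI : IsProbabilityMeasure (P.map X) := Measure.isProbabilityMeasure_map hX.aemeasurable
  haveI : IsProbabilityMeasure (P.map Y) := Measure.isProbabilityMeasure_map hY.aemeasurable
  set μ : Measure ℝ := P.map X with hμdef
  set ρ : Measure (ℝ × ℝ) := P.map (fun ω => (X ω, Y ω)) with hρdef
  haveI : IsProbabilityMeasure ρ :=
    Measure.isProbabilityMeasure_map ((hX.prodMk hY).aemeasurable)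
  have hfst : ρ.fst = μ := Measure.fst_map_prodMk hY
  have hmaph : P.map (h ∘ X) = μ.map h := (Measure.map_map hh hX).symm
  have hleft : ∀ x, Function.invFun h (h x) = x :=
    Function.leftInverse_invFun hbij.injective
  -- ρ = μ ⊗ₘ κ
  have hrect : ∀ (κ' : Kernel ℝ ℝ), IsMarkovKernel κ' →
      (∀ A B : Set ℝ, MeasurableSet A → MeasurableSet B →
        ρ (A ×ˢ B) = ∫⁻ x in A, κ' x B ∂μ) → ρ = μ ⊗ₘ κ' := by
    intro κ' hκ' hAB
    refine ext_of_generate_finite _ generateFrom_prod.symm isPiSystem_prod ?_ ?_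
    · rintro s ⟨A, hA, B, hB, rfl⟩
      have hA' : MeasurableSet A := hA
      have hB' : MeasurableSet B := hB
      exact (hAB A B hA' hB').trans (Measure.compProd_apply_prod hA' hB').symm
    · haveI := hκ'
      simp [Measure.compProd_apply_univ]
  have hρκ : ρ = μ ⊗ₘ κ := hrect κ inferInstance (fun A B hA hB => hκ A B hA hB)
  have hρκh : ρ = μ ⊗ₘ (κh.comap h hh) := by
    refine hrect _ inferInstance (fun A B hA hB => ?_)
    have hA' : MeasurableSet (Function.invFun h ⁻¹' A) := hinv hA
    have hpre : h ⁻¹' (Function.invFun h ⁻¹' A) = A := by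
      ext x; simp [hleft x]
    have h1 : P.map (fun ω => (h (X ω), Y ω)) ((Function.invFun h ⁻¹' A) ×ˢ B)
        = ρ (A ×ˢ B) := by
      have hm : Measurable fun ω => (h (X ω), Y ω) := (hh.comp hX).prodMk hY
      rw [hρdef, Measure.map_apply hm (hA'.prod hB),
        Measure.map_apply (hX.prodMk hY) (hA.prod hB)]
      congr 1
      ext ω
      simp [hleft (X ω)]
    have h2 : ∫⁻ z in Function.invFun h ⁻¹' A, κh z B ∂(μ.map h)
        = ∫⁻ x in A, κh (h x) B ∂μ := by
      rw [setLIntegral_map hA' (κh.measurable_coe hB) hh, hpre]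
    rw [← h1, hκh _ B hA' hB, hmaph, h2]
    simp only [Kernel.comap_apply]
  -- a.e. equality of the two kernels
  have aeq : ∀ᵐ x ∂μ, κh (h x) = κ x := by
    have e1 : ∀ᵐ x ∂ρ.fst, (κh.comap h hh) x = ρ.condKernel x :=
      eq_condKernel_of_measure_eq_compProd _ (by rw [hfst]; exact hρκh)
    have e2 : ∀ᵐ x ∂ρ.fst, κ x = ρ.condKernel x :=
      eq_condKernel_of_measure_eq_compProd _ (by rw [hfst]; exact hρκ)
    rw [hfst] at e1 e2
    filter_upwards [e1, e2] with x h1 h2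
    rw [← Kernel.comap_apply κh hh x, h1, h2]
  -- measurability of the integrand
  have hjoint : Measurable fun p : ℝ × ℝ => κh p.1 (Iic p.2) := by
    have ht : MeasurableSet {q : (ℝ × ℝ) × ℝ | q.2 ≤ q.1.2} :=
      measurableSet_le measurable_snd measurable_fst.snd
    have h0 := Kernel.measurable_kernel_prodMk_left
      (κ := κh.comap (Prod.fst : ℝ × ℝ → ℝ) measurable_fst) ht
    exact h0
  have hFmeas : Measurable fun p : (ℝ × ℝ) × ℝ =>
      φ ((κh p.1.1 (Iic p.2)).toReal - (κh p.1.2 (Iic p.2)).toReal) := by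
    apply hφ.comp
    exact ((hjoint.comp (measurable_fst.fst.prodMk measurable_snd)).ennreal_toReal).sub
      ((hjoint.comp (measurable_fst.snd.prodMk measurable_snd)).ennreal_toReal)
  have hgSM : StronglyMeasurable fun z : ℝ × ℝ =>
      ∫ y, φ ((κh z.1 (Iic y)).toReal - (κh z.2 (Iic y)).toReal) ∂(P.map Y) :=
    hFmeas.stronglyMeasurable.integral_prod_right'
  -- main computation
  rw [hmaph, Measure.map_prod_map _ _ hh hh,
    integral_map (hh.prodMap hh).aemeasurable hgSM.aestronglyMeasurable]
  refine integral_congr_ae ?_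
  have h1 : ∀ᵐ p ∂(μ.prod μ), κh (h p.1) = κ p.1 :=
    Measure.quasiMeasurePreserving_fst.ae aeq
  have h2 : ∀ᵐ p ∂(μ.prod μ), κh (h p.2) = κ p.2 :=
    Measure.quasiMeasurePreserving_snd.ae aeq
  filter_upwards [h1, h2] with p e1 e2
  show (∫ y, φ ((κh (h p.1) (Iic y)).toReal - (κh (h p.2) (Iic y)).toReal) ∂(P.map Y)) = _
  rw [e1, e2]
end

section
/- Let (Ω, 𝒜, P) be a probability space, X, Y : Ω → ℝ random variables, φ : [−1,1] → ℝ a measurable function, and g : ℝ → ℝ strictly increasing. Then ∫_{ℝ×ℝ} ∫_ℝ φ(F_{g(Y)|X=x₁}(t) − F_{g(Y)|X=x₂}(t)) dP^{g(Y)}(t) d(P^X ⊗ P^X)(x₁,x₂) = ∫_{ℝ×ℝ} ∫_ℝ φ(F_{Y|X=x₁}(y) − F_{Y|X=x₂}(y)) dP^Y(y) d(P^X ⊗ P^X)(x₁,x₂). -/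
open MeasureTheory ProbabilityTheory Filter Set
open scoped ENNReal Topology

/-- Invariance in Y: For strictly increasing g, the sensitivity
functional of the conditional distributions of g(Y) given X equals that of
Y given X. -/
theorem stmt14 {Ω : Type*} [MeasurableSpace Ω] (P : Measure Ω) [IsProbabilityMeasure P]
    (X Y : Ω → ℝ) (hX : Measurable X) (hY : Measurable Y)
    (φ : ℝ → ℝ) (hφ : Measurable φ)
    (g : ℝ → ℝ) (hg : StrictMono g)
    (κ : Kernel ℝ ℝ) [IsMarkovKernel κ]
    (hκ : ∀ A B : Set ℝ, MeasurableSet A → MeasurableSet B →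
      P.map (fun ω => (X ω, Y ω)) (A ×ˢ B) = ∫⁻ x in A, κ x B ∂(P.map X))
    (κg : Kernel ℝ ℝ) [IsMarkovKernel κg]
    (hκg : ∀ A B : Set ℝ, MeasurableSet A → MeasurableSet B →
      P.map (fun ω => (X ω, g (Y ω))) (A ×ˢ B) = ∫⁻ x in A, κg x B ∂(P.map X)) :
    ∫ x : ℝ × ℝ, (∫ t, φ ((κg x.1 (Set.Iic t)).toReal - (κg x.2 (Set.Iic t)).toReal)
          ∂(P.map (g ∘ Y))) ∂((P.map X).prod (P.map X)) =
      ∫ x : ℝ × ℝ, (∫ y, φ ((κ x.1 (Set.Iic y)).toReal - (κ x.2 (Set.Iic y)).toReal)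
          ∂(P.map Y)) ∂((P.map X).prod (P.map X)) := by
  have hgm : Measurable g := hg.monotone.measurable
  set μX := P.map X with hμXdef
  set μY := P.map Y with hμYdef
  have hPM : IsProbabilityMeasure μX := Measure.isProbabilityMeasure_map hX.aemeasurable
  have hPMY : IsProbabilityMeasure μY := Measure.isProbabilityMeasure_map hY.aemeasurable
  -- P.map (g ∘ Y) = μY.map g
  have hmapg : P.map (g ∘ Y) = μY.map g := by
    rw [hμYdef, Measure.map_map hgm hY]
  -- key: for every y, for μX-a.e. x, κg x (Iic (g y)) = κ x (Iic y)
  have key : ∀ y : ℝ, ∀ᵐ x ∂μX, κg x (Iic (g y)) = κ x (Iic y) := by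
    intro y
    refine ae_eq_of_forall_setLIntegral_eq_of_sigmaFinite
      (Kernel.measurable_coe κg measurableSet_Iic)
      (Kernel.measurable_coe κ measurableSet_Iic) (fun A hA _ => ?_)
    rw [← hκg A (Iic (g y)) hA measurableSet_Iic, ← hκ A (Iic y) hA measurableSet_Iic]
    have hXgY : Measurable fun ω => (X ω, g (Y ω)) := hX.prodMk (hgm.comp hY)
    rw [Measure.map_apply hXgY (hA.prod measurableSet_Iic),
      Measure.map_apply (hX.prodMk hY) (hA.prod measurableSet_Iic)]
    congr 1
    ext ω
    simp only [Set.mem_preimage, Set.mem_prod, Set.mem_Iic]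
    exact and_congr_right fun _ => hg.le_iff_le
  -- joint measurability of (x, y) ↦ η x (Iic y)
  have hjm : ∀ (η : Kernel ℝ ℝ), IsMarkovKernel η →
      Measurable fun p : ℝ × ℝ => η p.1 (Iic p.2) := by
    intro η hη
    have ht : MeasurableSet {p : (ℝ × ℝ) × ℝ | p.2 ≤ p.1.2} :=
      measurableSet_le measurable_snd measurable_fst.snd
    exact Kernel.measurable_kernel_prodMk_left (κ := η.comap Prod.fst measurable_fst) ht
  have hjmκ := hjm κ inferInstance
  have hjmκg := hjm κg inferInstance
  have hFg : Measurable fun p : ℝ × ℝ => κg p.1 (Iic (g p.2)) :=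
    hjmκg.comp (measurable_fst.prodMk (hgm.comp measurable_snd))
  -- the bad set is null in the product measure
  set E : Set (ℝ × ℝ) := {p | κg p.1 (Iic (g p.2)) ≠ κ p.1 (Iic p.2)} with hEdef
  have hE : MeasurableSet E := by
    have : Eᶜ = {p : ℝ × ℝ | κg p.1 (Iic (g p.2)) ≤ κ p.1 (Iic p.2)} ∩
        {p : ℝ × ℝ | κ p.1 (Iic p.2) ≤ κg p.1 (Iic (g p.2))} := by
      ext p; simp [hEdef, le_antisymm_iff, and_comm]
    have hc : MeasurableSet Eᶜ := by
      rw [this]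
      exact (measurableSet_le hFg hjmκ).inter (measurableSet_le hjmκ hFg)
    simpa using hc.compl
  have hE0 : (μX.prod μY) E = 0 := by
    have hswap : (μX.prod μY) E = (μY.prod μX) (Prod.swap ⁻¹' E) := by
      rw [← Measure.prod_swap, Measure.map_apply measurable_swap hE]
    rw [hswap, Measure.measure_prod_null (measurable_swap hE)]
    refine Filter.Eventually.of_forall fun y => ?_
    have h := key y
    rw [Filter.eventually_iff, mem_ae_iff] at h
    convert h using 2
    · ext x; simp [hEdef]
    · rfl
  -- a.e. x, a.e. y equality
  have hG : ∀ᵐ x ∂μX, ∀ᵐ y ∂μY, κg x (Iic (g y)) = κ x (Iic y) := by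
    have : ∀ᵐ p ∂μX.prod μY, κg p.1 (Iic (g p.2)) = κ p.1 (Iic p.2) := by
      rw [Filter.eventually_iff, mem_ae_iff]
      convert hE0 using 2
      ext p; simp [hEdef]
    exact Measure.ae_ae_of_ae_prod this
  -- lift to pairs
  have h1 : ∀ᵐ p ∂μX.prod μX, ∀ᵐ y ∂μY, κg p.1 (Iic (g y)) = κ p.1 (Iic y) :=
    Measure.quasiMeasurePreserving_fst.tendsto_ae.eventually hG
  have h2 : ∀ᵐ p ∂μX.prod μX, ∀ᵐ y ∂μY, κg p.2 (Iic (g y)) = κ p.2 (Iic y) :=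
    Measure.quasiMeasurePreserving_snd.tendsto_ae.eventually hG
  -- measurability of the inner integrand in t
  have hmono : ∀ (η : Kernel ℝ ℝ) (x : ℝ), Measurable fun t : ℝ => η x (Iic t) := by
    intro η x
    exact Monotone.measurable fun a b hab => measure_mono (Iic_subset_Iic.mpr hab)
  refine integral_congr_ae ?_
  filter_upwards [h1, h2] with p hp1 hp2
  have hsm : AEStronglyMeasurable
      (fun t => φ ((κg p.1 (Iic t)).toReal - (κg p.2 (Iic t)).toReal)) (μY.map g) :=
    (hφ.comp (((hmono κg p.1).ennreal_toReal.sub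
      (hmono κg p.2).ennreal_toReal))).aestronglyMeasurable
  rw [hmapg, integral_map hgm.aemeasurable hsm]
  refine integral_congr_ae ?_
  filter_upwards [hp1, hp2] with y hy1 hy2
  rw [hy1, hy2]
end

section
/- Let (X,Y) and (X',Y') be bivariate random vectors on probability spaces such that Y and Y' have continuous distribution functions. Suppose that for every convex function φ₀ : ℝ → ℝ and every v ∈ (0,1), ∫_ℝ φ₀(F_{Y|X=x}(q_Y(v))) dP^X(x) ≤ ∫_ℝ φ₀(F_{Y'|X'=x'}(q_{Y'}(v))) dP^{X'}(x') whenever both integrals exist (i.e., (Y|X) is smaller than (Y'|X') in the Schur order for conditional distributions). Then for every convex function φ : [−1,1] → ℝ such that the integrals exist, ∫_{ℝ×ℝ} ∫_ℝ φ(F_{Y|X=x₁}(y) − F_{Y|X=x₂}(y)) dP^Y(y) d(P^X ⊗ P^X)(x₁,x₂) ≤ ∫_{ℝ×ℝ} ∫_ℝ φ(F_{Y'|X'=x₁}(y) − F_{Y'|X'=x₂}(y)) dP^{Y'}(y) d(P^{X'} ⊗ P^{X'})(x₁,x₂). -/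
open MeasureTheory ProbabilityTheory Filter Set
open scoped ENNReal Topology

/-- The quantile function (quasi-inverse) `q_ν(v) = inf {z : F_ν(z) ≥ v}` of a
measure `ν` on ℝ. -/
noncomputable def cdfQuantile (ν : MeasureTheory.Measure ℝ) (v : ℝ) : ℝ :=
  sInf {z : ℝ | v ≤ (ν (Set.Iic z)).toReal}

section Aux

lemma convexOn_affine (a b : ℝ) : ConvexOn ℝ Set.univ (fun x => a * x + b) := by
  refine ⟨convex_univ, fun x _ y _ p q hp hq hpq => le_of_eq ?_⟩
  simp only [smul_eq_mul]
  linear_combination b * hpq.symm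

lemma ConvexOn.continuous_univ {ψ : ℝ → ℝ} (h : ConvexOn ℝ Set.univ ψ) : Continuous ψ := by
  rw [← continuousOn_univ]
  exact h.continuousOn isOpen_univ

lemma integrable_of_bound {α : Type*} [MeasurableSpace α] {μ : Measure α} [IsFiniteMeasure μ]
    {f : α → ℝ} (hf : AEStronglyMeasurable f μ) (C : ℝ) (h : ∀ x, |f x| ≤ C) :
    Integrable f μ :=
  ⟨hf, HasFiniteIntegral.of_bounded (C := C)
    (ae_of_all _ (fun x => by simpa [Real.norm_eq_abs] using h x))⟩

variable (ν : Measure ℝ) [IsProbabilityMeasure ν]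

private lemma quantile_bddBelow {v : ℝ} (hv : 0 < v) :
    BddBelow {z : ℝ | v ≤ (ν (Iic z)).toReal} := by
  have := tendsto_cdf_atBot ν
  have h2 : ∀ᶠ z in atBot, cdf ν z < v := this.eventually_lt_const hv
  obtain ⟨z₀, hz₀⟩ := h2.exists
  refine ⟨z₀, fun z hz => ?_⟩
  by_contra hlt
  push_neg at hlt
  have : cdf ν z ≤ cdf ν z₀ := monotone_cdf ν hlt.le
  rw [mem_setOf_eq, ← measureReal_def, ← cdf_eq_real] at hz
  linarith

lemma cdfQuantile_mem {v : ℝ} (hv : v ∈ Ioo (0:ℝ) 1) :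
    v ≤ (ν (Iic (cdfQuantile ν v))).toReal := by
  have hne : {z : ℝ | v ≤ (ν (Iic z)).toReal}.Nonempty := by
    have := tendsto_cdf_atTop ν
    have h2 : ∀ᶠ z in atTop, v < cdf ν z := this.eventually_const_lt hv.2
    obtain ⟨z, hz⟩ := h2.exists
    exact ⟨z, by rw [mem_setOf_eq, ← measureReal_def, ← cdf_eq_real]; exact hz.le⟩
  have hbdd := quantile_bddBelow ν hv.1
  rw [← measureReal_def, ← cdf_eq_real]
  have key : ∀ w, cdfQuantile ν v < w → v ≤ cdf ν w := by
    intro w hw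
    obtain ⟨z, hz, hzw⟩ := (csInf_lt_iff hbdd hne).mp hw
    rw [mem_setOf_eq, ← measureReal_def, ← cdf_eq_real] at hz
    exact hz.trans (monotone_cdf ν hzw.le)
  have htend : Tendsto (cdf ν) (nhdsWithin (cdfQuantile ν v) (Ioi (cdfQuantile ν v)))
      (𝓝 (cdf ν (cdfQuantile ν v))) :=
    ((cdf ν).right_continuous _).tendsto.mono_left (nhdsWithin_mono _ Ioi_subset_Ici_self)
  refine ge_of_tendsto htend ?_
  filter_upwards [self_mem_nhdsWithin] with w hw
  exact key w hw

lemma cdfQuantile_le_iff {v z : ℝ} (hv : v ∈ Ioo (0:ℝ) 1) :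
    cdfQuantile ν v ≤ z ↔ v ≤ (ν (Iic z)).toReal := by
  constructor
  · intro h
    exact (cdfQuantile_mem ν hv).trans
      (ENNReal.toReal_mono (measure_ne_top ν _) (measure_mono (Iic_subset_Iic.mpr h)))
  · intro h
    exact csInf_le (quantile_bddBelow ν hv.1) h

lemma cdfQuantile_monotoneOn : MonotoneOn (cdfQuantile ν) (Ioo (0:ℝ) 1) := by
  intro u hu v hv huv
  rw [cdfQuantile_le_iff ν hu]
  exact le_trans huv (cdfQuantile_mem ν hv)

lemma quantile_aemeasurable : AEMeasurable (cdfQuantile ν) (volume.restrict (Ioo (0:ℝ) 1)) :=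
  aemeasurable_restrict_of_monotoneOn measurableSet_Ioo (cdfQuantile_monotoneOn ν)

instance : IsProbabilityMeasure (volume.restrict (Ioo (0:ℝ) 1)) := by
  constructor
  simp [Real.volume_Ioo]

lemma quantile_map :
    (volume.restrict (Ioo (0:ℝ) 1)).map (cdfQuantile ν) = ν := by
  have hq := quantile_aemeasurable ν
  haveI : IsProbabilityMeasure ((volume.restrict (Ioo (0:ℝ) 1)).map (cdfQuantile ν)) :=
    Measure.isProbabilityMeasure_map hq
  refine Measure.ext_of_Iic _ _ (fun z => ?_)
  rw [Measure.map_apply_of_aemeasurable hq measurableSet_Iic,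
    Measure.restrict_apply' measurableSet_Ioo]
  set c := (ν (Iic z)).toReal with hc
  have hc0 : (0:ℝ) ≤ c := ENNReal.toReal_nonneg
  have hc1 : c ≤ 1 := by
    rw [hc]
    exact ENNReal.toReal_le_of_le_ofReal zero_le_one (by simpa using prob_le_one (μ := ν) (s := Iic z))
  have hset : (cdfQuantile ν ⁻¹' Iic z) ∩ Ioo 0 1 = Iic c ∩ Ioo 0 1 := by
    ext v
    simp only [mem_inter_iff, mem_preimage, mem_Iic, mem_Ioo, and_congr_left_iff]
    intro hv
    exact cdfQuantile_le_iff ν ⟨hv.1, hv.2⟩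
  rw [hset]
  have hνz : ν (Iic z) = ENNReal.ofReal c := (ENNReal.ofReal_toReal (measure_ne_top _ _)).symm
  rw [hνz]
  rcases eq_or_lt_of_le hc1 with h1 | h1
  · have : Iic c ∩ Ioo (0:ℝ) 1 = Ioo 0 1 := by
      ext v
      simp only [mem_inter_iff, mem_Iic, mem_Ioo, and_iff_right_iff_imp]
      intro hv
      rw [h1]
      exact hv.2.le
    rw [this, Real.volume_Ioo, ← h1]
    norm_num
  · have : Iic c ∩ Ioo (0:ℝ) 1 = Ioc 0 c := by
      ext v
      simp only [mem_inter_iff, mem_Iic, mem_Ioo, mem_Ioc]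
      exact ⟨fun ⟨h2, h3, _⟩ => ⟨h3, h2⟩, fun ⟨h3, h2⟩ => ⟨h2, h3, lt_of_le_of_lt h2 h1⟩⟩
    rw [this, Real.volume_Ioc]
    simp


lemma exists_supporting_line {φ : ℝ → ℝ} (hφ : ConvexOn ℝ (Icc (-1:ℝ) 1) φ)
    {t : ℝ} (ht : t ∈ Ioo (-1:ℝ) 1) :
    ∃ s : ℝ, ∀ x ∈ Icc (-1:ℝ) 1, φ t + s * (x - t) ≤ φ x := by
  have htI : t ∈ Icc (-1:ℝ) 1 := Ioo_subset_Icc_self ht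
  set S := (fun w => (φ w - φ t) / (w - t)) '' Ioc t 1 with hS
  have hne : S.Nonempty := ⟨(φ 1 - φ t) / (1 - t), ⟨1, ⟨ht.2, le_refl 1⟩, rfl⟩⟩
  have hlb : ∀ u ∈ Ico (-1:ℝ) t, (φ t - φ u) / (t - u) ∈ lowerBounds S := by
    rintro u hu _ ⟨w, hw, rfl⟩
    exact hφ.slope_mono_adjacent ⟨hu.1, (hu.2.trans ht.2).le⟩
      ⟨(by linarith [ht.1, hw.1] : (-1:ℝ) ≤ w), hw.2⟩ hu.2 hw.1
  have hbdd : BddBelow S := ⟨(φ t - φ (-1)) / (t - (-1)), hlb (-1) ⟨le_refl _, ht.1⟩⟩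
  refine ⟨sInf S, fun x hx => ?_⟩
  rcases lt_trichotomy x t with hxt | rfl | hxt
  · have h1 : (φ t - φ x) / (t - x) ≤ sInf S := le_csInf hne (hlb x ⟨hx.1, hxt⟩)
    have hd : t - x > 0 := by linarith
    rw [div_le_iff₀ hd] at h1
    nlinarith [h1]
  · simp
  · have h2 : sInf S ≤ (φ x - φ t) / (x - t) := csInf_le hbdd ⟨x, ⟨hxt, hx.2⟩, rfl⟩
    have hd : x - t > 0 := by linarith
    rw [le_div_iff₀ hd] at h2
    nlinarith [h2]

/-- running maximum of a sequence of functions -/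
noncomputable def maxLines (L : ℕ → ℝ → ℝ) : ℕ → ℝ → ℝ
  | 0 => L 0
  | (n+1) => fun x => max (maxLines L n x) (L (n+1) x)

lemma maxLines_convexOn {L : ℕ → ℝ → ℝ} (hL : ∀ k, ConvexOn ℝ Set.univ (L k)) (n : ℕ) :
    ConvexOn ℝ Set.univ (maxLines L n) := by
  induction n with
  | zero => exact hL 0
  | succ n ih => exact ih.sup (hL (n+1))

lemma maxLines_mono {L : ℕ → ℝ → ℝ} (x : ℝ) : Monotone (fun n => maxLines L n x) := by
  refine monotone_nat_of_le_succ (fun n => ?_)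
  exact le_max_left _ _

lemma le_maxLines {L : ℕ → ℝ → ℝ} {k n : ℕ} (hkn : k ≤ n) (x : ℝ) :
    L k x ≤ maxLines L n x := by
  induction n with
  | zero => simp_all [maxLines, Nat.le_zero.mp hkn]
  | succ n ih =>
    rcases Nat.lt_or_ge k (n+1) with h | h
    · exact le_trans (ih (Nat.lt_succ_iff.mp h)) (le_max_left _ _)
    · have : k = n + 1 := le_antisymm hkn h
      subst this
      exact le_max_right _ _
  
lemma maxLines_le {L : ℕ → ℝ → ℝ} {c : ℝ} {x : ℝ} (n : ℕ) (h : ∀ k, L k x ≤ c) :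
    maxLines L n x ≤ c := by
  induction n with
  | zero => exact h 0
  | succ n ih => exact max_le ih (h (n+1))

lemma maxLines_continuous {L : ℕ → ℝ → ℝ} (hL : ∀ k, Continuous (L k)) (n : ℕ) :
    Continuous (maxLines L n) := by
  induction n with
  | zero => exact hL 0
  | succ n ih => exact ih.max (hL (n+1))

lemma convex_decomp {φ : ℝ → ℝ} (hφ : ConvexOn ℝ (Icc (-1:ℝ) 1) φ) :
    ∃ (ψ : ℕ → ℝ → ℝ) (c₁ c₂ : ℝ),
      (∀ n, ConvexOn ℝ Set.univ (ψ n)) ∧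
      (∀ n, Continuous (ψ n)) ∧
      (∀ x : ℝ, Monotone (fun n => ψ n x)) ∧
      (∀ n, ∀ t ∈ Icc (-1:ℝ) 1, ψ n t ≤ φ t) ∧
      (∃ Lb : ℝ, ∀ n, ∀ t ∈ Icc (-1:ℝ) 1, Lb ≤ ψ n t) ∧
      0 ≤ c₁ ∧ 0 ≤ c₂ ∧
      (∀ t ∈ Icc (-1:ℝ) 1, Tendsto (fun n => ψ n t) atTop
        (𝓝 (φ t - (if t = 1 then c₁ else 0) - (if t = -1 then c₂ else 0)))) := by
  have h0 : (0:ℝ) ∈ Ioo (-1:ℝ) 1 := by norm_num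
  set Cub := max (φ (-1)) (φ 1) with hCub
  have hub : ∀ t ∈ Icc (-1:ℝ) 1, φ t ≤ Cub := by
    intro t ht
    have hmem1 : (-1:ℝ) ∈ Icc (-1:ℝ) 1 := by norm_num
    have hmem2 : (1:ℝ) ∈ Icc (-1:ℝ) 1 := by norm_num
    have ha : (0:ℝ) ≤ (1-t)/2 := by linarith [ht.2]
    have hb : (0:ℝ) ≤ (1+t)/2 := by linarith [ht.1]
    have hab : (1-t)/2 + (1+t)/2 = (1:ℝ) := by ring
    have key := hφ.2 hmem1 hmem2 ha hb hab
    simp only [smul_eq_mul] at key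
    have harg : (1-t)/2 * (-1) + (1+t)/2 * 1 = t := by ring
    rw [harg] at key
    nlinarith [le_max_left (φ (-1)) (φ 1), le_max_right (φ (-1)) (φ 1)]
  set Lb := 2 * φ 0 - Cub with hLbdef
  have hlb : ∀ t ∈ Icc (-1:ℝ) 1, Lb ≤ φ t := by
    intro t ht
    have hmemt : t ∈ Icc (-1:ℝ) 1 := ht
    have hmemnt : -t ∈ Icc (-1:ℝ) 1 := by constructor <;> [linarith [ht.2]; linarith [ht.1]]
    have key := hφ.2 hmemt hmemnt (by norm_num : (0:ℝ) ≤ 1/2) (by norm_num : (0:ℝ) ≤ 1/2)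
      (by norm_num : (1:ℝ)/2 + 1/2 = 1)
    simp only [smul_eq_mul] at key
    have harg : 1/2 * t + 1/2 * (-t) = (0:ℝ) := by ring
    rw [harg] at key
    have := hub (-t) hmemnt
    simp only [hLbdef]
    linarith
  have hLbCub : Lb ≤ Cub := by
    have := hlb 0 (by norm_num)
    have := hub 0 (by norm_num)
    linarith
  -- points and supporting lines
  set e : ℕ → ℝ := fun n => (((Denumerable.eqv ℚ).symm n : ℚ) : ℝ) with he
  set pt : ℕ → ℝ := fun n => if e n ∈ Ioo (-1:ℝ) 1 then e n else 0 with hptdef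
  have hpt : ∀ n, pt n ∈ Ioo (-1:ℝ) 1 := by
    intro n
    simp only [hptdef]
    split_ifs with h
    · exact h
    · exact h0
  have hptq : ∀ q : ℚ, (q:ℝ) ∈ Ioo (-1:ℝ) 1 → pt ((Denumerable.eqv ℚ) q) = (q:ℝ) := by
    intro q hq
    have h1 : e ((Denumerable.eqv ℚ) q) = (q:ℝ) := by
      show (((Denumerable.eqv ℚ).symm ((Denumerable.eqv ℚ) q) : ℚ) : ℝ) = (q:ℝ)
      rw [Equiv.symm_apply_apply]
    simp only [hptdef, h1]
    rw [if_pos hq]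
  choose s hs using fun n => exists_supporting_line hφ (hpt n)
  set L : ℕ → ℝ → ℝ := fun n x => φ (pt n) + s n * (x - pt n) with hLdef
  have hLconv : ∀ n, ConvexOn ℝ Set.univ (L n) := by
    intro n
    have h := convexOn_affine (s n) (φ (pt n) - s n * pt n)
    have heq : L n = fun x => s n * x + (φ (pt n) - s n * pt n) := by
      funext x; simp only [hLdef]; ring
    rw [heq]; exact h
  have hLcont : ∀ n, Continuous (L n) := by
    intro n
    simp only [hLdef]
    exact continuous_const.add (continuous_const.mul (continuous_id.sub continuous_const))
  have hLle : ∀ n, ∀ t ∈ Icc (-1:ℝ) 1, L n t ≤ φ t := fun n t ht => hs n t ht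
  set ψ := maxLines L with hψdef
  have hψle : ∀ n, ∀ t ∈ Icc (-1:ℝ) 1, ψ n t ≤ φ t :=
    fun n t ht => maxLines_le n (fun k => hLle k t ht)
  have hψlb : ∀ n, ∀ t ∈ Icc (-1:ℝ) 1, φ (pt 0) - |s 0| * 2 ≤ ψ n t := by
    intro n t ht
    refine le_trans ?_ (le_maxLines (Nat.zero_le n) t)
    simp only [hLdef]
    have h1 : |t - pt 0| ≤ 2 := by
      have h2 := hpt 0
      rw [abs_le]
      constructor
      · linarith [ht.1, ht.2, h2.1, h2.2]
      · linarith [ht.1, ht.2, h2.1, h2.2]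
    have h3 : |s 0 * (t - pt 0)| ≤ |s 0| * 2 := by
      rw [abs_mul]
      exact mul_le_mul_of_nonneg_left h1 (abs_nonneg _)
    have h4 := neg_abs_le (s 0 * (t - pt 0))
    linarith
  have hbddt : ∀ t ∈ Icc (-1:ℝ) 1, BddAbove (range fun n => ψ n t) := by
    intro t ht
    exact ⟨φ t, by rintro _ ⟨n, rfl⟩; exact hψle n t ht⟩
  have hmono : ∀ x : ℝ, Monotone (fun n => ψ n x) := fun x => maxLines_mono x
  set c₁ := φ 1 - (⨆ n, ψ n 1) with hc₁
  set c₂ := φ (-1) - (⨆ n, ψ n (-1)) with hc₂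
  have hmem1 : (1:ℝ) ∈ Icc (-1:ℝ) 1 := by norm_num
  have hmemm1 : (-1:ℝ) ∈ Icc (-1:ℝ) 1 := by norm_num
  have hc₁0 : 0 ≤ c₁ := by
    have : (⨆ n, ψ n 1) ≤ φ 1 := ciSup_le (fun n => hψle n 1 hmem1)
    simp only [hc₁]; linarith
  have hc₂0 : 0 ≤ c₂ := by
    have : (⨆ n, ψ n (-1)) ≤ φ (-1) := ciSup_le (fun n => hψle n (-1) hmemm1)
    simp only [hc₂]; linarith
  refine ⟨ψ, c₁, c₂, maxLines_convexOn hLconv, maxLines_continuous hLcont, hmono,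
    hψle, ⟨φ (pt 0) - |s 0| * 2, hψlb⟩, hc₁0, hc₂0, ?_⟩
  intro t ht
  by_cases ht1 : t = 1
  · subst ht1
    rw [if_pos rfl, if_neg (by norm_num : ¬(1:ℝ) = -1)]
    have heq2 : φ 1 - c₁ - 0 = ⨆ n, ψ n 1 := by simp only [hc₁]; ring
    rw [heq2]
    exact tendsto_atTop_ciSup (hmono 1) (hbddt 1 hmem1)
  by_cases ht2 : t = -1
  · subst ht2
    rw [if_neg ht1, if_pos rfl]
    have heq2 : φ (-1) - 0 - c₂ = ⨆ n, ψ n (-1) := by simp only [hc₂]; ring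
    rw [heq2]
    exact tendsto_atTop_ciSup (hmono (-1)) (hbddt (-1) hmemm1)
  -- interior case
  have htIoo : t ∈ Ioo (-1:ℝ) 1 := ⟨lt_of_le_of_ne ht.1 (Ne.symm ht2), lt_of_le_of_ne ht.2 ht1⟩
  simp only [if_neg ht1, if_neg ht2, sub_zero]
  have htendsup : Tendsto (fun n => ψ n t) atTop (𝓝 (⨆ n, ψ n t)) :=
    tendsto_atTop_ciSup (hmono t) (hbddt t ht)
  suffices hsup : (⨆ n, ψ n t) = φ t by rw [← hsup]; exact htendsup
  refine le_antisymm (ciSup_le (fun n => hψle n t ht)) ?_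
  by_contra hlt
  push_neg at hlt
  set l := ⨆ n, ψ n t with hl
  set ε := φ t - l with hε
  have hεpos : 0 < ε := by simp only [hε]; linarith
  -- continuity of φ at t
  have hcont : ContinuousOn φ (Ioo (-1:ℝ) 1) :=
    (hφ.subset Ioo_subset_Icc_self (convex_Ioo _ _)).continuousOn isOpen_Ioo
  have hct : ContinuousAt φ t := hcont.continuousAt (isOpen_Ioo.mem_nhds htIoo)
  obtain ⟨δ₁, hδ₁pos, hδ₁⟩ := Metric.continuousAt_iff.mp hct (ε/2) (by positivity)
  set δ := min δ₁ ((t+1)/2) with hδdef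
  have hδpos : 0 < δ := lt_min hδ₁pos (by linarith [htIoo.1])
  set u := t - δ with hu
  have huIcc : u ∈ Icc (-1:ℝ) 1 := by
    constructor
    · have : δ ≤ (t+1)/2 := min_le_right _ _
      simp only [hu]; linarith [htIoo.1]
    · simp only [hu]; linarith [htIoo.2, hδpos]
  set B := Cub - Lb with hB
  have hB0 : 0 ≤ B := by simp only [hB]; linarith
  set M := B / (δ/2) with hM
  have hM0 : 0 ≤ M := div_nonneg hB0 (by linarith)
  set η := min (δ/2) (ε/(2*(M+1))) with hη
  have hηpos : 0 < η := lt_min (by linarith) (by positivity)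
  obtain ⟨q, hq1, hq2⟩ := exists_rat_btwn (show t - η < t by linarith)
  have hqu : u < (q:ℝ) := by
    have : η ≤ δ/2 := min_le_left _ _
    simp only [hu]; linarith
  have hqIoo : (q:ℝ) ∈ Ioo (-1:ℝ) 1 := by
    constructor
    · have h2 : (-1:ℝ) ≤ u := huIcc.1
      linarith
    · linarith [htIoo.2]
  set k := (Denumerable.eqv ℚ) q with hk
  have hptk : pt k = (q:ℝ) := hptq q hqIoo
  -- lower bound on s k
  have hsupp := hs k u huIcc
  rw [hptk] at hsupp
  have hquδ : δ/2 ≤ (q:ℝ) - u := by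
    have : η ≤ δ/2 := min_le_left _ _
    simp only [hu]; linarith
  have hφq_lb : Lb ≤ φ (q:ℝ) := hlb _ (Ioo_subset_Icc_self hqIoo)
  have hφu_ub : φ u ≤ Cub := hub u huIcc
  have hA : -B ≤ s k * ((q:ℝ) - u) := by
    have : φ (q:ℝ) + s k * (u - (q:ℝ)) ≤ φ u := hsupp
    have h5 : s k * ((q:ℝ) - u) = -(s k * (u - (q:ℝ))) := by ring
    rw [h5]
    simp only [hB]
    linarith
  have hsk : -(M+1) ≤ s k := by
    rcases le_or_gt 0 (s k) with h | h
    · linarith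
    · have h6 : s k * ((q:ℝ) - u) ≤ s k * (δ/2) := by
        apply mul_le_mul_of_nonpos_left hquδ h.le
      have h7 : -B ≤ s k * (δ/2) := le_trans hA h6
      have h8 : -B / (δ/2) ≤ s k := by
        rw [div_le_iff₀ (by linarith : (0:ℝ) < δ/2)]
        linarith
      have h9 : -B / (δ/2) = -M := by simp only [hM]; ring
      linarith [h8, h9.symm.le]
  -- conclude
  have hLkt : φ (q:ℝ) + s k * (t - (q:ℝ)) ≤ ψ k t := by
    have h16 := le_maxLines (L := L) (le_refl k) t
    simp only [hLdef, hptk] at h16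
    exact h16
  have htq0 : 0 < t - (q:ℝ) := by linarith
  have htqη : t - (q:ℝ) < η := by linarith
  have hterm : -(ε/2) ≤ s k * (t - (q:ℝ)) := by
    have h10 : -(M+1) * (t - (q:ℝ)) ≤ s k * (t - (q:ℝ)) :=
      mul_le_mul_of_nonneg_right hsk htq0.le
    have h11 : -(M+1) * η ≤ -(M+1) * (t - (q:ℝ)) := by
      have h15 := mul_le_mul_of_nonneg_left htqη.le (by linarith : (0:ℝ) ≤ M+1)
      linarith
    have h12 : -(ε/2) ≤ -(M+1) * η := by
      have hη2 : η ≤ ε/(2*(M+1)) := min_le_right _ _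
      have h13 : (M+1) * η ≤ (M+1) * (ε/(2*(M+1))) :=
        mul_le_mul_of_nonneg_left hη2 (by linarith)
      have h14 : (M+1) * (ε/(2*(M+1))) = ε/2 := by
        field_simp
      linarith
    linarith
  have hφq : φ t - ε/2 < φ (q:ℝ) := by
    have hdist : dist (q:ℝ) t < δ₁ := by
      rw [Real.dist_eq, abs_lt]
      constructor
      · have hδδ₁ : δ ≤ δ₁ := min_le_left _ _
        have hηδ : η ≤ δ/2 := min_le_left _ _
        linarith
      · linarith
    have := hδ₁ hdist
    rw [Real.dist_eq, abs_lt] at this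
    linarith [this.1]
  have hfinal : φ t - ε < ψ k t := by
    have : φ t - ε < φ (q:ℝ) + s k * (t - (q:ℝ)) := by linarith
    linarith [hLkt]
  have : ψ k t ≤ l := le_ciSup (hbddt t ht) k
  simp only [hε] at hfinal
  linarith

lemma convexOn_Icc_le {φ : ℝ → ℝ} (hφ : ConvexOn ℝ (Icc (-1:ℝ) 1) φ) :
    ∀ t ∈ Icc (-1:ℝ) 1, φ t ≤ max (φ (-1)) (φ 1) := by
  intro t ht
  have hmem1 : (-1:ℝ) ∈ Icc (-1:ℝ) 1 := by norm_num
  have hmem2 : (1:ℝ) ∈ Icc (-1:ℝ) 1 := by norm_num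
  have ha : (0:ℝ) ≤ (1-t)/2 := by linarith [ht.2]
  have hb : (0:ℝ) ≤ (1+t)/2 := by linarith [ht.1]
  have hab : (1-t)/2 + (1+t)/2 = (1:ℝ) := by ring
  have key := hφ.2 hmem1 hmem2 ha hb hab
  simp only [smul_eq_mul] at key
  have harg : (1-t)/2 * (-1) + (1+t)/2 * 1 = t := by ring
  rw [harg] at key
  nlinarith [le_max_left (φ (-1)) (φ 1), le_max_right (φ (-1)) (φ 1)]

lemma convexOn_Icc_ge {φ : ℝ → ℝ} (hφ : ConvexOn ℝ (Icc (-1:ℝ) 1) φ) :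
    ∀ t ∈ Icc (-1:ℝ) 1, 2 * φ 0 - max (φ (-1)) (φ 1) ≤ φ t := by
  intro t ht
  have hmemnt : -t ∈ Icc (-1:ℝ) 1 := by
    constructor
    · linarith [ht.2]
    · linarith [ht.1]
  have key := hφ.2 ht hmemnt (by norm_num : (0:ℝ) ≤ 1/2) (by norm_num : (0:ℝ) ≤ 1/2)
    (by norm_num : (1:ℝ)/2 + 1/2 = 1)
  simp only [smul_eq_mul] at key
  have harg : 1/2 * t + 1/2 * (-t) = (0:ℝ) := by ring
  rw [harg] at key
  have := convexOn_Icc_le hφ (-t) hmemnt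
  linarith

lemma convexOn_comp_measurable {φ : ℝ → ℝ} (hφ : ConvexOn ℝ (Icc (-1:ℝ) 1) φ)
    {α : Type*} [MeasurableSpace α] {Δ : α → ℝ} (hΔ : Measurable Δ)
    (hmem : ∀ p, Δ p ∈ Icc (-1:ℝ) 1) : Measurable fun p => φ (Δ p) := by
  obtain ⟨ψ, c₁, c₂, hconv, hcont, hmono, hle, ⟨Lb, hlb⟩, hc₁, hc₂, htend⟩ := convex_decomp hφ
  have hLmeas : Measurable (fun p => φ (Δ p) - (if Δ p = 1 then c₁ else 0)
      - (if Δ p = -1 then c₂ else 0)) :=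
    measurable_of_tendsto_metrizable (fun n => (hcont n).measurable.comp hΔ)
      (tendsto_pi_nhds.mpr (fun p => htend (Δ p) (hmem p)))
  have hi1 : Measurable (fun p => if Δ p = 1 then c₁ else (0:ℝ)) :=
    Measurable.ite (hΔ (measurableSet_singleton 1)) measurable_const measurable_const
  have hi2 : Measurable (fun p => if Δ p = -1 then c₂ else (0:ℝ)) :=
    Measurable.ite (hΔ (measurableSet_singleton (-1))) measurable_const measurable_const
  have heq : (fun p => φ (Δ p)) = fun p => (φ (Δ p) - (if Δ p = 1 then c₁ else 0)
      - (if Δ p = -1 then c₂ else 0)) + (if Δ p = 1 then c₁ else 0)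
      + (if Δ p = -1 then c₂ else 0) := by
    funext p; ring
  rw [heq]
  exact (hLmeas.add hi1).add hi2

lemma integrable_comp_sub {ψ : ℝ → ℝ} (hψc : Continuous ψ) {α : Type*} [MeasurableSpace α]
    (ρ : Measure α) [IsFiniteMeasure ρ] {w : α → ℝ} (hw : Measurable w)
    (hw01 : ∀ x, w x ∈ Icc (0:ℝ) 1) (c : ℝ) :
    Integrable (fun x => ψ (w x - c)) ρ := by
  obtain ⟨C, hC⟩ := (isCompact_Icc (a := -(1+|c|)) (b := 1+|c|)).exists_bound_of_continuousOn
    hψc.continuousOn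
  refine integrable_of_bound
    ((hψc.measurable.comp (hw.sub measurable_const)).aestronglyMeasurable) C (fun x => ?_)
  have h1 := (hw01 x).1
  have h2 := (hw01 x).2
  have hmem : w x - c ∈ Icc (-(1+|c|)) (1+|c|) := by
    constructor
    · linarith [neg_abs_le c, le_abs_self c, abs_nonneg c]
    · linarith [neg_abs_le c, le_abs_self c, abs_nonneg c]
  simpa [Real.norm_eq_abs] using hC (w x - c) hmem

section Core

variable {μ μ' : Measure ℝ} [IsProbabilityMeasure μ] [IsProbabilityMeasure μ']

lemma schur_pair_step {g g' : ℝ → ℝ} (hg : Measurable g) (hg' : Measurable g')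
    (hg01 : ∀ x, g x ∈ Icc (0:ℝ) 1) (hg'01 : ∀ x, g' x ∈ Icc (0:ℝ) 1)
    (hS : ∀ ψ₀ : ℝ → ℝ, ConvexOn ℝ Set.univ ψ₀ → ∫ x, ψ₀ (g x) ∂μ ≤ ∫ x, ψ₀ (g' x) ∂μ')
    {ψ : ℝ → ℝ} (hψ : ConvexOn ℝ Set.univ ψ) :
    ∫ p : ℝ × ℝ, ψ (g p.1 - g p.2) ∂(μ.prod μ) ≤
      ∫ p : ℝ × ℝ, ψ (g' p.1 - g' p.2) ∂(μ'.prod μ') := by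
  have hψc : Continuous ψ := hψ.continuous_univ
  have hshift : ∀ c : ℝ, ConvexOn ℝ Set.univ (fun t => ψ (t - c)) := by
    intro c
    refine ⟨convex_univ, fun x _ y _ a b ha hb hab => ?_⟩
    simp only [smul_eq_mul]
    have harg : a * x + b * y - c = a * (x - c) + b * (y - c) := by linear_combination c * hab
    rw [harg]
    have := hψ.2 (mem_univ (x - c)) (mem_univ (y - c)) ha hb hab
    simpa using this
  set Ψ : ℝ → ℝ := fun c => ∫ x, ψ (g' x - c) ∂μ' with hΨdef
  have hΨconv : ConvexOn ℝ Set.univ Ψ := by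
    refine ⟨convex_univ, fun x _ y _ a b ha hb hab => ?_⟩
    simp only [hΨdef, smul_eq_mul]
    have heq : ∀ z, ψ (g' z - (a * x + b * y)) = ψ (a * (g' z - x) + b * (g' z - y)) := by
      intro z; congr 1; linear_combination (g' z) * hab.symm
    have hintx : Integrable (fun z => ψ (g' z - x)) μ' :=
      integrable_comp_sub hψc μ' hg' hg'01 x
    have hinty : Integrable (fun z => ψ (g' z - y)) μ' :=
      integrable_comp_sub hψc μ' hg' hg'01 y
    have hint2 : Integrable (fun z => a * ψ (g' z - x) + b * ψ (g' z - y)) μ' :=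
      (hintx.const_mul a).add (hinty.const_mul b)
    have hint1 : Integrable (fun z => ψ (a * (g' z - x) + b * (g' z - y))) μ' :=
      (integrable_comp_sub hψc μ' hg' hg'01 (a*x+b*y)).congr (ae_of_all _ (fun z => heq z))
    calc ∫ z, ψ (g' z - (a * x + b * y)) ∂μ'
        = ∫ z, ψ (a * (g' z - x) + b * (g' z - y)) ∂μ' :=
          integral_congr_ae (ae_of_all _ heq)
      _ ≤ ∫ z, (a * ψ (g' z - x) + b * ψ (g' z - y)) ∂μ' := by
          refine integral_mono hint1 hint2 (fun z => ?_)
          have := hψ.2 (mem_univ (g' z - x)) (mem_univ (g' z - y)) ha hb hab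
          simpa using this
      _ = a * ∫ z, ψ (g' z - x) ∂μ' + b * ∫ z, ψ (g' z - y) ∂μ' := by
          rw [integral_add (hintx.const_mul a) (hinty.const_mul b),
            integral_const_mul, integral_const_mul]
  -- boundedness of the product integrands
  obtain ⟨C, hC⟩ := (isCompact_Icc (a := (-1:ℝ)) (b := 1)).exists_bound_of_continuousOn
    hψc.continuousOn
  have hmemg : ∀ p : ℝ × ℝ, g p.1 - g p.2 ∈ Icc (-1:ℝ) 1 := fun p =>
    ⟨by linarith [(hg01 p.1).1, (hg01 p.2).2], by linarith [(hg01 p.1).2, (hg01 p.2).1]⟩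
  have hmemg' : ∀ p : ℝ × ℝ, g' p.1 - g' p.2 ∈ Icc (-1:ℝ) 1 := fun p =>
    ⟨by linarith [(hg'01 p.1).1, (hg'01 p.2).2], by linarith [(hg'01 p.1).2, (hg'01 p.2).1]⟩
  have hInt : Integrable (fun p : ℝ × ℝ => ψ (g p.1 - g p.2)) (μ.prod μ) := by
    refine integrable_of_bound
      ((hψc.measurable.comp ((hg.comp measurable_fst).sub (hg.comp measurable_snd))).aestronglyMeasurable)
      C (fun p => ?_)
    simpa [Real.norm_eq_abs] using hC _ (hmemg p)
  have hInt' : Integrable (fun p : ℝ × ℝ => ψ (g' p.1 - g' p.2)) (μ'.prod μ') := by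
    refine integrable_of_bound
      ((hψc.measurable.comp ((hg'.comp measurable_fst).sub (hg'.comp measurable_snd))).aestronglyMeasurable)
      C (fun p => ?_)
    simpa [Real.norm_eq_abs] using hC _ (hmemg' p)
  have hIA : Integrable (fun x₂ => ∫ x₁, ψ (g x₁ - g x₂) ∂μ) μ :=
    hInt.integral_prod_right
  have hIB : Integrable (fun x₂ => Ψ (g x₂)) μ := by
    refine integrable_of_bound ((hΨconv.continuous_univ.measurable.comp hg).aestronglyMeasurable)
      |C| (fun x₂ => ?_)
    have hb : ∀ x, ‖ψ (g' x - g x₂)‖ ≤ |C| := by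
      intro x
      have hmem : g' x - g x₂ ∈ Icc (-1:ℝ) 1 :=
        ⟨by linarith [(hg'01 x).1, (hg01 x₂).2], by linarith [(hg'01 x).2, (hg01 x₂).1]⟩
      exact (hC _ hmem).trans (le_abs_self C)
    have := norm_integral_le_of_norm_le_const (μ := μ') (ae_of_all _ hb)
    simp only [measureReal_def, measure_univ, ENNReal.toReal_one, mul_one] at this
    simpa [Real.norm_eq_abs, hΨdef] using this
  calc ∫ p : ℝ × ℝ, ψ (g p.1 - g p.2) ∂(μ.prod μ)
      = ∫ x₂, ∫ x₁, ψ (g x₁ - g x₂) ∂μ ∂μ := integral_prod_symm _ hInt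
    _ ≤ ∫ x₂, Ψ (g x₂) ∂μ := by
        refine integral_mono hIA hIB (fun x₂ => ?_)
        exact hS (fun t => ψ (t - g x₂)) (hshift (g x₂))
    _ ≤ ∫ x₂, Ψ (g' x₂) ∂μ' := hS Ψ hΨconv
    _ = ∫ x₂, ∫ x₁, ψ (g' x₁ - g' x₂) ∂μ' ∂μ' := rfl
    _ = ∫ p : ℝ × ℝ, ψ (g' p.1 - g' p.2) ∂(μ'.prod μ') := (integral_prod_symm _ hInt').symm

end Core
section Core2

variable {μ μ' : Measure ℝ} [IsProbabilityMeasure μ] [IsProbabilityMeasure μ']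

lemma mass_one_le {g g' : ℝ → ℝ} (hg : Measurable g) (hg' : Measurable g')
    (hg01 : ∀ x, g x ∈ Icc (0:ℝ) 1) (hg'01 : ∀ x, g' x ∈ Icc (0:ℝ) 1)
    (hS : ∀ ψ₀ : ℝ → ℝ, ConvexOn ℝ Set.univ ψ₀ → ∫ x, ψ₀ (g x) ∂μ ≤ ∫ x, ψ₀ (g' x) ∂μ') :
    (μ (g ⁻¹' {1})).toReal ≤ (μ' (g' ⁻¹' {1})).toReal := by
  set A : ℕ → Set ℝ := fun n => {x | 1 - 1/((n:ℝ)+1) < g' x} with hA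
  have key : ∀ n : ℕ, (μ (g ⁻¹' {1})).toReal ≤ (μ' (A n)).toReal := by
    intro n
    set ε : ℝ := 1/((n:ℝ)+1) with hεdef
    have hε : 0 < ε := by positivity
    set ψ : ℝ → ℝ := fun t => max 0 ((1/ε) * t + ((ε-1)/ε)) with hψdef
    have hψconv : ConvexOn ℝ Set.univ ψ :=
      (convexOn_const 0 convex_univ).sup (convexOn_affine _ _)
    have hψcont : Continuous ψ := hψconv.continuous_univ
    have hψ1 : ψ 1 = 1 := by
      simp only [hψdef]
      have : (1/ε) * 1 + (ε-1)/ε = 1 := by field_simp; ring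
      rw [this]
      norm_num
    have hgmeas : Measurable fun x => ψ (g x) := hψcont.measurable.comp hg
    have hg'meas : Measurable fun x => ψ (g' x) := hψcont.measurable.comp hg'
    have hψ_bd : ∀ t ∈ Icc (0:ℝ) 1, |ψ t| ≤ 1 := by
      intro t ht
      rw [abs_le]
      constructor
      · simp only [hψdef]
        exact le_trans (by norm_num : (-1:ℝ) ≤ 0) (le_max_left _ _)
      · simp only [hψdef]
        refine max_le (by norm_num) ?_
        have h15 : (1/ε) * t + (ε-1)/ε = (t - 1)/ε + 1 := by field_simp; ring
        rw [h15]
        have : (t-1)/ε ≤ 0 := div_nonpos_of_nonpos_of_nonneg (by linarith [ht.2]) hε.le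
        linarith
    have hIg : Integrable (fun x => ψ (g x)) μ :=
      integrable_of_bound hgmeas.aestronglyMeasurable 1 (fun x => hψ_bd _ (hg01 x))
    have hIg' : Integrable (fun x => ψ (g' x)) μ' :=
      integrable_of_bound hg'meas.aestronglyMeasurable 1 (fun x => hψ_bd _ (hg'01 x))
    have hset : MeasurableSet (g ⁻¹' {1}) := hg (measurableSet_singleton 1)
    have hsetA : MeasurableSet (A n) := measurableSet_lt measurable_const hg'
    have step1 : (μ (g ⁻¹' {1})).toReal ≤ ∫ x, ψ (g x) ∂μ := by
      have hind : ∫ x, Set.indicator (g ⁻¹' {1}) (fun _ => (1:ℝ)) x ∂μ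
          = (μ (g ⁻¹' {1})).toReal := by
        rw [integral_indicator_const (1:ℝ) hset]; simp [measureReal_def]
      rw [← hind]
      refine integral_mono ((integrable_const (1:ℝ)).indicator hset) hIg (fun x => ?_)
      by_cases hx : g x = 1
      · have hmem : x ∈ g ⁻¹' {1} := hx
        rw [Set.indicator_of_mem hmem, hx, hψ1]
      · have hmem : x ∉ g ⁻¹' {1} := hx
        rw [Set.indicator_of_notMem hmem]
        simp only [hψdef]
        exact le_max_left _ _
    have step3 : ∫ x, ψ (g' x) ∂μ' ≤ (μ' (A n)).toReal := by
      have hind : ∫ x, Set.indicator (A n) (fun _ => (1:ℝ)) x ∂μ'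
          = (μ' (A n)).toReal := by
        rw [integral_indicator_const (1:ℝ) hsetA]; simp [measureReal_def]
      rw [← hind]
      refine integral_mono hIg' ((integrable_const (1:ℝ)).indicator hsetA) (fun x => ?_)
      by_cases hx : 1 - ε < g' x
      · have hmem : x ∈ A n := hx
        rw [Set.indicator_of_mem hmem]
        exact abs_le.mp (hψ_bd _ (hg'01 x)) |>.2
      · have hmem : x ∉ A n := hx
        push_neg at hx
        rw [Set.indicator_of_notMem hmem]
        simp only [hψdef]
        refine max_le (le_refl 0) ?_
        have h15 : (1/ε) * g' x + (ε-1)/ε = (g' x - (1 - ε))/ε := by field_simp; ring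
        rw [h15]
        exact div_nonpos_of_nonpos_of_nonneg (by linarith) hε.le
    exact le_trans step1 (le_trans (hS ψ hψconv) step3)
  have hAanti : Antitone A := by
    intro n m hnm x hx
    simp only [hA, mem_setOf_eq] at hx ⊢
    have h1 : 1/((m:ℝ)+1) ≤ 1/((n:ℝ)+1) := by
      apply one_div_le_one_div_of_le (by positivity)
      exact_mod_cast by omega
    linarith
  have hiInter : ⋂ n, A n = g' ⁻¹' {1} := by
    ext x
    simp only [mem_iInter, hA, mem_setOf_eq, mem_preimage, mem_singleton_iff]
    constructor
    · intro h
      by_contra hne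
      have hlt : g' x < 1 := lt_of_le_of_ne (hg'01 x).2 hne
      obtain ⟨n, hn⟩ := exists_nat_one_div_lt (by linarith : 0 < 1 - g' x)
      have := h n
      linarith
    · intro h n
      rw [h]
      have : 0 < 1/((n:ℝ)+1) := by positivity
      linarith
  have htendE : Tendsto (fun n => μ' (A n)) atTop (𝓝 (μ' (g' ⁻¹' {1}))) := by
    have := tendsto_measure_iInter_atTop (μ := μ')
      (fun n => (measurableSet_lt measurable_const hg').nullMeasurableSet) hAanti
      ⟨0, measure_ne_top _ _⟩
    rwa [hiInter] at this
  have htend : Tendsto (fun n => (μ' (A n)).toReal) atTop (𝓝 (μ' (g' ⁻¹' {1})).toReal) :=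
    (ENNReal.tendsto_toReal (measure_ne_top _ _)).comp htendE
  exact ge_of_tendsto' htend key

lemma mass_zero_le {g g' : ℝ → ℝ} (hg : Measurable g) (hg' : Measurable g')
    (hg01 : ∀ x, g x ∈ Icc (0:ℝ) 1) (hg'01 : ∀ x, g' x ∈ Icc (0:ℝ) 1)
    (hS : ∀ ψ₀ : ℝ → ℝ, ConvexOn ℝ Set.univ ψ₀ → ∫ x, ψ₀ (g x) ∂μ ≤ ∫ x, ψ₀ (g' x) ∂μ') :
    (μ (g ⁻¹' {0})).toReal ≤ (μ' (g' ⁻¹' {0})).toReal := by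
  set A : ℕ → Set ℝ := fun n => {x | g' x < 1/((n:ℝ)+1)} with hA
  have key : ∀ n : ℕ, (μ (g ⁻¹' {0})).toReal ≤ (μ' (A n)).toReal := by
    intro n
    set ε : ℝ := 1/((n:ℝ)+1) with hεdef
    have hε : 0 < ε := by positivity
    set ψ : ℝ → ℝ := fun t => max 0 ((-(1/ε)) * t + 1) with hψdef
    have hψconv : ConvexOn ℝ Set.univ ψ :=
      (convexOn_const 0 convex_univ).sup (convexOn_affine _ _)
    have hψcont : Continuous ψ := hψconv.continuous_univ
    have hψ0 : ψ 0 = 1 := by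
      simp only [hψdef]
      norm_num
    have hgmeas : Measurable fun x => ψ (g x) := hψcont.measurable.comp hg
    have hg'meas : Measurable fun x => ψ (g' x) := hψcont.measurable.comp hg'
    have hψ_bd : ∀ t ∈ Icc (0:ℝ) 1, |ψ t| ≤ 1 := by
      intro t ht
      rw [abs_le]
      constructor
      · simp only [hψdef]
        exact le_trans (by norm_num : (-1:ℝ) ≤ 0) (le_max_left _ _)
      · simp only [hψdef]
        refine max_le (by norm_num) ?_
        have : (0:ℝ) ≤ (1/ε) * t := mul_nonneg (by positivity) ht.1
        linarith
    have hIg : Integrable (fun x => ψ (g x)) μ :=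
      integrable_of_bound hgmeas.aestronglyMeasurable 1 (fun x => hψ_bd _ (hg01 x))
    have hIg' : Integrable (fun x => ψ (g' x)) μ' :=
      integrable_of_bound hg'meas.aestronglyMeasurable 1 (fun x => hψ_bd _ (hg'01 x))
    have hset : MeasurableSet (g ⁻¹' {0}) := hg (measurableSet_singleton 0)
    have hsetA : MeasurableSet (A n) := measurableSet_lt hg' measurable_const
    have step1 : (μ (g ⁻¹' {0})).toReal ≤ ∫ x, ψ (g x) ∂μ := by
      have hind : ∫ x, Set.indicator (g ⁻¹' {0}) (fun _ => (1:ℝ)) x ∂μ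
          = (μ (g ⁻¹' {0})).toReal := by
        rw [integral_indicator_const (1:ℝ) hset]; simp [measureReal_def]
      rw [← hind]
      refine integral_mono ((integrable_const (1:ℝ)).indicator hset) hIg (fun x => ?_)
      by_cases hx : g x = 0
      · have hmem : x ∈ g ⁻¹' {0} := hx
        rw [Set.indicator_of_mem hmem, hx, hψ0]
      · have hmem : x ∉ g ⁻¹' {0} := hx
        rw [Set.indicator_of_notMem hmem]
        simp only [hψdef]
        exact le_max_left _ _
    have step3 : ∫ x, ψ (g' x) ∂μ' ≤ (μ' (A n)).toReal := by
      have hind : ∫ x, Set.indicator (A n) (fun _ => (1:ℝ)) x ∂μ'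
          = (μ' (A n)).toReal := by
        rw [integral_indicator_const (1:ℝ) hsetA]; simp [measureReal_def]
      rw [← hind]
      refine integral_mono hIg' ((integrable_const (1:ℝ)).indicator hsetA) (fun x => ?_)
      by_cases hx : g' x < ε
      · have hmem : x ∈ A n := hx
        rw [Set.indicator_of_mem hmem]
        exact abs_le.mp (hψ_bd _ (hg'01 x)) |>.2
      · have hmem : x ∉ A n := hx
        push_neg at hx
        rw [Set.indicator_of_notMem hmem]
        simp only [hψdef]
        refine max_le (le_refl 0) ?_
        have h15 : (-(1/ε)) * g' x + 1 = -((g' x - ε)/ε) := by field_simp; ring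
        rw [h15]
        simp only [neg_nonpos]
        exact div_nonneg (by linarith) hε.le
    exact le_trans step1 (le_trans (hS ψ hψconv) step3)
  have hAanti : Antitone A := by
    intro n m hnm x hx
    simp only [hA, mem_setOf_eq] at hx ⊢
    have h1 : 1/((m:ℝ)+1) ≤ 1/((n:ℝ)+1) := by
      apply one_div_le_one_div_of_le (by positivity)
      exact_mod_cast by omega
    linarith
  have hiInter : ⋂ n, A n = g' ⁻¹' {0} := by
    ext x
    simp only [mem_iInter, hA, mem_setOf_eq, mem_preimage, mem_singleton_iff]
    constructor
    · intro h
      by_contra hne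
      have hlt : 0 < g' x := lt_of_le_of_ne (hg'01 x).1 (Ne.symm hne)
      obtain ⟨n, hn⟩ := exists_nat_one_div_lt hlt
      have := h n
      linarith
    · intro h n
      rw [h]
      positivity
  have htendE : Tendsto (fun n => μ' (A n)) atTop (𝓝 (μ' (g' ⁻¹' {0}))) := by
    have := tendsto_measure_iInter_atTop (μ := μ')
      (fun n => (measurableSet_lt hg' measurable_const).nullMeasurableSet) hAanti
      ⟨0, measure_ne_top _ _⟩
    rwa [hiInter] at this
  have htend : Tendsto (fun n => (μ' (A n)).toReal) atTop (𝓝 (μ' (g' ⁻¹' {0})).toReal) :=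
    (ENNReal.tendsto_toReal (measure_ne_top _ _)).comp htendE
  exact ge_of_tendsto' htend key

end Core2

section Core3

variable {μ μ' : Measure ℝ} [IsProbabilityMeasure μ] [IsProbabilityMeasure μ']

lemma core_ineq {g g' : ℝ → ℝ} (hg : Measurable g) (hg' : Measurable g')
    (hg01 : ∀ x, g x ∈ Icc (0:ℝ) 1) (hg'01 : ∀ x, g' x ∈ Icc (0:ℝ) 1)
    (hS : ∀ ψ₀ : ℝ → ℝ, ConvexOn ℝ Set.univ ψ₀ → ∫ x, ψ₀ (g x) ∂μ ≤ ∫ x, ψ₀ (g' x) ∂μ')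
    {φ : ℝ → ℝ} (hφ : ConvexOn ℝ (Icc (-1:ℝ) 1) φ) :
    ∫ p : ℝ × ℝ, φ (g p.1 - g p.2) ∂(μ.prod μ) ≤
      ∫ p : ℝ × ℝ, φ (g' p.1 - g' p.2) ∂(μ'.prod μ') := by
  obtain ⟨ψ, c₁, c₂, hconv, hcont, hmono, hle, ⟨Lb, hlb⟩, hc₁, hc₂, htend⟩ := convex_decomp hφ
  set Cφ := max (φ (-1)) (φ 1) with hCφ
  have hmemg : ∀ p : ℝ × ℝ, g p.1 - g p.2 ∈ Icc (-1:ℝ) 1 := fun p =>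
    ⟨by linarith [(hg01 p.1).1, (hg01 p.2).2], by linarith [(hg01 p.1).2, (hg01 p.2).1]⟩
  have hmemg' : ∀ p : ℝ × ℝ, g' p.1 - g' p.2 ∈ Icc (-1:ℝ) 1 := fun p =>
    ⟨by linarith [(hg'01 p.1).1, (hg'01 p.2).2], by linarith [(hg'01 p.1).2, (hg'01 p.2).1]⟩
  set Δ : ℝ × ℝ → ℝ := fun p => g p.1 - g p.2 with hΔdef
  set Δ' : ℝ × ℝ → ℝ := fun p => g' p.1 - g' p.2 with hΔ'def
  have hΔmeas : Measurable Δ := (hg.comp measurable_fst).sub (hg.comp measurable_snd)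
  have hΔ'meas : Measurable Δ' := (hg'.comp measurable_fst).sub (hg'.comp measurable_snd)
  set C0 : ℝ := max |Lb| (max |Cφ| |2 * φ 0 - Cφ|) with hC0
  have hφub : ∀ t ∈ Icc (-1:ℝ) 1, φ t ≤ Cφ := convexOn_Icc_le hφ
  have hφlb : ∀ t ∈ Icc (-1:ℝ) 1, 2 * φ 0 - Cφ ≤ φ t := convexOn_Icc_ge hφ
  have hφbound : ∀ t ∈ Icc (-1:ℝ) 1, |φ t| ≤ C0 := by
    intro t ht
    rw [abs_le]
    constructor
    · have h1 := hφlb t ht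
      have h2 := neg_abs_le (2 * φ 0 - Cφ)
      have h3 : |2 * φ 0 - Cφ| ≤ C0 := le_trans (le_max_right _ _) (le_max_right _ _)
      linarith
    · have h1 := hφub t ht
      have h2 := le_abs_self Cφ
      have h3 : |Cφ| ≤ C0 := le_trans (le_max_left _ _) (le_max_right _ _)
      linarith
  have hbound : ∀ n, ∀ t ∈ Icc (-1:ℝ) 1, |ψ n t| ≤ C0 := by
    intro n t ht
    rw [abs_le]
    constructor
    · have h1 := hlb n t ht
      have h2 := neg_abs_le Lb
      have h3 : |Lb| ≤ C0 := le_max_left _ _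
      linarith
    · have h1 := hle n t ht
      have h2 := hφub t ht
      have h3 : |Cφ| ≤ C0 := le_trans (le_max_left _ _) (le_max_right _ _)
      linarith [le_abs_self Cφ]
  set G : ℝ × ℝ → ℝ := fun p => φ (Δ p) - (if Δ p = 1 then c₁ else 0)
    - (if Δ p = -1 then c₂ else 0) with hGdef
  set G' : ℝ × ℝ → ℝ := fun p => φ (Δ' p) - (if Δ' p = 1 then c₁ else 0)
    - (if Δ' p = -1 then c₂ else 0) with hG'def
  have htendG : ∀ p, Tendsto (fun n => ψ n (Δ p)) atTop (𝓝 (G p)) :=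
    fun p => htend _ (hmemg p)
  have htendG' : ∀ p, Tendsto (fun n => ψ n (Δ' p)) atTop (𝓝 (G' p)) :=
    fun p => htend _ (hmemg' p)
  have hT : Tendsto (fun n => ∫ p, ψ n (Δ p) ∂(μ.prod μ)) atTop
      (𝓝 (∫ p, G p ∂(μ.prod μ))) := by
    refine tendsto_integral_of_dominated_convergence (fun _ => C0)
      (fun n => ((hcont n).measurable.comp hΔmeas).aestronglyMeasurable)
      (integrable_const C0)
      (fun n => ae_of_all _ (fun p => by
        simpa [Real.norm_eq_abs] using hbound n _ (hmemg p)))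
      (ae_of_all _ htendG)
  have hT' : Tendsto (fun n => ∫ p, ψ n (Δ' p) ∂(μ'.prod μ')) atTop
      (𝓝 (∫ p, G' p ∂(μ'.prod μ'))) := by
    refine tendsto_integral_of_dominated_convergence (fun _ => C0)
      (fun n => ((hcont n).measurable.comp hΔ'meas).aestronglyMeasurable)
      (integrable_const C0)
      (fun n => ae_of_all _ (fun p => by
        simpa [Real.norm_eq_abs] using hbound n _ (hmemg' p)))
      (ae_of_all _ htendG')
  have hTle : ∀ n, ∫ p, ψ n (Δ p) ∂(μ.prod μ) ≤ ∫ p, ψ n (Δ' p) ∂(μ'.prod μ') :=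
    fun n => schur_pair_step hg hg' hg01 hg'01 hS (hconv n)
  have hGle : ∫ p, G p ∂(μ.prod μ) ≤ ∫ p, G' p ∂(μ'.prod μ') :=
    le_of_tendsto_of_tendsto' hT hT' hTle
  have hm1 := mass_one_le hg hg' hg01 hg'01 hS
  have hm0 := mass_zero_le hg hg' hg01 hg'01 hS
  have hset1 : Δ ⁻¹' {1} = (g ⁻¹' {1}) ×ˢ (g ⁻¹' {0}) := by
    ext p
    simp only [mem_preimage, mem_singleton_iff, mem_prod, hΔdef]
    constructor
    · intro h
      constructor
      · linarith [(hg01 p.1).2, (hg01 p.2).1]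
      · linarith [(hg01 p.1).2, (hg01 p.2).1]
    · rintro ⟨h1, h2⟩
      rw [h1, h2]
      norm_num
  have hset2 : Δ ⁻¹' {-1} = (g ⁻¹' {0}) ×ˢ (g ⁻¹' {1}) := by
    ext p
    simp only [mem_preimage, mem_singleton_iff, mem_prod, hΔdef]
    constructor
    · intro h
      constructor
      · linarith [(hg01 p.1).1, (hg01 p.2).2]
      · linarith [(hg01 p.1).1, (hg01 p.2).2]
    · rintro ⟨h1, h2⟩
      rw [h1, h2]
      norm_num
  have hset1' : Δ' ⁻¹' {1} = (g' ⁻¹' {1}) ×ˢ (g' ⁻¹' {0}) := by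
    ext p
    simp only [mem_preimage, mem_singleton_iff, mem_prod, hΔ'def]
    constructor
    · intro h
      constructor
      · linarith [(hg'01 p.1).2, (hg'01 p.2).1]
      · linarith [(hg'01 p.1).2, (hg'01 p.2).1]
    · rintro ⟨h1, h2⟩
      rw [h1, h2]
      norm_num
  have hset2' : Δ' ⁻¹' {-1} = (g' ⁻¹' {0}) ×ˢ (g' ⁻¹' {1}) := by
    ext p
    simp only [mem_preimage, mem_singleton_iff, mem_prod, hΔ'def]
    constructor
    · intro h
      constructor
      · linarith [(hg'01 p.1).1, (hg'01 p.2).2]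
      · linarith [(hg'01 p.1).1, (hg'01 p.2).2]
    · rintro ⟨h1, h2⟩
      rw [h1, h2]
      norm_num
  -- indicator functions and their integrals
  have hind1 : (fun p => if Δ p = 1 then c₁ else (0:ℝ))
      = Set.indicator (Δ ⁻¹' {1}) (fun _ => c₁) := by
    funext p
    by_cases h : Δ p = 1
    · rw [if_pos h, Set.indicator_of_mem (show p ∈ Δ ⁻¹' {1} from h)]
    · rw [if_neg h, Set.indicator_of_notMem (show p ∉ Δ ⁻¹' {1} from h)]
  have hind2 : (fun p => if Δ p = -1 then c₂ else (0:ℝ))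
      = Set.indicator (Δ ⁻¹' {-1}) (fun _ => c₂) := by
    funext p
    by_cases h : Δ p = -1
    · rw [if_pos h, Set.indicator_of_mem (show p ∈ Δ ⁻¹' {-1} from h)]
    · rw [if_neg h, Set.indicator_of_notMem (show p ∉ Δ ⁻¹' {-1} from h)]
  have hind1' : (fun p => if Δ' p = 1 then c₁ else (0:ℝ))
      = Set.indicator (Δ' ⁻¹' {1}) (fun _ => c₁) := by
    funext p
    by_cases h : Δ' p = 1
    · rw [if_pos h, Set.indicator_of_mem (show p ∈ Δ' ⁻¹' {1} from h)]
    · rw [if_neg h, Set.indicator_of_notMem (show p ∉ Δ' ⁻¹' {1} from h)]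
  have hind2' : (fun p => if Δ' p = -1 then c₂ else (0:ℝ))
      = Set.indicator (Δ' ⁻¹' {-1}) (fun _ => c₂) := by
    funext p
    by_cases h : Δ' p = -1
    · rw [if_pos h, Set.indicator_of_mem (show p ∈ Δ' ⁻¹' {-1} from h)]
    · rw [if_neg h, Set.indicator_of_notMem (show p ∉ Δ' ⁻¹' {-1} from h)]
  have hi1int : Integrable (fun p => if Δ p = 1 then c₁ else (0:ℝ)) (μ.prod μ) := by
    rw [hind1]
    exact (integrable_const c₁).indicator (hΔmeas (measurableSet_singleton 1))
  have hi2int : Integrable (fun p => if Δ p = -1 then c₂ else (0:ℝ)) (μ.prod μ) := by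
    rw [hind2]
    exact (integrable_const c₂).indicator (hΔmeas (measurableSet_singleton (-1)))
  have hi1int' : Integrable (fun p => if Δ' p = 1 then c₁ else (0:ℝ)) (μ'.prod μ') := by
    rw [hind1']
    exact (integrable_const c₁).indicator (hΔ'meas (measurableSet_singleton 1))
  have hi2int' : Integrable (fun p => if Δ' p = -1 then c₂ else (0:ℝ)) (μ'.prod μ') := by
    rw [hind2']
    exact (integrable_const c₂).indicator (hΔ'meas (measurableSet_singleton (-1)))
  have hφΔmeas : Measurable (fun p => φ (Δ p)) := convexOn_comp_measurable hφ hΔmeas hmemg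
  have hφΔ'meas : Measurable (fun p => φ (Δ' p)) := convexOn_comp_measurable hφ hΔ'meas hmemg'
  have hφΔint : Integrable (fun p => φ (Δ p)) (μ.prod μ) :=
    integrable_of_bound hφΔmeas.aestronglyMeasurable C0 (fun p => hφbound _ (hmemg p))
  have hφΔ'int : Integrable (fun p => φ (Δ' p)) (μ'.prod μ') :=
    integrable_of_bound hφΔ'meas.aestronglyMeasurable C0 (fun p => hφbound _ (hmemg' p))
  have hGint : Integrable G (μ.prod μ) := (hφΔint.sub hi1int).sub hi2int
  have hG'int : Integrable G' (μ'.prod μ') := (hφΔ'int.sub hi1int').sub hi2int'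
  -- values of indicator integrals
  set m1 := (μ (g ⁻¹' {1})).toReal with hm1def
  set m0 := (μ (g ⁻¹' {0})).toReal with hm0def
  set m1' := (μ' (g' ⁻¹' {1})).toReal with hm1'def
  set m0' := (μ' (g' ⁻¹' {0})).toReal with hm0'def
  have hI1 : ∫ p, (if Δ p = 1 then c₁ else (0:ℝ)) ∂(μ.prod μ) = (m1 * m0) * c₁ := by
    rw [hind1, integral_indicator_const c₁ (hΔmeas (measurableSet_singleton 1)), hset1,
      measureReal_def, Measure.prod_prod, ENNReal.toReal_mul, smul_eq_mul]
  have hI2 : ∫ p, (if Δ p = -1 then c₂ else (0:ℝ)) ∂(μ.prod μ) = (m0 * m1) * c₂ := by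
    rw [hind2, integral_indicator_const c₂ (hΔmeas (measurableSet_singleton (-1))), hset2,
      measureReal_def, Measure.prod_prod, ENNReal.toReal_mul, smul_eq_mul]
  have hI1' : ∫ p, (if Δ' p = 1 then c₁ else (0:ℝ)) ∂(μ'.prod μ') = (m1' * m0') * c₁ := by
    rw [hind1', integral_indicator_const c₁ (hΔ'meas (measurableSet_singleton 1)), hset1',
      measureReal_def, Measure.prod_prod, ENNReal.toReal_mul, smul_eq_mul]
  have hI2' : ∫ p, (if Δ' p = -1 then c₂ else (0:ℝ)) ∂(μ'.prod μ') = (m0' * m1') * c₂ := by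
    rw [hind2', integral_indicator_const c₂ (hΔ'meas (measurableSet_singleton (-1))), hset2',
      measureReal_def, Measure.prod_prod, ENNReal.toReal_mul, smul_eq_mul]
  have hdecomp : ∫ p, φ (Δ p) ∂(μ.prod μ)
      = ∫ p, G p ∂(μ.prod μ) + (m1 * m0) * c₁ + (m0 * m1) * c₂ := by
    have heq : (fun p => φ (Δ p)) = fun p => G p + (if Δ p = 1 then c₁ else 0)
        + (if Δ p = -1 then c₂ else 0) := by
      funext p
      simp only [hGdef]
      ring
    have hsum1 : Integrable (fun p => G p + (if Δ p = 1 then c₁ else 0)) (μ.prod μ) :=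
      hGint.add hi1int
    rw [heq, integral_add hsum1 hi2int, integral_add hGint hi1int, hI1, hI2]
  have hdecomp' : ∫ p, φ (Δ' p) ∂(μ'.prod μ')
      = ∫ p, G' p ∂(μ'.prod μ') + (m1' * m0') * c₁ + (m0' * m1') * c₂ := by
    have heq : (fun p => φ (Δ' p)) = fun p => G' p + (if Δ' p = 1 then c₁ else 0)
        + (if Δ' p = -1 then c₂ else 0) := by
      funext p
      simp only [hG'def]
      ring
    have hsum1 : Integrable (fun p => G' p + (if Δ' p = 1 then c₁ else 0)) (μ'.prod μ') :=
      hG'int.add hi1int'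
    rw [heq, integral_add hsum1 hi2int', integral_add hG'int hi1int', hI1', hI2']
  rw [show (fun p : ℝ × ℝ => φ (g p.1 - g p.2)) = fun p => φ (Δ p) from rfl,
    show (fun p : ℝ × ℝ => φ (g' p.1 - g' p.2)) = fun p => φ (Δ' p) from rfl]
  rw [hdecomp, hdecomp']
  have hmul1 : (m1 * m0) * c₁ ≤ (m1' * m0') * c₁ :=
    mul_le_mul_of_nonneg_right
      (mul_le_mul hm1 hm0 ENNReal.toReal_nonneg ENNReal.toReal_nonneg) hc₁
  have hmul2 : (m0 * m1) * c₂ ≤ (m0' * m1') * c₂ :=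
    mul_le_mul_of_nonneg_right
      (mul_le_mul hm0 hm1 ENNReal.toReal_nonneg ENNReal.toReal_nonneg) hc₂
  linarith [hGle]

end Core3

lemma quantile_map' (ν : Measure ℝ) [IsProbabilityMeasure ν] :
    ∃ qm : ℝ → ℝ, Measurable qm ∧ (volume.restrict (Ioo (0:ℝ) 1)).map qm = ν ∧
      ∀ᵐ v ∂(volume.restrict (Ioo (0:ℝ) 1)), qm v = cdfQuantile ν v := by
  have h := quantile_aemeasurable ν
  refine ⟨h.mk _, h.measurable_mk, ?_, h.ae_eq_mk.symm⟩
  calc (volume.restrict (Ioo (0:ℝ) 1)).map (h.mk _)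
      = (volume.restrict (Ioo (0:ℝ) 1)).map (cdfQuantile ν) :=
        (Measure.map_congr h.ae_eq_mk).symm
    _ = ν := quantile_map ν

lemma kernel_cdf_jointly_measurable (κ : Kernel ℝ ℝ) [IsMarkovKernel κ] :
    Measurable fun q : ℝ × ℝ => (κ q.1 (Iic q.2)).toReal := by
  have ht : MeasurableSet {p : (ℝ × ℝ) × ℝ | p.2 ≤ p.1.2} :=
    measurableSet_le measurable_snd measurable_fst.snd
  set η : Kernel (ℝ × ℝ) ℝ := κ.comap (Prod.fst : ℝ × ℝ → ℝ) measurable_fst with hη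
  have h := ProbabilityTheory.Kernel.measurable_kernel_prodMk_left (κ := η) ht
  have h2 : Measurable fun q : ℝ × ℝ => κ q.1 (Iic q.2) := by
    have heq : (fun q : ℝ × ℝ => κ q.1 (Iic q.2))
        = fun q : ℝ × ℝ => η q (Prod.mk q ⁻¹' {p : (ℝ × ℝ) × ℝ | p.2 ≤ p.1.2}) := by
      funext q
      rw [hη, Kernel.comap_apply]
      rfl
    rw [heq]
    exact h
  exact h2.ennreal_toReal

lemma kernel_cdf_mem (κ : Kernel ℝ ℝ) [IsMarkovKernel κ] (x : ℝ) (s : Set ℝ) :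
    (κ x s).toReal ∈ Icc (0:ℝ) 1 := by
  constructor
  · exact ENNReal.toReal_nonneg
  · have h := prob_le_one (μ := κ x) (s := s)
    have := ENNReal.toReal_mono ENNReal.one_ne_top h
    simpa using this


/-- Monotonicity w.r.t. the Schur order: If (Y|X) is smaller than
(Y'|X') in the Schur order for conditional distributions, then the sensitivity
functional of conditional distribution functions is ordered accordingly, for
every convex φ : [-1,1] → ℝ such that the integrals exist. -/
theorem stmt15 {Ω : Type*} [MeasurableSpace Ω] (P : Measure Ω) [IsProbabilityMeasure P]
    {Ω' : Type*} [MeasurableSpace Ω'] (P' : Measure Ω') [IsProbabilityMeasure P']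
    (X Y : Ω → ℝ) (hX : Measurable X) (hY : Measurable Y)
    (X' Y' : Ω' → ℝ) (hX' : Measurable X') (hY' : Measurable Y')
    (hYcont : Continuous fun z => ((P.map Y) (Set.Iic z)).toReal)
    (hY'cont : Continuous fun z => ((P'.map Y') (Set.Iic z)).toReal)
    (κ : Kernel ℝ ℝ) [IsMarkovKernel κ]
    (hκ : ∀ A B : Set ℝ, MeasurableSet A → MeasurableSet B →
      P.map (fun ω => (X ω, Y ω)) (A ×ˢ B) = ∫⁻ x in A, κ x B ∂(P.map X))
    (κ' : Kernel ℝ ℝ) [IsMarkovKernel κ']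
    (hκ' : ∀ A B : Set ℝ, MeasurableSet A → MeasurableSet B →
      P'.map (fun ω => (X' ω, Y' ω)) (A ×ˢ B) = ∫⁻ x in A, κ' x B ∂(P'.map X'))
    (hSchur : ∀ φ₀ : ℝ → ℝ, ConvexOn ℝ Set.univ φ₀ → ∀ v ∈ Set.Ioo (0 : ℝ) 1,
      Integrable (fun x => φ₀ ((κ x (Set.Iic (cdfQuantile (P.map Y) v))).toReal))
        (P.map X) →
      Integrable (fun x => φ₀ ((κ' x (Set.Iic (cdfQuantile (P'.map Y') v))).toReal))
        (P'.map X') →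
      ∫ x, φ₀ ((κ x (Set.Iic (cdfQuantile (P.map Y) v))).toReal) ∂(P.map X) ≤
        ∫ x, φ₀ ((κ' x (Set.Iic (cdfQuantile (P'.map Y') v))).toReal) ∂(P'.map X'))
    (φ : ℝ → ℝ) (hφ : ConvexOn ℝ (Set.Icc (-1 : ℝ) 1) φ)
    (hint : Integrable (fun x : ℝ × ℝ =>
        ∫ y, φ ((κ x.1 (Set.Iic y)).toReal - (κ x.2 (Set.Iic y)).toReal) ∂(P.map Y))
      ((P.map X).prod (P.map X)))
    (hint' : Integrable (fun x : ℝ × ℝ =>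
        ∫ y, φ ((κ' x.1 (Set.Iic y)).toReal - (κ' x.2 (Set.Iic y)).toReal) ∂(P'.map Y'))
      ((P'.map X').prod (P'.map X'))) :
    ∫ x : ℝ × ℝ, (∫ y, φ ((κ x.1 (Set.Iic y)).toReal - (κ x.2 (Set.Iic y)).toReal)
          ∂(P.map Y)) ∂((P.map X).prod (P.map X)) ≤
      ∫ x : ℝ × ℝ, (∫ y, φ ((κ' x.1 (Set.Iic y)).toReal - (κ' x.2 (Set.Iic y)).toReal)
          ∂(P'.map Y')) ∂((P'.map X').prod (P'.map X')) := by
  classical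
  haveI hμ : IsProbabilityMeasure (P.map X) := Measure.isProbabilityMeasure_map hX.aemeasurable
  haveI hμ' : IsProbabilityMeasure (P'.map X') := Measure.isProbabilityMeasure_map hX'.aemeasurable
  haveI hν : IsProbabilityMeasure (P.map Y) := Measure.isProbabilityMeasure_map hY.aemeasurable
  haveI hν' : IsProbabilityMeasure (P'.map Y') := Measure.isProbabilityMeasure_map hY'.aemeasurable
  obtain ⟨qm, hqm_meas, hqm_map, hqm_ae⟩ := quantile_map' (P.map Y)
  obtain ⟨qm', hqm'_meas, hqm'_map, hqm'_ae⟩ := quantile_map' (P'.map Y')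
  set lam := volume.restrict (Ioo (0:ℝ) 1) with hlam
  have hKj : Measurable fun q : ℝ × ℝ => (κ q.1 (Iic q.2)).toReal :=
    kernel_cdf_jointly_measurable κ
  have hKj' : Measurable fun q : ℝ × ℝ => (κ' q.1 (Iic q.2)).toReal :=
    kernel_cdf_jointly_measurable κ'
  -- bound for φ on Icc
  set Cφ := max (φ (-1)) (φ 1) with hCφ
  set Cb := max |Cφ| |2 * φ 0 - Cφ| with hCb
  have hφbound : ∀ t ∈ Icc (-1:ℝ) 1, |φ t| ≤ Cb := by
    intro t ht
    rw [abs_le]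
    constructor
    · have h1 := convexOn_Icc_ge hφ t ht
      have h2 := neg_abs_le (2 * φ 0 - Cφ)
      have h3 : |2 * φ 0 - Cφ| ≤ Cb := le_max_right _ _
      linarith
    · have h1 := convexOn_Icc_le hφ t ht
      have h2 := le_abs_self Cφ
      have h3 : |Cφ| ≤ Cb := le_max_left _ _
      linarith
  -- membership
  have hmem : ∀ (κ₀ : Kernel ℝ ℝ) [IsMarkovKernel κ₀], ∀ (x : ℝ × ℝ) (z : ℝ),
      (κ₀ x.1 (Iic z)).toReal - (κ₀ x.2 (Iic z)).toReal ∈ Icc (-1:ℝ) 1 := by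
    intro κ₀ _ x z
    have h1 := kernel_cdf_mem κ₀ x.1 (Iic z)
    have h2 := kernel_cdf_mem κ₀ x.2 (Iic z)
    exact ⟨by linarith [h1.1, h2.2], by linarith [h1.2, h2.1]⟩
  -- inner rewriting
  have hinner : ∀ x : ℝ × ℝ,
      (∫ y, φ ((κ x.1 (Set.Iic y)).toReal - (κ x.2 (Set.Iic y)).toReal) ∂(P.map Y))
        = ∫ v, φ ((κ x.1 (Iic (qm v))).toReal - (κ x.2 (Iic (qm v))).toReal) ∂lam := by
    intro x
    have hΔy : Measurable fun y : ℝ => (κ x.1 (Iic y)).toReal - (κ x.2 (Iic y)).toReal :=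
      (hKj.comp (measurable_const.prodMk measurable_id)).sub
        (hKj.comp (measurable_const.prodMk measurable_id))
    have hfm : Measurable fun y : ℝ => φ ((κ x.1 (Iic y)).toReal - (κ x.2 (Iic y)).toReal) :=
      convexOn_comp_measurable hφ hΔy (fun y => hmem κ x y)
    rw [← hqm_map, integral_map hqm_meas.aemeasurable hfm.aestronglyMeasurable]
  have hinner' : ∀ x : ℝ × ℝ,
      (∫ y, φ ((κ' x.1 (Set.Iic y)).toReal - (κ' x.2 (Set.Iic y)).toReal) ∂(P'.map Y'))
        = ∫ v, φ ((κ' x.1 (Iic (qm' v))).toReal - (κ' x.2 (Iic (qm' v))).toReal) ∂lam := by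
    intro x
    have hΔy : Measurable fun y : ℝ => (κ' x.1 (Iic y)).toReal - (κ' x.2 (Iic y)).toReal :=
      (hKj'.comp (measurable_const.prodMk measurable_id)).sub
        (hKj'.comp (measurable_const.prodMk measurable_id))
    have hfm : Measurable fun y : ℝ => φ ((κ' x.1 (Iic y)).toReal - (κ' x.2 (Iic y)).toReal) :=
      convexOn_comp_measurable hφ hΔy (fun y => hmem κ' x y)
    rw [← hqm'_map, integral_map hqm'_meas.aemeasurable hfm.aestronglyMeasurable]
  -- uncurried integrands
  have hΔH : Measurable fun p : (ℝ × ℝ) × ℝ =>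
      (κ p.1.1 (Iic (qm p.2))).toReal - (κ p.1.2 (Iic (qm p.2))).toReal :=
    (hKj.comp (measurable_fst.fst.prodMk (hqm_meas.comp measurable_snd))).sub
      (hKj.comp (measurable_fst.snd.prodMk (hqm_meas.comp measurable_snd)))
  have hΔH' : Measurable fun p : (ℝ × ℝ) × ℝ =>
      (κ' p.1.1 (Iic (qm' p.2))).toReal - (κ' p.1.2 (Iic (qm' p.2))).toReal :=
    (hKj'.comp (measurable_fst.fst.prodMk (hqm'_meas.comp measurable_snd))).sub
      (hKj'.comp (measurable_fst.snd.prodMk (hqm'_meas.comp measurable_snd)))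
  have hHmeas : Measurable fun p : (ℝ × ℝ) × ℝ =>
      φ ((κ p.1.1 (Iic (qm p.2))).toReal - (κ p.1.2 (Iic (qm p.2))).toReal) :=
    convexOn_comp_measurable hφ hΔH (fun p => hmem κ p.1 (qm p.2))
  have hHmeas' : Measurable fun p : (ℝ × ℝ) × ℝ =>
      φ ((κ' p.1.1 (Iic (qm' p.2))).toReal - (κ' p.1.2 (Iic (qm' p.2))).toReal) :=
    convexOn_comp_measurable hφ hΔH' (fun p => hmem κ' p.1 (qm' p.2))
  have hHint : Integrable (fun p : (ℝ × ℝ) × ℝ =>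
      φ ((κ p.1.1 (Iic (qm p.2))).toReal - (κ p.1.2 (Iic (qm p.2))).toReal))
      (((P.map X).prod (P.map X)).prod lam) :=
    integrable_of_bound hHmeas.aestronglyMeasurable Cb
      (fun p => hφbound _ (hmem κ p.1 (qm p.2)))
  have hHint' : Integrable (fun p : (ℝ × ℝ) × ℝ =>
      φ ((κ' p.1.1 (Iic (qm' p.2))).toReal - (κ' p.1.2 (Iic (qm' p.2))).toReal))
      (((P'.map X').prod (P'.map X')).prod lam) :=
    integrable_of_bound hHmeas'.aestronglyMeasurable Cb
      (fun p => hφbound _ (hmem κ' p.1 (qm' p.2)))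
  -- swap
  have hswap : ∫ x : ℝ × ℝ, (∫ v, φ ((κ x.1 (Iic (qm v))).toReal
        - (κ x.2 (Iic (qm v))).toReal) ∂lam) ∂((P.map X).prod (P.map X))
      = ∫ v, (∫ x : ℝ × ℝ, φ ((κ x.1 (Iic (qm v))).toReal
        - (κ x.2 (Iic (qm v))).toReal) ∂((P.map X).prod (P.map X))) ∂lam :=
    integral_integral_swap hHint
  have hswap' : ∫ x : ℝ × ℝ, (∫ v, φ ((κ' x.1 (Iic (qm' v))).toReal
        - (κ' x.2 (Iic (qm' v))).toReal) ∂lam) ∂((P'.map X').prod (P'.map X'))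
      = ∫ v, (∫ x : ℝ × ℝ, φ ((κ' x.1 (Iic (qm' v))).toReal
        - (κ' x.2 (Iic (qm' v))).toReal) ∂((P'.map X').prod (P'.map X'))) ∂lam :=
    integral_integral_swap hHint'
  -- a.e. pointwise inequality in v
  have hae : ∀ᵐ v ∂lam, (∫ x : ℝ × ℝ, φ ((κ x.1 (Iic (qm v))).toReal
        - (κ x.2 (Iic (qm v))).toReal) ∂((P.map X).prod (P.map X)))
      ≤ (∫ x : ℝ × ℝ, φ ((κ' x.1 (Iic (qm' v))).toReal
        - (κ' x.2 (Iic (qm' v))).toReal) ∂((P'.map X').prod (P'.map X'))) := by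
    filter_upwards [hqm_ae, hqm'_ae, ae_restrict_mem measurableSet_Ioo] with v hv1 hv2 hv3
    rw [hv1, hv2]
    set g : ℝ → ℝ := fun x => (κ x (Iic (cdfQuantile (P.map Y) v))).toReal with hgdef
    set g' : ℝ → ℝ := fun x => (κ' x (Iic (cdfQuantile (P'.map Y') v))).toReal with hg'def
    have hg : Measurable g := (Kernel.measurable_coe κ measurableSet_Iic).ennreal_toReal
    have hg' : Measurable g' := (Kernel.measurable_coe κ' measurableSet_Iic).ennreal_toReal
    have hg01 : ∀ x, g x ∈ Icc (0:ℝ) 1 := fun x => kernel_cdf_mem κ x _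
    have hg'01 : ∀ x, g' x ∈ Icc (0:ℝ) 1 := fun x => kernel_cdf_mem κ' x _
    have hS : ∀ ψ₀ : ℝ → ℝ, ConvexOn ℝ Set.univ ψ₀ →
        ∫ x, ψ₀ (g x) ∂(P.map X) ≤ ∫ x, ψ₀ (g' x) ∂(P'.map X') := by
      intro ψ₀ hψ₀
      have hψc : Continuous ψ₀ := hψ₀.continuous_univ
      obtain ⟨C, hC⟩ := (isCompact_Icc (a := (0:ℝ)) (b := 1)).exists_bound_of_continuousOn
        hψc.continuousOn
      have hint1 : Integrable (fun x => ψ₀ (g x)) (P.map X) :=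
        integrable_of_bound ((hψc.measurable.comp hg).aestronglyMeasurable) C
          (fun x => by simpa [Real.norm_eq_abs] using hC _ (hg01 x))
      have hint2 : Integrable (fun x => ψ₀ (g' x)) (P'.map X') :=
        integrable_of_bound ((hψc.measurable.comp hg').aestronglyMeasurable) C
          (fun x => by simpa [Real.norm_eq_abs] using hC _ (hg'01 x))
      exact hSchur ψ₀ hψ₀ v hv3 hint1 hint2
    exact core_ineq hg hg' hg01 hg'01 hS hφ
  -- integrability of the v-integrals
  have hIv : Integrable (fun v => ∫ x : ℝ × ℝ, φ ((κ x.1 (Iic (qm v))).toReal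
      - (κ x.2 (Iic (qm v))).toReal) ∂((P.map X).prod (P.map X))) lam :=
    hHint.integral_prod_right
  have hIv' : Integrable (fun v => ∫ x : ℝ × ℝ, φ ((κ' x.1 (Iic (qm' v))).toReal
      - (κ' x.2 (Iic (qm' v))).toReal) ∂((P'.map X').prod (P'.map X'))) lam :=
    hHint'.integral_prod_right
  calc ∫ x : ℝ × ℝ, (∫ y, φ ((κ x.1 (Set.Iic y)).toReal - (κ x.2 (Set.Iic y)).toReal)
          ∂(P.map Y)) ∂((P.map X).prod (P.map X))
      = ∫ x : ℝ × ℝ, (∫ v, φ ((κ x.1 (Iic (qm v))).toReal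
          - (κ x.2 (Iic (qm v))).toReal) ∂lam) ∂((P.map X).prod (P.map X)) :=
        integral_congr_ae (ae_of_all _ hinner)
    _ = ∫ v, (∫ x : ℝ × ℝ, φ ((κ x.1 (Iic (qm v))).toReal
          - (κ x.2 (Iic (qm v))).toReal) ∂((P.map X).prod (P.map X))) ∂lam := hswap
    _ ≤ ∫ v, (∫ x : ℝ × ℝ, φ ((κ' x.1 (Iic (qm' v))).toReal
          - (κ' x.2 (Iic (qm' v))).toReal) ∂((P'.map X').prod (P'.map X'))) ∂lam :=
        integral_mono_ae hIv hIv' hae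
    _ = ∫ x : ℝ × ℝ, (∫ v, φ ((κ' x.1 (Iic (qm' v))).toReal
          - (κ' x.2 (Iic (qm' v))).toReal) ∂lam) ∂((P'.map X').prod (P'.map X')) := hswap'.symm
    _ = ∫ x : ℝ × ℝ, (∫ y, φ ((κ' x.1 (Set.Iic y)).toReal - (κ' x.2 (Set.Iic y)).toReal)
          ∂(P'.map Y')) ∂((P'.map X').prod (P'.map X')) :=
        (integral_congr_ae (ae_of_all _ hinner')).symm
end Aux
end

section
/- Let (K_n)_{n∈ℕ} and K be Markov kernels from [0,1] to [0,1] (each K_n(u,·) and K(u,·) a Borel probability measure on [0,1] for every u), and suppose there is a Borel set Γ ⊆ [0,1] with Lebesgue measure λ(Γ) = 1 such that for every u ∈ Γ the measures K_n(u,·) converge weakly to K(u,·) as n → ∞. Then for every continuous function φ : [−1,1] → ℝ, lim_{n→∞} ∫_{[0,1]³} φ(K_n(u₁,[0,v]) − K_n(u₂,[0,v])) dλ³(u₁,u₂,v) = ∫_{[0,1]³} φ(K(u₁,[0,v]) − K(u₂,[0,v])) dλ³(u₁,u₂,v). -/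
open MeasureTheory ProbabilityTheory Filter Set
open scoped ENNReal Topology BoundedContinuousFunction

/-- Continuity: If Markov kernels `Kn` from [0,1] to [0,1] converge
weakly conditional to a Markov kernel `K` (i.e. `Kn n u → K u` weakly for Lebesgue
almost every u in [0,1]), then for every continuous φ : [-1,1] → ℝ the associated
triple integrals converge. -/
theorem stmt16 (Kn : ℕ → Kernel ℝ ℝ) (K : Kernel ℝ ℝ)
    [∀ n, IsMarkovKernel (Kn n)] [IsMarkovKernel K]
    (hKn01 : ∀ n, ∀ u : ℝ, (Kn n) u (Set.Icc (0 : ℝ) 1) = 1)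
    (hK01 : ∀ u : ℝ, K u (Set.Icc (0 : ℝ) 1) = 1)
    (Γ : Set ℝ) (hΓmeas : MeasurableSet Γ) (hΓsub : Γ ⊆ Set.Icc (0 : ℝ) 1)
    (hΓfull : MeasureTheory.volume Γ = 1)
    (hwcc : ∀ u ∈ Γ, ∀ f : BoundedContinuousFunction ℝ ℝ,
      Filter.Tendsto (fun n => ∫ x, f x ∂((Kn n) u)) Filter.atTop
        (nhds (∫ x, f x ∂(K u))))
    (φ : ℝ → ℝ) (hφ : ContinuousOn φ (Set.Icc (-1 : ℝ) 1)) :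
    Filter.Tendsto
      (fun n => ∫ u₁ in Set.Icc (0 : ℝ) 1, ∫ u₂ in Set.Icc (0 : ℝ) 1,
        ∫ v in Set.Icc (0 : ℝ) 1,
          φ (((Kn n) u₁ (Set.Icc 0 v)).toReal - ((Kn n) u₂ (Set.Icc 0 v)).toReal))
      Filter.atTop
      (nhds (∫ u₁ in Set.Icc (0 : ℝ) 1, ∫ u₂ in Set.Icc (0 : ℝ) 1,
        ∫ v in Set.Icc (0 : ℝ) 1,
          φ ((K u₁ (Set.Icc 0 v)).toReal - (K u₂ (Set.Icc 0 v)).toReal))) := by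
  classical
  set ν : Measure ℝ := volume.restrict (Set.Icc (0 : ℝ) 1) with hνdef
  haveI hνprob : IsProbabilityMeasure ν := by
    constructor
    rw [hνdef, Measure.restrict_apply MeasurableSet.univ, Set.univ_inter, Real.volume_Icc]
    norm_num
  -- a clamped version ψ of φ, continuous on all of ℝ
  obtain ⟨C, hC⟩ := isCompact_Icc.exists_bound_of_continuousOn hφ
  set c : ℝ → ℝ := fun x => max (-1) (min 1 x) with hcdef
  have hc_cont : Continuous c := continuous_const.max (continuous_const.min continuous_id)
  have hc_mem : ∀ x, c x ∈ Set.Icc (-1 : ℝ) 1 := fun x =>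
    ⟨le_max_left _ _, max_le (by norm_num) (min_le_left _ _)⟩
  set ψ : ℝ → ℝ := fun x => φ (c x) with hψdef
  have hψ_cont : Continuous ψ := hφ.comp_continuous hc_cont hc_mem
  have hψ_bdd : ∀ x, ‖ψ x‖ ≤ C := fun x => hC _ (hc_mem x)
  have hψ_eq : ∀ x ∈ Set.Icc (-1 : ℝ) 1, ψ x = φ x := by
    intro x hx
    have hcx : c x = x := by
      rw [hcdef]; dsimp only; rw [min_eq_right hx.2, max_eq_right hx.1]
    rw [hψdef]; dsimp only; rw [hcx]
  have hC0 : 0 ≤ C := le_trans (norm_nonneg _) (hC 0 (by norm_num))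
  -- values of CDFs lie in [0,1]
  have hmemF : ∀ (κ : Kernel ℝ ℝ), IsMarkovKernel κ → ∀ (u v : ℝ),
      (κ u (Set.Icc 0 v)).toReal ∈ Set.Icc (0 : ℝ) 1 := by
    intro κ hκ u v
    refine ⟨ENNReal.toReal_nonneg, ?_⟩
    calc (κ u (Set.Icc 0 v)).toReal ≤ (1 : ℝ≥0∞).toReal :=
          ENNReal.toReal_mono ENNReal.one_ne_top prob_le_one
      _ = 1 := by simp
  have hdiffmem : ∀ (a b : ℝ), a ∈ Set.Icc (0:ℝ) 1 → b ∈ Set.Icc (0:ℝ) 1 →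
      a - b ∈ Set.Icc (-1:ℝ) 1 := by
    rintro a b ⟨ha0, ha1⟩ ⟨hb0, hb1⟩
    constructor <;> [linarith; linarith]
  -- joint measurability of (u, v) ↦ κ u (Icc 0 v)
  have hFmeas : ∀ (κ : Kernel ℝ ℝ), IsMarkovKernel κ →
      Measurable (fun p : ℝ × ℝ => (κ p.1 (Set.Icc 0 p.2)).toReal) := by
    intro κ hκ
    have ht : MeasurableSet {q : (ℝ × ℝ) × ℝ | q.2 ∈ Set.Icc 0 q.1.2} := by
      have : {q : (ℝ × ℝ) × ℝ | q.2 ∈ Set.Icc 0 q.1.2}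
          = {q : (ℝ × ℝ) × ℝ | (0:ℝ) ≤ q.2} ∩ {q : (ℝ × ℝ) × ℝ | q.2 ≤ q.1.2} := by
        ext q; simp [Set.mem_Icc, and_comm]
      rw [this]
      exact (measurableSet_le measurable_const measurable_snd).inter
        (measurableSet_le measurable_snd measurable_fst.snd)
    set κ' : Kernel (ℝ × ℝ) ℝ := κ.comap Prod.fst measurable_fst with hκ'def
    have h := Kernel.measurable_kernel_prodMk_left (κ := κ') ht
    have heq : ∀ p : ℝ × ℝ,
        κ' p (Prod.mk p ⁻¹' {q : (ℝ × ℝ) × ℝ | q.2 ∈ Set.Icc 0 q.1.2})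
          = κ p.1 (Set.Icc 0 p.2) := by
      intro p
      rw [hκ'def, Kernel.comap_apply]
      congr 1
    simp only [heq] at h
    exact h.ennreal_toReal
  -- [0,1]-supported probability measures: Iic v and Icc 0 v coincide
  have hIic : ∀ (μ : Measure ℝ) [IsProbabilityMeasure μ], μ (Set.Icc 0 1) = 1 →
      ∀ v : ℝ, 0 ≤ v → μ (Set.Iic v) = μ (Set.Icc 0 v) := by
    intro μ _ hμ v hv
    have h0 : μ (Set.Iio 0) = 0 := by
      have hcompl : μ (Set.Icc (0:ℝ) 1)ᶜ = 0 := by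
        rw [measure_compl measurableSet_Icc (by rw [hμ]; exact ENNReal.one_ne_top), hμ,
          measure_univ, tsub_self]
      refine measure_mono_null ?_ hcompl
      intro x hx
      simp only [Set.mem_Iio] at hx
      simp only [Set.mem_compl_iff, Set.mem_Icc, not_and_or, not_le]
      exact Or.inl hx
    have hset : Set.Iic v = Set.Iio 0 ∪ Set.Icc 0 v := by
      ext x
      simp only [Set.mem_Iic, Set.mem_union, Set.mem_Iio, Set.mem_Icc]
      constructor
      · intro h
        rcases lt_or_ge x 0 with h' | h'
        · exact Or.inl h'
        · exact Or.inr ⟨h', h⟩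
      · rintro (h | ⟨-, h⟩)
        · exact le_trans h.le hv
        · exact h
    rw [hset]
    refine le_antisymm ?_ (measure_mono Set.subset_union_right)
    calc μ (Set.Iio 0 ∪ Set.Icc 0 v) ≤ μ (Set.Iio 0) + μ (Set.Icc 0 v) := measure_union_le _ _
      _ = μ (Set.Icc 0 v) := by rw [h0, zero_add]
  -- countably many atoms
  have hatoms : ∀ u : ℝ, Set.Countable {v : ℝ | K u {v} ≠ 0} := by
    intro u
    have h := MeasureTheory.Measure.countable_meas_pos_of_disjoint_iUnion₀
      (μ := K u) (As := fun v : ℝ => ({v} : Set ℝ))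
      (fun v => (measurableSet_singleton v).nullMeasurableSet)
      (fun i j hij => (Set.disjoint_singleton.mpr hij).aedisjoint)
    have hss : {v : ℝ | K u {v} ≠ 0} = {v : ℝ | 0 < K u {v}} := by
      ext v; simp [pos_iff_ne_zero]
    rw [hss]; exact h
  -- pointwise convergence of CDFs at continuity points
  have hcdf : ∀ u ∈ Γ, ∀ v ∈ Set.Icc (0:ℝ) 1, K u {v} = 0 →
      Tendsto (fun n => ((Kn n) u (Set.Icc 0 v)).toReal) atTop
        (𝓝 ((K u (Set.Icc 0 v)).toReal)) := by
    intro u hu v hv hv0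
    set P : ℕ → ProbabilityMeasure ℝ := fun n => ⟨Kn n u, inferInstance⟩ with hPdef
    set Q : ProbabilityMeasure ℝ := ⟨K u, inferInstance⟩ with hQdef
    have hPQ : Tendsto P atTop (𝓝 Q) :=
      ProbabilityMeasure.tendsto_iff_forall_integral_tendsto.mpr (fun f => hwcc u hu f)
    have hfr : (Q : Measure ℝ) (frontier (Set.Iic v)) = 0 := by
      rw [frontier_Iic]; exact hv0
    have h1 := ProbabilityMeasure.tendsto_measure_of_null_frontier_of_tendsto' hPQ hfr
    have h2 : Tendsto (fun n => ((Kn n) u (Set.Iic v)).toReal) atTop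
        (𝓝 ((K u (Set.Iic v)).toReal)) :=
      (ENNReal.tendsto_toReal (measure_ne_top _ _)).comp h1
    have e1 : ∀ n, (Kn n) u (Set.Iic v) = (Kn n) u (Set.Icc 0 v) := fun n =>
      hIic _ (hKn01 n u) v hv.1
    have e2 : K u (Set.Iic v) = K u (Set.Icc 0 v) := hIic _ (hK01 u) v hv.1
    simpa only [e1, e2] using h2
  -- Γ is ν-a.e.
  have hΓae : ∀ᵐ u ∂ν, u ∈ Γ := by
    have : ν Γᶜ = 0 := by
      rw [hνdef, Measure.restrict_apply hΓmeas.compl]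
      have hseq : Γᶜ ∩ Set.Icc (0:ℝ) 1 = Set.Icc (0:ℝ) 1 \ Γ := by
        ext x; simp [Set.mem_diff, and_comm]
      rw [hseq, measure_diff hΓsub hΓmeas.nullMeasurableSet
        (by rw [hΓfull]; exact ENNReal.one_ne_top), Real.volume_Icc, hΓfull]
      norm_num
    exact (MeasureTheory.measure_eq_zero_iff_ae_notMem.mp this).mono (fun x hx => not_not.mp hx)
  -- bound for integrals against ν
  have key_bound : ∀ g : ℝ → ℝ, (∀ x, ‖g x‖ ≤ C) → ‖∫ x, g x ∂ν‖ ≤ C := by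
    intro g hg
    calc ‖∫ x, g x ∂ν‖ ≤ C * (ν Set.univ).toReal :=
          norm_integral_le_of_norm_le_const (Eventually.of_forall hg)
      _ = C := by rw [measure_univ]; simp
  -- level 3: innermost convergence
  have lev3 : ∀ u₁ ∈ Γ, ∀ u₂ ∈ Γ,
      Tendsto (fun n => ∫ v in Set.Icc (0:ℝ) 1,
          ψ (((Kn n) u₁ (Set.Icc 0 v)).toReal - ((Kn n) u₂ (Set.Icc 0 v)).toReal)) atTop
        (𝓝 (∫ v in Set.Icc (0:ℝ) 1,
          ψ ((K u₁ (Set.Icc 0 v)).toReal - (K u₂ (Set.Icc 0 v)).toReal))) := by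
    intro u₁ hu₁ u₂ hu₂
    refine tendsto_integral_of_dominated_convergence (fun _ => C) ?_ (integrable_const C) ?_ ?_
    · intro n
      exact (hψ_cont.measurable.comp
        ((((hFmeas (Kn n) inferInstance).comp (measurable_prodMk_left (x := u₁)))).sub
          (((hFmeas (Kn n) inferInstance).comp (measurable_prodMk_left (x := u₂)))))).aestronglyMeasurable
    · intro n
      exact Eventually.of_forall fun v => hψ_bdd _
    · have hB : ν ({v : ℝ | K u₁ {v} ≠ 0} ∪ {v : ℝ | K u₂ {v} ≠ 0}) = 0 := by
        have hcnt := (hatoms u₁).union (hatoms u₂)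
        have h0 : volume ({v : ℝ | K u₁ {v} ≠ 0} ∪ {v : ℝ | K u₂ {v} ≠ 0}) = 0 :=
          hcnt.measure_zero _
        rw [hνdef, Measure.restrict_apply hcnt.measurableSet]
        exact measure_mono_null Set.inter_subset_left h0
      filter_upwards [ae_restrict_mem measurableSet_Icc,
        MeasureTheory.measure_eq_zero_iff_ae_notMem.mp hB] with v hvI hvB
      have hvB' : K u₁ {v} = 0 ∧ K u₂ {v} = 0 := by
        simp only [Set.mem_union, Set.mem_setOf_eq, not_or, not_not] at hvB
        exact hvB
      have t1 := hcdf u₁ hu₁ v hvI hvB'.1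
      have t2 := hcdf u₂ hu₂ v hvI hvB'.2
      exact (hψ_cont.tendsto _).comp (t1.sub t2)
  -- strong measurability of inner integrals
  have smeas2 : ∀ (κ : Kernel ℝ ℝ), IsMarkovKernel κ → ∀ u₁ : ℝ,
      AEStronglyMeasurable (fun u₂ => ∫ v in Set.Icc (0:ℝ) 1,
        ψ ((κ u₁ (Set.Icc 0 v)).toReal - (κ u₂ (Set.Icc 0 v)).toReal)) ν := by
    intro κ hκ u₁
    have hjoint : StronglyMeasurable (fun p : ℝ × ℝ =>
        ψ ((κ u₁ (Set.Icc 0 p.2)).toReal - (κ p.1 (Set.Icc 0 p.2)).toReal)) :=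
      (hψ_cont.measurable.comp
        (((hFmeas κ hκ).comp (measurable_const.prodMk measurable_snd)).sub
          (hFmeas κ hκ))).stronglyMeasurable
    exact (hjoint.integral_prod_right' (ν := ν)).aestronglyMeasurable
  have smeas1 : ∀ (κ : Kernel ℝ ℝ), IsMarkovKernel κ →
      AEStronglyMeasurable (fun u₁ => ∫ u₂ in Set.Icc (0:ℝ) 1, ∫ v in Set.Icc (0:ℝ) 1,
        ψ ((κ u₁ (Set.Icc 0 v)).toReal - (κ u₂ (Set.Icc 0 v)).toReal)) ν := by
    intro κ hκ
    have hjoint3 : StronglyMeasurable (fun q : (ℝ × ℝ) × ℝ =>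
        ψ ((κ q.1.1 (Set.Icc 0 q.2)).toReal - (κ q.1.2 (Set.Icc 0 q.2)).toReal)) :=
      (hψ_cont.measurable.comp
        (((hFmeas κ hκ).comp (measurable_fst.fst.prodMk measurable_snd)).sub
          ((hFmeas κ hκ).comp (measurable_fst.snd.prodMk measurable_snd)))).stronglyMeasurable
    have hjoint2 : StronglyMeasurable (fun p : ℝ × ℝ => ∫ v in Set.Icc (0:ℝ) 1,
        ψ ((κ p.1 (Set.Icc 0 v)).toReal - (κ p.2 (Set.Icc 0 v)).toReal)) :=
      hjoint3.integral_prod_right' (ν := ν)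
    exact (hjoint2.integral_prod_right' (ν := ν)).aestronglyMeasurable
  -- level 2
  have lev2 : ∀ u₁ ∈ Γ,
      Tendsto (fun n => ∫ u₂ in Set.Icc (0:ℝ) 1, ∫ v in Set.Icc (0:ℝ) 1,
          ψ (((Kn n) u₁ (Set.Icc 0 v)).toReal - ((Kn n) u₂ (Set.Icc 0 v)).toReal)) atTop
        (𝓝 (∫ u₂ in Set.Icc (0:ℝ) 1, ∫ v in Set.Icc (0:ℝ) 1,
          ψ ((K u₁ (Set.Icc 0 v)).toReal - (K u₂ (Set.Icc 0 v)).toReal))) := by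
    intro u₁ hu₁
    refine tendsto_integral_of_dominated_convergence (fun _ => C) ?_ (integrable_const C) ?_ ?_
    · intro n; exact smeas2 (Kn n) inferInstance u₁
    · intro n
      exact Eventually.of_forall fun u₂ => key_bound _ (fun v => hψ_bdd _)
    · filter_upwards [hΓae] with u₂ hu₂ using lev3 u₁ hu₁ u₂ hu₂
  -- level 1: the main convergence, for ψ
  have main : Tendsto
      (fun n => ∫ u₁ in Set.Icc (0:ℝ) 1, ∫ u₂ in Set.Icc (0:ℝ) 1, ∫ v in Set.Icc (0:ℝ) 1,
          ψ (((Kn n) u₁ (Set.Icc 0 v)).toReal - ((Kn n) u₂ (Set.Icc 0 v)).toReal)) atTop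
      (𝓝 (∫ u₁ in Set.Icc (0:ℝ) 1, ∫ u₂ in Set.Icc (0:ℝ) 1, ∫ v in Set.Icc (0:ℝ) 1,
          ψ ((K u₁ (Set.Icc 0 v)).toReal - (K u₂ (Set.Icc 0 v)).toReal))) := by
    refine tendsto_integral_of_dominated_convergence (fun _ => C) ?_ (integrable_const C) ?_ ?_
    · intro n; exact smeas1 (Kn n) inferInstance
    · intro n
      exact Eventually.of_forall fun u₁ =>
        key_bound _ (fun u₂ => key_bound _ (fun v => hψ_bdd _))
    · filter_upwards [hΓae] with u₁ hu₁ using lev2 u₁ hu₁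
  -- replace ψ by φ everywhere
  have hψφ : ∀ (κ : Kernel ℝ ℝ), IsMarkovKernel κ → ∀ u₁ u₂ v : ℝ,
      ψ ((κ u₁ (Set.Icc 0 v)).toReal - (κ u₂ (Set.Icc 0 v)).toReal)
        = φ ((κ u₁ (Set.Icc 0 v)).toReal - (κ u₂ (Set.Icc 0 v)).toReal) := by
    intro κ hκ u₁ u₂ v
    exact hψ_eq _ (hdiffmem _ _ (hmemF κ hκ u₁ v) (hmemF κ hκ u₂ v))
  have heq1 : ∀ n, (∫ u₁ in Set.Icc (0:ℝ) 1, ∫ u₂ in Set.Icc (0:ℝ) 1, ∫ v in Set.Icc (0:ℝ) 1,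
        ψ (((Kn n) u₁ (Set.Icc 0 v)).toReal - ((Kn n) u₂ (Set.Icc 0 v)).toReal))
      = ∫ u₁ in Set.Icc (0:ℝ) 1, ∫ u₂ in Set.Icc (0:ℝ) 1, ∫ v in Set.Icc (0:ℝ) 1,
        φ (((Kn n) u₁ (Set.Icc 0 v)).toReal - ((Kn n) u₂ (Set.Icc 0 v)).toReal) := by
    intro n
    simp only [hψφ (Kn n) inferInstance]
  have heq2 : (∫ u₁ in Set.Icc (0:ℝ) 1, ∫ u₂ in Set.Icc (0:ℝ) 1, ∫ v in Set.Icc (0:ℝ) 1,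
        ψ ((K u₁ (Set.Icc 0 v)).toReal - (K u₂ (Set.Icc 0 v)).toReal))
      = ∫ u₁ in Set.Icc (0:ℝ) 1, ∫ u₂ in Set.Icc (0:ℝ) 1, ∫ v in Set.Icc (0:ℝ) 1,
        φ ((K u₁ (Set.Icc 0 v)).toReal - (K u₂ (Set.Icc 0 v)).toReal) := by
    simp only [hψφ K inferInstance]
  simp only [heq1, heq2] at main
  exact main
end

section
/- Let (Ω, 𝒜, P) be a probability space and X, Y : Ω → ℝ random variables with Y non-degenerate. For p ∈ [1,∞) define Λ_p(Y|X) := I_p / α_p with I_p := ∫_{ℝ×ℝ} ∫_ℝ |F_{Y|X=x₁}(y) − F_{Y|X=x₂}(y)|^p dP^Y(y) d(P^X ⊗ P^X)(x₁,x₂) and α_p := ∫_{ℝ×ℝ} ∫_ℝ |𝟙_{\{y₁ ≤ y\}} − 𝟙_{\{y₂ ≤ y\}}|^p dP^Y(y) d(P^Y ⊗ P^Y)(y₁,y₂). Then α_p = α_1 > 0 for every p ≥ 1 (the normalizing constant does not depend on p), and for all 1 ≤ p ≤ q one has Λ_q(Y|X) ≤ Λ_p(Y|X); i.e., p ↦ Λ_p(Y|X)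 is decreasing on [1,∞). -/
open MeasureTheory ProbabilityTheory Filter Set
open scoped ENNReal Topology

/-- The numerator `I_p` of the L^p dependence measure `Λ_p`. -/
noncomputable def lambdaNum (νX νY : MeasureTheory.Measure ℝ)
    (κ : ProbabilityTheory.Kernel ℝ ℝ) (p : ℝ) : ℝ :=
  ∫ x : ℝ × ℝ,
    (∫ y, |(κ x.1 (Set.Iic y)).toReal - (κ x.2 (Set.Iic y)).toReal| ^ p ∂νY)
    ∂(νX.prod νX)

/-- The normalizing constant `α_p` of the L^p dependence measure `Λ_p`. -/
noncomputable def lambdaDen (νY : MeasureTheory.Measure ℝ) (p : ℝ) : ℝ :=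
  ∫ q : ℝ × ℝ,
    (∫ y, |(if q.1 ≤ y then (1 : ℝ) else 0) - (if q.2 ≤ y then (1 : ℝ) else 0)| ^ p ∂νY)
    ∂(νY.prod νY)

/-- A probability measure on ℝ which is not a Dirac measure has a CDF value
strictly between 0 and 1. -/
lemma exists_cdf_middle (ν : Measure ℝ) [IsProbabilityMeasure ν]
    (h : ∀ c : ℝ, ν ≠ Measure.dirac c) :
    ∃ t : ℝ, 0 < ν (Iic t) ∧ ν (Iic t) < 1 := by
  by_contra hcon
  push_neg at hcon
  have hdich : ∀ t : ℝ, ν (Iic t) = 0 ∨ ν (Iic t) = 1 := by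
    intro t
    rcases eq_or_lt_of_le (zero_le : (0:ℝ≥0∞) ≤ ν (Iic t)) with h0 | h0
    · exact Or.inl h0.symm
    · exact Or.inr (le_antisymm prob_le_one (hcon t h0))
  -- some CDF value is 0
  have hzero : ∃ s : ℝ, ν (Iic s) = 0 := by
    by_contra hz
    push_neg at hz
    have h1 : ∀ s : ℝ, ν (Ioi s) = 0 := by
      intro s
      have hs1 : ν (Iic s) = 1 := (hdich s).resolve_left (hz s)
      have := measure_compl (measurableSet_Iic (a := s)) (measure_ne_top ν _)
      rw [compl_Iic, hs1, measure_univ] at this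
      simpa using this
    have huniv : (univ : Set ℝ) ⊆ ⋃ n : ℕ, Ioi (-(n : ℝ)) := by
      intro y _
      obtain ⟨n, hn⟩ := exists_nat_gt (-y)
      exact mem_iUnion.mpr ⟨n, by simp [mem_Ioi]; linarith⟩
    have : ν univ = 0 :=
      measure_mono_null huniv (measure_iUnion_null fun n => h1 _)
    simp [measure_univ] at this
  obtain ⟨s₀, hs₀⟩ := hzero
  -- some CDF value is 1
  have hone : ∃ u : ℝ, ν (Iic u) = 1 := by
    have := (tendsto_measure_Iic_atTop ν).eventually
      (eventually_gt_nhds (by simp [measure_univ] : (0 : ℝ≥0∞) < ν univ))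
    obtain ⟨u, hu⟩ := this.exists
    exact ⟨u, (hdich u).resolve_left (ne_of_gt hu)⟩
  set S : Set ℝ := {u : ℝ | ν (Iic u) = 1} with hS
  have hSne : S.Nonempty := hone
  have hSbdd : BddBelow S := by
    refine ⟨s₀, fun u hu => ?_⟩
    by_contra hlt
    push_neg at hlt
    have : ν (Iic u) ≤ ν (Iic s₀) := measure_mono (Iic_subset_Iic.mpr hlt.le)
    rw [hu, hs₀] at this
    simp at this
  set c := sInf S with hc
  have hIoi : ν (Ioi c) = 0 := by
    have hcov : Ioi c ⊆ ⋃ n : ℕ, Ioi (c + 1 / (n + 1)) := by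
      intro y hy
      have hy' : c < y := hy
      obtain ⟨n, hn⟩ := exists_nat_one_div_lt (sub_pos.mpr hy')
      exact mem_iUnion.mpr ⟨n, by simp only [mem_Ioi]; linarith⟩
    refine measure_mono_null hcov (measure_iUnion_null fun n => ?_)
    obtain ⟨u, huS, hu⟩ := exists_lt_of_csInf_lt hSne
      (lt_add_of_pos_right c (by positivity : (0:ℝ) < 1 / (n + 1)))
    have h1 : ν (Iic (c + 1 / (n + 1))) = 1 :=
      le_antisymm prob_le_one (huS ▸ measure_mono (Iic_subset_Iic.mpr hu.le))
    have := measure_compl (measurableSet_Iic (a := c + 1 / (n + 1))) (measure_ne_top ν _)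
    rw [compl_Iic, h1, measure_univ] at this
    simpa using this
  have hIio : ν (Iio c) = 0 := by
    have hcov : Iio c ⊆ ⋃ n : ℕ, Iic (c - 1 / (n + 1)) := by
      intro y hy
      have hy' : y < c := hy
      obtain ⟨n, hn⟩ := exists_nat_one_div_lt (sub_pos.mpr hy')
      exact mem_iUnion.mpr ⟨n, by simp only [mem_Iic]; linarith⟩
    refine measure_mono_null hcov (measure_iUnion_null fun n => ?_)
    refine (hdich _).resolve_right fun h1 => ?_
    have : c ≤ c - 1 / (n + 1) := csInf_le hSbdd h1
    have hp : (0:ℝ) < 1 / (n + 1) := by positivity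
    linarith
  have hcompl : ν ({c}ᶜ) = 0 := by
    rw [← Iio_union_Ioi]
    exact measure_union_null hIio hIoi
  refine h c (Measure.ext fun s hs => ?_)
  rw [Measure.dirac_apply' _ hs]
  by_cases hcs : c ∈ s
  · have h0 : ν sᶜ = 0 := by
      refine measure_mono_null (fun y hy => ?_) hcompl
      intro he
      rw [mem_singleton_iff] at he
      exact hy (he ▸ hcs)
    rw [(prob_compl_eq_zero_iff hs).mp h0]
    simp [hcs]
  · have h0 : ν s = 0 := by
      refine measure_mono_null (fun y hy => ?_) hcompl
      intro he
      rw [mem_singleton_iff] at he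
      exact hcs (he ▸ hy)
    rw [h0]
    simp [hcs]


/-- Joint measurability of the kernel CDF. -/
lemma measurable_kernel_cdf_s17 (κ : Kernel ℝ ℝ) [IsMarkovKernel κ] :
    Measurable fun z : ℝ × ℝ => (κ z.1 (Iic z.2)).toReal := by
  have ht : MeasurableSet {p : (ℝ × ℝ) × ℝ | p.2 ≤ p.1.2} :=
    measurableSet_le measurable_snd (measurable_fst.snd)
  have hm := Kernel.measurable_kernel_prodMk_left
    (κ := κ.comap Prod.fst measurable_fst) ht
  simp only [Kernel.comap_apply] at hm
  have h2 : (fun a : ℝ × ℝ => κ a.1 (Prod.mk a ⁻¹' {p : (ℝ × ℝ) × ℝ | p.2 ≤ p.1.2}))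
      = fun a : ℝ × ℝ => κ a.1 (Iic a.2) := by
    rfl
  rw [h2] at hm
  exact hm.ennreal_toReal

/-- Integrability of a [0,1]-valued partial Bochner integral. -/
lemma integrable_intInner {α : Type*} [MeasurableSpace α] (μ : Measure α)
    [IsProbabilityMeasure μ] (ν : Measure ℝ) [IsProbabilityMeasure ν]
    {g : α × ℝ → ℝ} (hg : Measurable g) (hg0 : ∀ z, 0 ≤ g z) (hg1 : ∀ z, g z ≤ 1) :
    Integrable (fun x => ∫ y, g (x, y) ∂ν) μ := by
  refine Integrable.mono' (integrable_const 1)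
    (hg.stronglyMeasurable.integral_prod_right').aestronglyMeasurable
    (ae_of_all _ fun x => ?_)
  calc ‖∫ y, g (x, y) ∂ν‖ ≤ 1 * (ν univ).toReal :=
        norm_integral_le_of_norm_le_const (ae_of_all _ fun y => by
          rw [Real.norm_eq_abs, abs_of_nonneg (hg0 _)]; exact hg1 _)
    _ = 1 := by simp

/-- Integrability of a bounded measurable function on a probability space. -/
lemma integrable_of_le_one {α : Type*} [MeasurableSpace α] (μ : Measure α)
    [IsProbabilityMeasure μ] {g : α → ℝ} (hg : Measurable g) (hg0 : ∀ z, 0 ≤ g z)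
    (hg1 : ∀ z, g z ≤ 1) : Integrable g μ := by
  refine Integrable.mono' (integrable_const 1)
    hg.stronglyMeasurable.aestronglyMeasurable (ae_of_all _ fun x => ?_)
  rw [Real.norm_eq_abs, abs_of_nonneg (hg0 _)]
  exact hg1 _


set_option maxHeartbeats 1000000 in
/-- Monotonicity in `p` of the numerator `I_p`. -/
lemma lambdaNum_mono (μX νY : Measure ℝ) [IsProbabilityMeasure μX] [IsProbabilityMeasure νY]
    (κ : Kernel ℝ ℝ) [IsMarkovKernel κ] {p q : ℝ} (hp : 1 ≤ p) (hpq : p ≤ q) :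
    lambdaNum μX νY κ q ≤ lambdaNum μX νY κ p := by
  have hq1 : (1 : ℝ) ≤ q := hp.trans hpq
  have h1 := measurable_kernel_cdf_s17 κ
  have hGmeas : Measurable fun z : (ℝ × ℝ) × ℝ =>
      |(κ z.1.1 (Iic z.2)).toReal - (κ z.1.2 (Iic z.2)).toReal| :=
    ((h1.comp (measurable_fst.fst.prodMk measurable_snd)).sub
      (h1.comp (measurable_fst.snd.prodMk measurable_snd))).abs
  have hbd : ∀ (x : ℝ) (y : ℝ), (κ x (Iic y)).toReal ≤ 1 := by
    intro x y
    have h := prob_le_one (μ := κ x) (s := Iic y)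
    simpa using ENNReal.toReal_mono ENNReal.one_ne_top h
  have hG1 : ∀ z : (ℝ × ℝ) × ℝ,
      |(κ z.1.1 (Iic z.2)).toReal - (κ z.1.2 (Iic z.2)).toReal| ≤ 1 := by
    intro z
    rw [abs_sub_le_iff]
    constructor
    · have h2 := hbd z.1.1 z.2
      have h3 := ENNReal.toReal_nonneg (a := κ z.1.2 (Iic z.2))
      linarith
    · have h2 := hbd z.1.2 z.2
      have h3 := ENNReal.toReal_nonneg (a := κ z.1.1 (Iic z.2))
      linarith
  unfold lambdaNum
  refine integral_mono_of_nonneg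
    (ae_of_all _ fun x => integral_nonneg fun y => Real.rpow_nonneg (abs_nonneg _) _)
    (integrable_intInner (μX.prod μX) νY
      (g := fun z : (ℝ × ℝ) × ℝ =>
        |(κ z.1.1 (Iic z.2)).toReal - (κ z.1.2 (Iic z.2)).toReal| ^ p)
      (hGmeas.pow_const p)
      (fun z => Real.rpow_nonneg (abs_nonneg _) _)
      (fun z => Real.rpow_le_one (abs_nonneg _) (hG1 z) (by linarith)))
    (ae_of_all _ fun x => ?_)
  refine integral_mono_of_nonneg
    (ae_of_all _ fun y => Real.rpow_nonneg (abs_nonneg _) _)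
    (integrable_of_le_one νY
      (g := fun y : ℝ => |(κ x.1 (Iic y)).toReal - (κ x.2 (Iic y)).toReal| ^ p)
      ((hGmeas.comp measurable_prodMk_left).pow_const p)
      (fun y => Real.rpow_nonneg (abs_nonneg _) _)
      (fun y => Real.rpow_le_one (abs_nonneg _) (hG1 ((x.1, x.2), y)) (by linarith)))
    (ae_of_all _ fun y => ?_)
  show |(κ x.1 (Iic y)).toReal - (κ x.2 (Iic y)).toReal| ^ q ≤
      |(κ x.1 (Iic y)).toReal - (κ x.2 (Iic y)).toReal| ^ p
  rcases eq_or_lt_of_le (abs_nonneg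
      ((κ x.1 (Iic y)).toReal - (κ x.2 (Iic y)).toReal)) with h0 | h0
  · rw [← h0, Real.zero_rpow (by linarith), Real.zero_rpow (by linarith)]
  · exact Real.rpow_le_rpow_of_exponent_ge h0 (hG1 ((x.1, x.2), y)) hpq

set_option maxHeartbeats 1000000 in
/-- The normalizing constant α_p does not depend on p and is
positive, and p ↦ Λ_p(Y|X) = I_p/α_p is decreasing on [1,∞). -/
theorem stmt17 {Ω : Type*} [MeasurableSpace Ω] (P : Measure Ω) [IsProbabilityMeasure P]
    (X Y : Ω → ℝ) (hX : Measurable X) (hY : Measurable Y)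
    (hYnondeg : ∀ c : ℝ, P.map Y ≠ Measure.dirac c)
    (κ : Kernel ℝ ℝ) [IsMarkovKernel κ]
    (hκ : ∀ A B : Set ℝ, MeasurableSet A → MeasurableSet B →
      P.map (fun ω => (X ω, Y ω)) (A ×ˢ B) = ∫⁻ x in A, κ x B ∂(P.map X)) :
    (∀ p : ℝ, 1 ≤ p → lambdaDen (P.map Y) p = lambdaDen (P.map Y) 1) ∧
    0 < lambdaDen (P.map Y) 1 ∧
    ∀ p q : ℝ, 1 ≤ p → p ≤ q →
      lambdaNum (P.map X) (P.map Y) κ q / lambdaDen (P.map Y) q ≤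
        lambdaNum (P.map X) (P.map Y) κ p / lambdaDen (P.map Y) p := by
  haveI hνY : IsProbabilityMeasure (P.map Y) := Measure.isProbabilityMeasure_map hY.aemeasurable
  haveI hνX : IsProbabilityMeasure (P.map X) := Measure.isProbabilityMeasure_map hX.aemeasurable
  set ν := P.map Y with hν
  set μ := P.map X with hμ
  -- Part 1: the denominator does not depend on p
  have hden : ∀ p : ℝ, 1 ≤ p → lambdaDen ν p = lambdaDen ν 1 := by
    intro p hp
    have hp0 : p ≠ 0 := by linarith
    unfold lambdaDen
    refine integral_congr_ae (Eventually.of_forall fun q => ?_)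
    refine integral_congr_ae (Eventually.of_forall fun y => ?_)
    by_cases h1 : q.1 ≤ y <;> by_cases h2 : q.2 ≤ y <;>
      simp [h1, h2, Real.zero_rpow hp0, Real.rpow_one, Real.one_rpow]
  -- the integrand of the denominator
  set g : (ℝ × ℝ) × ℝ → ℝ := fun z =>
    |(if z.1.1 ≤ z.2 then (1 : ℝ) else 0) - (if z.1.2 ≤ z.2 then (1 : ℝ) else 0)| ^ (1:ℝ)
    with hg
  have hgmeas : Measurable g := by
    rw [hg]
    apply Measurable.pow_const
    apply Measurable.abs
    exact (Measurable.ite (measurableSet_le measurable_fst.fst measurable_snd)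
        measurable_const measurable_const).sub
      (Measurable.ite (measurableSet_le measurable_fst.snd measurable_snd)
        measurable_const measurable_const)
  have hg0 : ∀ z, 0 ≤ g z := by
    intro z
    rw [hg]
    exact Real.rpow_nonneg (abs_nonneg _) _
  have hg1 : ∀ z, g z ≤ 1 := by
    intro z
    rw [hg]
    exact Real.rpow_le_one (abs_nonneg _) (by split_ifs <;> norm_num) zero_le_one
  -- Part 2: positivity of the denominator
  have hpos : 0 < lambdaDen ν 1 := by
    obtain ⟨t, ht0, ht1⟩ := exists_cdf_middle ν hYnondeg
    set D : Set ℝ := {y : ℝ | y ≤ t ∧ ν (Icc y t) = 0} with hD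
    have hDnull : ν D = 0 := by
      by_cases hDne : D.Nonempty
      · have hbdd : BddBelow D := by
          have hex : ∃ n : ℕ, ν (Icc (t - n) t) ≠ 0 := by
            by_contra hall
            push_neg at hall
            have hcov : Iic t ⊆ ⋃ n : ℕ, Icc (t - n) t := by
              intro y hy
              have hy' : y ≤ t := hy
              obtain ⟨n, hn⟩ := exists_nat_gt (t - y)
              exact mem_iUnion.mpr ⟨n, ⟨by linarith, hy'⟩⟩
            have h0 := measure_mono_null hcov (measure_iUnion_null hall)
            exact ht0.ne' h0
          obtain ⟨n, hn⟩ := hex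
          refine ⟨t - n, fun y hyD => ?_⟩
          by_contra hlt
          push_neg at hlt
          exact hn (measure_mono_null (Icc_subset_Icc_left hlt.le) hyD.2)
        set d := sInf D with hd
        choose yseq hyD hylt using fun n : ℕ =>
          exists_lt_of_csInf_lt hDne
            (lt_add_of_pos_right d (by positivity : (0:ℝ) < 1 / (n + 1)))
        have hdiff : ν (D \ {d}) = 0 := by
          refine measure_mono_null (fun y hy => ?_)
            (measure_iUnion_null fun n : ℕ => (hyD n).2)
          obtain ⟨hyD', hyne⟩ := hy
          have hdy : d < y := lt_of_le_of_ne (csInf_le hbdd hyD')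
            (Ne.symm (by simpa [mem_singleton_iff] using hyne))
          obtain ⟨n, hn⟩ := exists_nat_one_div_lt (sub_pos.mpr hdy)
          refine mem_iUnion.mpr ⟨n, ⟨?_, hyD'.1⟩⟩
          have h3 := hylt n
          linarith
        have hsing : ν (D ∩ {d}) = 0 := by
          by_cases hdD : d ∈ D
          · refine measure_mono_null (fun y hy => ?_) hdD.2
            have hyd : y = d := hy.2
            rw [hyd]
            exact ⟨le_refl d, hdD.1⟩
          · have hemp : D ∩ {d} = ∅ := by
              ext y
              simp only [mem_inter_iff, mem_singleton_iff, mem_empty_iff_false, iff_false,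
                not_and]
              rintro hyD' rfl
              exact hdD hyD'
            rw [hemp]
            exact measure_empty
        calc ν D = ν (D ∩ {d} ∪ D \ {d}) := by rw [inter_union_diff]
          _ = 0 := measure_union_null hsing hdiff
      · rw [not_nonempty_iff_eq_empty.mp hDne]
        exact measure_empty
    have hDmeas : MeasurableSet D := by
      have h1 : Measurable fun y : ℝ => ν (Icc y t) :=
        Antitone.measurable (fun a b hab => measure_mono (Icc_subset_Icc_left hab))
      exact (measurableSet_Iic (a := t)).inter (h1 (measurableSet_singleton 0))
    set C := Iic t \ D with hC
    have hCmeas : MeasurableSet C := measurableSet_Iic.diff hDmeas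
    have hCν : ν C = ν (Iic t) := measure_diff_null hDnull
    have hIoipos : 0 < ν (Ioi t) := by
      have hcpl := measure_compl (measurableSet_Iic (a := t)) (measure_ne_top ν _)
      rw [compl_Iic, measure_univ] at hcpl
      rw [hcpl]
      exact tsub_pos_of_lt ht1
    set f : ℝ × ℝ → ℝ := fun q => ∫ y, g (q, y) ∂ν with hf
    have hf0 : (0 : ℝ × ℝ → ℝ) ≤ f := by
      rw [hf]
      exact fun q => integral_nonneg fun y => hg0 _
    have hfint : Integrable f (ν.prod ν) := by
      rw [hf]
      exact integrable_intInner _ ν hgmeas hg0 hg1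
    have hsupp : ∀ q : ℝ × ℝ, q ∈ C ×ˢ Ioi t → 0 < f q := by
      rintro ⟨y1, y2⟩ ⟨hy1, hy2⟩
      have hy1t : y1 ≤ t := hy1.1
      have hy1D : ν (Icc y1 t) ≠ 0 := fun h0 => hy1.2 ⟨hy1t, h0⟩
      have hy2t : t < y2 := hy2
      have hmeasg : Measurable fun y => g ((y1, y2), y) :=
        hgmeas.comp measurable_prodMk_left
      have hgint : Integrable (fun y => g ((y1, y2), y)) ν :=
        integrable_of_le_one ν hmeasg (fun y => hg0 _) (fun y => hg1 _)
      have key : (ν (Icc y1 t)).toReal ≤ f (y1, y2) := by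
        rw [hf]
        show (ν (Icc y1 t)).toReal ≤ ∫ y, g ((y1, y2), y) ∂ν
        have h1 : ∀ y ∈ Icc y1 t, g ((y1, y2), y) = 1 := by
          intro y hy
          rw [hg]
          show |(if y1 ≤ y then (1:ℝ) else 0) - (if y2 ≤ y then (1:ℝ) else 0)| ^ (1:ℝ) = 1
          rw [if_pos hy.1, if_neg (by linarith [hy.2] : ¬ y2 ≤ y)]
          norm_num
        calc (ν (Icc y1 t)).toReal = ∫ y in Icc y1 t, (1 : ℝ) ∂ν := by
              rw [setIntegral_const, smul_eq_mul, mul_one, measureReal_def]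
          _ = ∫ y in Icc y1 t, g ((y1, y2), y) ∂ν :=
              setIntegral_congr_fun measurableSet_Icc fun y hy => (h1 y hy).symm
          _ ≤ ∫ y, g ((y1, y2), y) ∂ν :=
              setIntegral_le_integral hgint (ae_of_all _ fun y => hg0 _)
      have hpos' : 0 < (ν (Icc y1 t)).toReal :=
        ENNReal.toReal_pos hy1D (measure_ne_top ν _)
      exact lt_of_lt_of_le hpos' key
    have hprodpos : 0 < (ν.prod ν) (C ×ˢ Ioi t) := by
      rw [Measure.prod_prod]
      refine ENNReal.mul_pos ?_ hIoipos.ne'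
      rw [hCν]
      exact ht0.ne'
    have hlast : 0 < ∫ q, f q ∂(ν.prod ν) :=
      (integral_pos_iff_support_of_nonneg hf0 hfint).mpr
        (lt_of_lt_of_le hprodpos (measure_mono fun q hq => (hsupp q hq).ne'))
    rw [hf] at hlast
    simp only [hg] at hlast
    unfold lambdaDen
    exact hlast
  refine ⟨hden, hpos, fun p q hp hpq => ?_⟩
  have hq1 : 1 ≤ q := hp.trans hpq
  rw [hden p hp, hden q hq1]
  have hnum : lambdaNum μ ν κ q ≤ lambdaNum μ ν κ p := lambdaNum_mono μ ν κ hp hpq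
  gcongr
end

section
/- Let (Ω, 𝒜, P) be a probability space and X, Y : Ω → ℝ random variables. Then ∫_{ℝ×ℝ} ∫_ℝ (F_{Y|X=x₁}(y) − F_{Y|X=x₂}(y))² dP^Y(y) d(P^X ⊗ P^X)(x₁,x₂) = 2 ∫_ℝ Var(E[𝟙_{\{Y ≤ y\}} | σ(X)]) dP^Y(y), and ∫_{ℝ×ℝ} ∫_ℝ (𝟙_{\{y₁ ≤ y\}} − 𝟙_{\{y₂ ≤ y\}})² dP^Y(y) d(P^Y ⊗ P^Y)(y₁,y₂) = 2 ∫_ℝ Var(𝟙_{\{Y ≤ y\}}) dP^Y(y). Consequently the dependence measure Λ_φ with φ(x) = x² equals Chatterjee's coefficient ∫_ℝ Var(E[𝟙_{\{Y ≤ y\}}|σ(X)]) dP^Y(y) / ∫_ℝ Var(𝟙_{\{Y ≤ y\}}) dP^Y(y). -/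
open MeasureTheory ProbabilityTheory Filter Set
open scoped ENNReal Topology

section Stmt18Aux

lemma my_integrable_of_bdd {α : Type*} [MeasurableSpace α] {μ : Measure α} [IsFiniteMeasure μ]
    {f : α → ℝ} (hf : Measurable f) {C : ℝ} (h : ∀ x, |f x| ≤ C) : Integrable f μ :=
  ⟨hf.aestronglyMeasurable,
    HasFiniteIntegral.of_bounded (ae_of_all _ (by simpa [Real.norm_eq_abs] using h))⟩

lemma my_variance_congr {Ω : Type*} [MeasurableSpace Ω] {μ : Measure Ω} {f g : Ω → ℝ}
    (h : f =ᵐ[μ] g) : variance f μ = variance g μ := by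
  have hint : ∫ ω, f ω ∂μ = ∫ ω, g ω ∂μ := integral_congr_ae h
  unfold ProbabilityTheory.variance ProbabilityTheory.evariance
  congr 1
  apply lintegral_congr_ae
  filter_upwards [h] with ω hω
  rw [show μ[f] = ∫ ω, f ω ∂μ from rfl, hω, hint]

lemma pair_sq_integral {μ : Measure ℝ} [IsProbabilityMeasure μ] {g : ℝ → ℝ}
    (hg : Measurable g) (hb : ∀ x, |g x| ≤ 1) :
    ∫ p : ℝ × ℝ, (g p.1 - g p.2) ^ 2 ∂(μ.prod μ)
      = 2 * ((∫ x, g x ^ 2 ∂μ) - (∫ x, g x ∂μ) ^ 2) := by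
  have h1 : Integrable (fun p : ℝ × ℝ => g p.1 ^ 2) (μ.prod μ) :=
    my_integrable_of_bdd ((hg.comp measurable_fst).pow_const 2)
      (C := 1) (fun p => by have := hb p.1; rw [abs_pow]; nlinarith [abs_nonneg (g p.1)])
  have h2 : Integrable (fun p : ℝ × ℝ => g p.2 ^ 2) (μ.prod μ) :=
    my_integrable_of_bdd ((hg.comp measurable_snd).pow_const 2)
      (C := 1) (fun p => by have := hb p.2; rw [abs_pow]; nlinarith [abs_nonneg (g p.2)])
  have h3 : Integrable (fun p : ℝ × ℝ => g p.1 * g p.2) (μ.prod μ) :=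
    my_integrable_of_bdd ((hg.comp measurable_fst).mul (hg.comp measurable_snd))
      (C := 1) (fun p => by
        rw [abs_mul]; nlinarith [hb p.1, hb p.2, abs_nonneg (g p.1), abs_nonneg (g p.2)])
  have hexp : ∀ p : ℝ × ℝ, (g p.1 - g p.2) ^ 2
      = g p.1 ^ 2 + g p.2 ^ 2 - 2 * (g p.1 * g p.2) := fun p => by ring
  simp_rw [hexp]
  have h12 : Integrable (fun p : ℝ × ℝ => g p.1 ^ 2 + g p.2 ^ 2) (μ.prod μ) := h1.add h2
  rw [integral_sub h12 (h3.const_mul 2), integral_add h1 h2, integral_const_mul]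
  have e1 : ∫ p : ℝ × ℝ, g p.1 ^ 2 ∂(μ.prod μ) = ∫ x, g x ^ 2 ∂μ := by
    rw [integral_prod _ h1]; simp
  have e2 : ∫ p : ℝ × ℝ, g p.2 ^ 2 ∂(μ.prod μ) = ∫ x, g x ^ 2 ∂μ := by
    rw [integral_prod _ h2]; simp
  have e3 : ∫ p : ℝ × ℝ, g p.1 * g p.2 ∂(μ.prod μ) = (∫ x, g x ∂μ) ^ 2 := by
    rw [integral_prod _ h3]
    simp_rw [integral_const_mul]
    rw [integral_mul_const]; ring
  rw [e1, e2, e3]; ring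

lemma hkmeas (κ : Kernel ℝ ℝ) [IsMarkovKernel κ] :
    Measurable fun q : ℝ × ℝ => κ q.1 (Set.Iic q.2) := by
  have ht : MeasurableSet {q : (ℝ × ℝ) × ℝ | q.2 ≤ q.1.2} :=
    measurableSet_le measurable_snd measurable_fst.snd
  have h := Kernel.measurable_kernel_prodMk_left (κ := κ.comap Prod.fst measurable_fst) ht
  simp [Kernel.comap_apply] at h
  exact h

lemma toReal_κ_le_one (κ : Kernel ℝ ℝ) [IsMarkovKernel κ] (x y : ℝ) :
    (κ x (Set.Iic y)).toReal ≤ 1 :=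
  ENNReal.toReal_le_of_le_ofReal one_pos.le (by simpa using prob_le_one)

lemma key1 {Ω : Type*} [MeasurableSpace Ω] (P : Measure Ω) [IsProbabilityMeasure P]
    (X Y : Ω → ℝ) (hX : Measurable X) (hY : Measurable Y)
    (κ : Kernel ℝ ℝ) [IsMarkovKernel κ]
    (hκ : ∀ A B : Set ℝ, MeasurableSet A → MeasurableSet B →
      P.map (fun ω => (X ω, Y ω)) (A ×ˢ B) = ∫⁻ x in A, κ x B ∂(P.map X)) (y : ℝ) :
    (fun ω => (κ (X ω) (Set.Iic y)).toReal) =ᵐ[P]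
      P[fun ω => if Y ω ≤ y then (1 : ℝ) else 0
          | MeasurableSpace.comap X Real.measurableSpace] := by
  have hm : MeasurableSpace.comap X Real.measurableSpace ≤ ‹MeasurableSpace Ω› :=
    hX.comap_le
  have hfmeas : Measurable fun x : ℝ => (κ x (Set.Iic y)).toReal :=
    (κ.measurable_coe measurableSet_Iic).ennreal_toReal
  have hindmeas : Measurable fun ω => if Y ω ≤ y then (1 : ℝ) else 0 :=
    Measurable.ite (hY measurableSet_Iic) measurable_const measurable_const
  have hindint : Integrable (fun ω => if Y ω ≤ y then (1 : ℝ) else 0) P :=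
    my_integrable_of_bdd hindmeas (C := 1) (fun ω => by split <;> simp)
  have hgint : Integrable (fun ω => (κ (X ω) (Set.Iic y)).toReal) P :=
    my_integrable_of_bdd (hfmeas.comp hX) (C := 1) (fun ω => by
      rw [abs_of_nonneg ENNReal.toReal_nonneg]
      exact toReal_κ_le_one κ _ y)
  refine ae_eq_condExp_of_forall_setIntegral_eq hm hindint
    (fun s _ _ => hgint.integrableOn) (fun s hs _ => ?_) ?_
  · obtain ⟨A, hA, rfl⟩ := hs
    have lhs1 : ∫ ω in X ⁻¹' A, (κ (X ω) (Set.Iic y)).toReal ∂P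
        = ∫ x in A, (κ x (Set.Iic y)).toReal ∂(P.map X) := by
      rw [setIntegral_map hA hfmeas.aestronglyMeasurable hX.aemeasurable]
    have lhs2 : ∫ x in A, (κ x (Set.Iic y)).toReal ∂(P.map X)
        = (∫⁻ x in A, κ x (Set.Iic y) ∂(P.map X)).toReal := by
      rw [integral_toReal ((κ.measurable_coe measurableSet_Iic).aemeasurable)
        (ae_of_all _ (fun x => measure_lt_top (κ x) _))]
    have rhs1 : ∫ ω in X ⁻¹' A, (if Y ω ≤ y then (1 : ℝ) else 0) ∂P
        = (P (X ⁻¹' A ∩ Y ⁻¹' Set.Iic y)).toReal := by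
      have : ∀ ω, (if Y ω ≤ y then (1 : ℝ) else 0)
          = Set.indicator (Y ⁻¹' Set.Iic y) (fun _ => (1 : ℝ)) ω := by
        intro ω
        by_cases h : Y ω ≤ y <;>
          simp [Set.indicator_apply, Set.mem_preimage, Set.mem_Iic, h]
      simp_rw [this]
      rw [setIntegral_indicator (hY measurableSet_Iic), setIntegral_const]
      simp
      rfl
    have rhs2 : P (X ⁻¹' A ∩ Y ⁻¹' Set.Iic y)
        = P.map (fun ω => (X ω, Y ω)) (A ×ˢ Set.Iic y) := by
      rw [Measure.map_apply (hX.prodMk hY) (hA.prod measurableSet_Iic),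
        Set.mk_preimage_prod]
    rw [lhs1, lhs2, rhs1, rhs2, hκ A (Set.Iic y) hA measurableSet_Iic]
  · have hXm : @Measurable Ω ℝ (MeasurableSpace.comap X Real.measurableSpace) _ X :=
      fun s hs => ⟨s, hs, rfl⟩
    exact (Measurable.stronglyMeasurable (hfmeas.comp hXm)).aestronglyMeasurable

lemma var_cond {Ω : Type*} [MeasurableSpace Ω] (P : Measure Ω) [IsProbabilityMeasure P]
    (X Y : Ω → ℝ) (hX : Measurable X) (hY : Measurable Y)
    (κ : Kernel ℝ ℝ) [IsMarkovKernel κ]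
    (hκ : ∀ A B : Set ℝ, MeasurableSet A → MeasurableSet B →
      P.map (fun ω => (X ω, Y ω)) (A ×ˢ B) = ∫⁻ x in A, κ x B ∂(P.map X)) (y : ℝ) :
    variance (P[fun ω => if Y ω ≤ y then (1 : ℝ) else 0
          | MeasurableSpace.comap X Real.measurableSpace]) P
      = (∫ x, (κ x (Set.Iic y)).toReal ^ 2 ∂(P.map X))
        - (∫ x, (κ x (Set.Iic y)).toReal ∂(P.map X)) ^ 2 := by
  have hfmeas : Measurable fun x : ℝ => (κ x (Set.Iic y)).toReal :=
    (κ.measurable_coe measurableSet_Iic).ennreal_toReal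
  have hb : ∀ ω, ‖(κ (X ω) (Set.Iic y)).toReal‖ ≤ 1 := fun ω => by
    rw [Real.norm_eq_abs, abs_of_nonneg ENNReal.toReal_nonneg]
    exact toReal_κ_le_one κ _ y
  have hmem : MemLp (fun ω => (κ (X ω) (Set.Iic y)).toReal) 2 P :=
    MemLp.of_bound ((hfmeas.comp hX).aestronglyMeasurable) 1 (ae_of_all _ hb)
  rw [← my_variance_congr (key1 P X Y hX hY κ hκ y), variance_eq_sub hmem]
  have e1 : (P[(fun ω => (κ (X ω) (Set.Iic y)).toReal) ^ 2])
      = ∫ x, (κ x (Set.Iic y)).toReal ^ 2 ∂(P.map X) := by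
    rw [integral_map hX.aemeasurable ((hfmeas.pow_const 2).aestronglyMeasurable)]
    rfl
  have e2 : (P[fun ω => (κ (X ω) (Set.Iic y)).toReal])
      = ∫ x, (κ x (Set.Iic y)).toReal ∂(P.map X) := by
    rw [integral_map hX.aemeasurable hfmeas.aestronglyMeasurable]
  rw [e1, e2]

lemma var_ind {Ω : Type*} [MeasurableSpace Ω] (P : Measure Ω) [IsProbabilityMeasure P]
    (Y : Ω → ℝ) (hY : Measurable Y) (y : ℝ) :
    variance (fun ω => if Y ω ≤ y then (1 : ℝ) else 0) P
      = (∫ x, (if x ≤ y then (1 : ℝ) else 0) ^ 2 ∂(P.map Y))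
        - (∫ x, (if x ≤ y then (1 : ℝ) else 0) ∂(P.map Y)) ^ 2 := by
  have hgm : Measurable fun x : ℝ => if x ≤ y then (1 : ℝ) else 0 :=
    Measurable.ite measurableSet_Iic measurable_const measurable_const
  have hmem : MemLp (fun ω => if Y ω ≤ y then (1 : ℝ) else 0) 2 P :=
    MemLp.of_bound ((hgm.comp hY).aestronglyMeasurable) 1
      (ae_of_all _ (fun ω => by split <;> simp))
  rw [variance_eq_sub hmem]
  have e1 : (P[(fun ω => if Y ω ≤ y then (1 : ℝ) else 0) ^ 2])
      = ∫ x, (if x ≤ y then (1 : ℝ) else 0) ^ 2 ∂(P.map Y) := by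
    rw [integral_map hY.aemeasurable ((hgm.pow_const 2).aestronglyMeasurable)]
    rfl
  have e2 : (P[fun ω => if Y ω ≤ y then (1 : ℝ) else 0])
      = ∫ x, (if x ≤ y then (1 : ℝ) else 0) ∂(P.map Y) := by
    rw [integral_map hY.aemeasurable hgm.aestronglyMeasurable]
  rw [e1, e2]

end Stmt18Aux

/-- For φ(x) = x², the numerator and the normalizing constant of the
sensitivity dependence measure are twice the integrated variance of the
conditional resp. unconditional indicator, so Λ_{x²} equals Chatterjee's
coefficient. -/
theorem stmt18 {Ω : Type*} [MeasurableSpace Ω] (P : Measure Ω) [IsProbabilityMeasure P]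
    (X Y : Ω → ℝ) (hX : Measurable X) (hY : Measurable Y)
    (κ : Kernel ℝ ℝ) [IsMarkovKernel κ]
    (hκ : ∀ A B : Set ℝ, MeasurableSet A → MeasurableSet B →
      P.map (fun ω => (X ω, Y ω)) (A ×ˢ B) = ∫⁻ x in A, κ x B ∂(P.map X)) :
    (∫ x : ℝ × ℝ, (∫ y, ((κ x.1 (Set.Iic y)).toReal - (κ x.2 (Set.Iic y)).toReal) ^ 2
            ∂(P.map Y)) ∂((P.map X).prod (P.map X)) =
        2 * ∫ y, variance
            (P[fun ω => if Y ω ≤ y then (1 : ℝ) else 0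
                | MeasurableSpace.comap X Real.measurableSpace]) P ∂(P.map Y)) ∧
    (∫ p : ℝ × ℝ, (∫ y, ((if p.1 ≤ y then (1 : ℝ) else 0) - (if p.2 ≤ y then (1 : ℝ) else 0)) ^ 2
            ∂(P.map Y)) ∂((P.map Y).prod (P.map Y)) =
        2 * ∫ y, variance (fun ω => if Y ω ≤ y then (1 : ℝ) else 0) P ∂(P.map Y)) ∧
    (∫ x : ℝ × ℝ, (∫ y, ((κ x.1 (Set.Iic y)).toReal - (κ x.2 (Set.Iic y)).toReal) ^ 2
            ∂(P.map Y)) ∂((P.map X).prod (P.map X))) /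
        (∫ p : ℝ × ℝ, (∫ y, ((if p.1 ≤ y then (1 : ℝ) else 0) - (if p.2 ≤ y then (1 : ℝ) else 0)) ^ 2
            ∂(P.map Y)) ∂((P.map Y).prod (P.map Y))) =
      (∫ y, variance
          (P[fun ω => if Y ω ≤ y then (1 : ℝ) else 0
              | MeasurableSpace.comap X Real.measurableSpace]) P ∂(P.map Y)) /
        (∫ y, variance (fun ω => if Y ω ≤ y then (1 : ℝ) else 0) P ∂(P.map Y)) := by
  haveI : IsProbabilityMeasure (P.map X) := Measure.isProbabilityMeasure_map hX.aemeasurable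
  haveI : IsProbabilityMeasure (P.map Y) := Measure.isProbabilityMeasure_map hY.aemeasurable
  set μ := P.map X with hμ
  set ν := P.map Y with hν
  -- statement 1
  have h1 : ∫ x : ℝ × ℝ, (∫ y, ((κ x.1 (Set.Iic y)).toReal - (κ x.2 (Set.Iic y)).toReal) ^ 2
            ∂ν) ∂(μ.prod μ) =
        2 * ∫ y, variance
            (P[fun ω => if Y ω ≤ y then (1 : ℝ) else 0
                | MeasurableSpace.comap X Real.measurableSpace]) P ∂ν := by
    have hk := hkmeas κ
    have hFmeas : Measurable fun q : (ℝ × ℝ) × ℝ =>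
        ((κ q.1.1 (Set.Iic q.2)).toReal - (κ q.1.2 (Set.Iic q.2)).toReal) ^ 2 := by
      have m1 : Measurable fun q : (ℝ × ℝ) × ℝ => (κ q.1.1 (Set.Iic q.2)).toReal :=
        (hk.comp (measurable_fst.fst.prodMk measurable_snd)).ennreal_toReal
      have m2 : Measurable fun q : (ℝ × ℝ) × ℝ => (κ q.1.2 (Set.Iic q.2)).toReal :=
        (hk.comp (measurable_fst.snd.prodMk measurable_snd)).ennreal_toReal
      exact (m1.sub m2).pow_const 2
    have hFint : Integrable
        (Function.uncurry fun (p : ℝ × ℝ) (y : ℝ) =>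
          ((κ p.1 (Set.Iic y)).toReal - (κ p.2 (Set.Iic y)).toReal) ^ 2)
        ((μ.prod μ).prod ν) := by
      refine my_integrable_of_bdd hFmeas (C := 1) (fun q => ?_)
      have a1 := toReal_κ_le_one κ q.1.1 q.2
      have a2 := toReal_κ_le_one κ q.1.2 q.2
      have b1 : (0:ℝ) ≤ (κ q.1.1 (Set.Iic q.2)).toReal := ENNReal.toReal_nonneg
      have b2 : (0:ℝ) ≤ (κ q.1.2 (Set.Iic q.2)).toReal := ENNReal.toReal_nonneg
      rw [Function.uncurry, abs_of_nonneg (sq_nonneg _)]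
      nlinarith
    rw [integral_integral_swap hFint]
    have hcongr : ∀ y : ℝ,
        ∫ p : ℝ × ℝ, ((κ p.1 (Set.Iic y)).toReal - (κ p.2 (Set.Iic y)).toReal) ^ 2 ∂(μ.prod μ)
          = 2 * variance (P[fun ω => if Y ω ≤ y then (1 : ℝ) else 0
              | MeasurableSpace.comap X Real.measurableSpace]) P := by
      intro y
      have hfmeas : Measurable fun x : ℝ => (κ x (Set.Iic y)).toReal :=
        (κ.measurable_coe measurableSet_Iic).ennreal_toReal
      rw [pair_sq_integral hfmeas (fun x => by
        rw [abs_of_nonneg ENNReal.toReal_nonneg]; exact toReal_κ_le_one κ x y),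
        var_cond P X Y hX hY κ hκ y]
    rw [integral_congr_ae (ae_of_all _ hcongr), integral_const_mul]
  -- statement 2
  have h2 : ∫ p : ℝ × ℝ, (∫ y, ((if p.1 ≤ y then (1 : ℝ) else 0)
          - (if p.2 ≤ y then (1 : ℝ) else 0)) ^ 2 ∂ν) ∂(ν.prod ν) =
        2 * ∫ y, variance (fun ω => if Y ω ≤ y then (1 : ℝ) else 0) P ∂ν := by
    have hGmeas : Measurable fun q : (ℝ × ℝ) × ℝ =>
        ((if q.1.1 ≤ q.2 then (1:ℝ) else 0) - (if q.1.2 ≤ q.2 then (1:ℝ) else 0)) ^ 2 := by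
      have m1 : Measurable fun q : (ℝ × ℝ) × ℝ => (if q.1.1 ≤ q.2 then (1:ℝ) else 0) :=
        Measurable.ite (measurableSet_le measurable_fst.fst measurable_snd)
          measurable_const measurable_const
      have m2 : Measurable fun q : (ℝ × ℝ) × ℝ => (if q.1.2 ≤ q.2 then (1:ℝ) else 0) :=
        Measurable.ite (measurableSet_le measurable_fst.snd measurable_snd)
          measurable_const measurable_const
      exact (m1.sub m2).pow_const 2
    have hGint : Integrable
        (Function.uncurry fun (p : ℝ × ℝ) (y : ℝ) =>
          ((if p.1 ≤ y then (1:ℝ) else 0) - (if p.2 ≤ y then (1:ℝ) else 0)) ^ 2)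
        ((ν.prod ν).prod ν) := by
      refine my_integrable_of_bdd hGmeas (C := 1) (fun q => ?_)
      rw [Function.uncurry, abs_of_nonneg (sq_nonneg _)]
      split <;> split <;> norm_num
    rw [integral_integral_swap hGint]
    have hcongr : ∀ y : ℝ,
        ∫ p : ℝ × ℝ, ((if p.1 ≤ y then (1:ℝ) else 0) - (if p.2 ≤ y then (1:ℝ) else 0)) ^ 2
            ∂(ν.prod ν)
          = 2 * variance (fun ω => if Y ω ≤ y then (1 : ℝ) else 0) P := by
      intro y
      have hgm : Measurable fun x : ℝ => if x ≤ y then (1 : ℝ) else 0 :=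
        Measurable.ite measurableSet_Iic measurable_const measurable_const
      rw [pair_sq_integral hgm (fun x => by split <;> simp), var_ind P Y hY y]
    rw [integral_congr_ae (ae_of_all _ hcongr), integral_const_mul]
  refine ⟨h1, h2, ?_⟩
  rw [h1, h2, mul_div_mul_left _ _ (two_ne_zero)]
end
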